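/- arXiv:1203.4967 — 8 statements merged into one kernel-verified Lean document; each statement's English description precedes it below -/
import Mathlib

section
/- For |z| < 1, the infinite product ∏_{m=1}^∞ 1/(1−z^m) converges and equals the power series Σ_{k=0}^∞ p(k) z^k, where p(k) is the partition function. -/
open Filter Finset

namespace EulerAux

noncomputable section

open PowerSeries Finset.HasAntidiagonal

open scoped Classical

variable {α : Type*}

/-- A convenience constructor for the power series whose coefficients indicate a subset. -/
def indicatorSeries (α : Type*) [Semiring α] (s : Set ℕ) : PowerSeries α :=
  PowerSeries.mk fun n => if n ∈ s then 1 else 0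

theorem coeff_indicator (s : Set ℕ) [Semiring α] (n : ℕ) :
    coeff (R := α) n (indicatorSeries _ s) = if n ∈ s then 1 else 0 :=
  coeff_mk _ _

theorem constantCoeff_indicator (s : Set ℕ) [Semiring α] :
    constantCoeff (R := α) (indicatorSeries _ s) = if 0 ∈ s then 1 else 0 :=
  rfl

theorem num_series' [Field α] (i : ℕ) :
    (1 - (X : PowerSeries α) ^ (i + 1))⁻¹ = indicatorSeries α {k | i + 1 ∣ k} := by
  rw [PowerSeries.inv_eq_iff_mul_eq_one]
  · ext n
    cases n with
    | zero => simp [mul_sub, zero_pow, constantCoeff_indicator]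
    | succ n =>
      simp only [coeff_one, if_false, mul_sub, mul_one, coeff_indicator,
        LinearMap.map_sub, reduceCtorEq]
      simp_rw [coeff_mul, coeff_X_pow, coeff_indicator, @boole_mul _ _ _ _]
      simp only [Set.mem_setOf_eq]
      erw [sum_ite, sum_ite]
      simp_rw [@filter_filter _ _ _ _ _, sum_const_zero, add_zero, sum_const, nsmul_eq_mul, mul_one,
        sub_eq_iff_eq_add, zero_add]
      symm
      split_ifs with h
      · suffices #{a ∈ antidiagonal (n + 1) | i + 1 ∣ a.fst ∧ a.snd = i + 1} = 1 by
          convert congr_arg ((↑) : ℕ → α) this; norm_cast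
        rw [card_eq_one]
        cases' h with p hp
        refine ⟨((i + 1) * (p - 1), i + 1), ?_⟩
        ext ⟨a₁, a₂⟩
        simp only [mem_filter, Prod.mk_inj, HasAntidiagonal.mem_antidiagonal, mem_singleton]
        constructor
        · rintro ⟨a_left, ⟨a, rfl⟩, rfl⟩
          refine ⟨?_, rfl⟩
          rw [Nat.mul_sub_left_distrib, ← hp, ← a_left, mul_one, Nat.add_sub_cancel]
        · rintro ⟨rfl, rfl⟩
          match p with
          | 0 => rw [mul_zero] at hp; cases hp
          | p + 1 => rw [hp]; simp [mul_add]
      · suffices #{a ∈ antidiagonal (n + 1) | i + 1 ∣ a.fst ∧ a.snd = i + 1} = 0 by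
          convert congr_arg ((↑) : ℕ → α) this; norm_cast
        rw [card_eq_zero]
        apply eq_empty_of_forall_notMem
        simp only [Prod.forall, mem_filter, not_and, HasAntidiagonal.mem_antidiagonal]
        rintro _ h₁ h₂ ⟨a, rfl⟩ rfl
        apply h
        simp [← h₂]
  · simp [zero_pow]

-- The main workhorse (copied from the Archive's proof of Euler's partition theorem).
theorem partialGF_prop (α : Type*) [CommSemiring α] (n : ℕ) (s : Finset ℕ) (hs : ∀ i ∈ s, 0 < i)
    (c : ℕ → Set ℕ) (hc : ∀ i, i ∉ s → 0 ∈ c i) :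
    #{p : n.Partition | (∀ j, p.parts.count j ∈ c j) ∧ ∀ j ∈ p.parts, j ∈ s} =
      coeff (R := α) n (∏ i ∈ s, indicatorSeries α ((· * i) '' c i)) := by
  simp_rw [coeff_prod, coeff_indicator, prod_boole, sum_boole]
  apply congr_arg
  simp only [mem_univ, forall_true_left, not_and, not_forall, exists_prop,
    Set.mem_image, not_exists]
  set φ : (a : Nat.Partition n) →
    a ∈ filter (fun p ↦ (∀ (j : ℕ), Multiset.count j p.parts ∈ c j) ∧ ∀ j ∈ p.parts, j ∈ s) univ →
    ℕ →₀ ℕ := fun p _ => {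
      toFun := fun i => Multiset.count i p.parts • i
      support := Finset.filter (fun i => i ≠ 0) p.parts.toFinset
      mem_support_toFun := fun a => by
        simp only [smul_eq_mul, ne_eq, mul_eq_zero, Multiset.count_eq_zero]
        rw [not_or, not_not]
        simp only [Multiset.mem_toFinset, not_not, mem_filter] }
  refine Finset.card_bij φ ?_ ?_ ?_
  · intro a ha
    simp only [φ, not_forall, not_exists, not_and, exists_prop, mem_filter]
    rw [mem_finsuppAntidiag]
    dsimp only [ne_eq, smul_eq_mul, id_eq, eq_mpr_eq_cast, le_eq_subset, Finsupp.coe_mk]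
    simp only [mem_univ, forall_true_left, not_and, not_forall, exists_prop,
      mem_filter, true_and] at ha
    refine ⟨⟨?_, fun i ↦ ?_⟩, fun i _ ↦ ⟨a.parts.count i, ha.1 i, rfl⟩⟩
    · conv_rhs => simp [← a.parts_sum]
      rw [sum_multiset_count_of_subset _ s]
      · simp only [smul_eq_mul]
      · intro i
        simp only [Multiset.mem_toFinset, not_not, mem_filter]
        apply ha.2
    · simp only [ne_eq, Multiset.mem_toFinset, not_not, mem_filter, and_imp]
      exact fun hi _ ↦ ha.2 i hi
  · intro p₁ hp₁ p₂ hp₂ h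
    apply Nat.Partition.ext
    simp only [true_and, mem_univ, mem_filter] at hp₁ hp₂
    ext i
    simp only [φ, ne_eq, Multiset.mem_toFinset, not_not, smul_eq_mul, Finsupp.mk.injEq] at h
    by_cases hi : i = 0
    · rw [hi]
      rw [Multiset.count_eq_zero_of_notMem]
      · rw [Multiset.count_eq_zero_of_notMem]
        intro a; exact Nat.lt_irrefl 0 (hs 0 (hp₂.2 0 a))
      intro a; exact Nat.lt_irrefl 0 (hs 0 (hp₁.2 0 a))
    · rw [← mul_left_inj' hi]
      rw [funext_iff] at h
      exact h.2 i
  · simp only [φ, mem_filter, mem_finsuppAntidiag, mem_univ, exists_prop, true_and, and_assoc]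
    rintro f ⟨hf, hf₃, hf₄⟩
    have hf' : f ∈ finsuppAntidiag s n := mem_finsuppAntidiag.mpr ⟨hf, hf₃⟩
    simp only [mem_finsuppAntidiag] at hf'
    refine ⟨⟨∑ i ∈ s, Multiset.replicate (f i / i) i, ?_, ?_⟩, ?_, ?_, ?_⟩
    · intro i hi
      simp only [exists_prop, Multiset.mem_sum, Finset.mem_map, Function.Embedding.coeFn_mk] at hi
      rcases hi with ⟨t, ht, z⟩
      apply hs
      rwa [Multiset.eq_of_mem_replicate z]
    · simp_rw [Multiset.sum_sum, Multiset.sum_replicate, Nat.nsmul_eq_mul]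
      rw [← hf'.1]
      refine sum_congr rfl fun i hi => Nat.div_mul_cancel ?_
      rcases hf₄ i hi with ⟨w, _, hw₂⟩
      rw [← hw₂]
      exact dvd_mul_left _ _
    · intro i
      simp_rw [Multiset.count_sum', Multiset.count_replicate, sum_ite_eq']
      split_ifs with h
      · rcases hf₄ i h with ⟨w, hw₁, hw₂⟩
        rwa [← hw₂, Nat.mul_div_cancel _ (hs i h)]
      · exact hc _ h
    · intro i hi
      rw [Multiset.mem_sum] at hi
      rcases hi with ⟨j, hj₁, hj₂⟩
      rwa [Multiset.eq_of_mem_replicate hj₂]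
    · ext i
      simp_rw [Multiset.count_sum', Multiset.count_replicate, sum_ite_eq']
      simp only [ne_eq, Multiset.mem_toFinset, not_not, smul_eq_mul, ite_mul,
        zero_mul, Finsupp.coe_mk]
      split_ifs with h
      · apply Nat.div_mul_cancel
        rcases hf₄ i h with ⟨w, _, hw₂⟩
        apply Dvd.intro_left _ hw₂
      · apply symm
        rw [← Finsupp.notMem_support_iff]
        exact notMem_mono hf'.2 h

def sEmb : ℕ ↪ ℕ := ⟨Nat.succ, Nat.succ_injective⟩

/-- Number of partitions of `k` whose parts all lie in `{1, …, n}`. -/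
def pc (n k : ℕ) : ℕ := #{p : k.Partition | ∀ j ∈ p.parts, j ∈ (range n).map sEmb}

theorem pc_eq_coeff (n k : ℕ) :
    (pc n k : ℂ) = coeff (R := ℂ) k (∏ i ∈ range n, (1 - (X : PowerSeries ℂ) ^ (i + 1))⁻¹) := by
  rw [pc]
  convert partialGF_prop ℂ k ((range n).map sEmb) ?_ (fun _ => Set.univ) (fun _ _ => trivial)
      using 2
  · congr
  · congr
    simp only [true_and, forall_const, Set.mem_univ]
  · rw [Finset.prod_map]
    simp_rw [num_series']
    congr! 2 with x
    ext k
    constructor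
    · rintro ⟨p, rfl⟩
      exact ⟨p, trivial, mul_comm _ _⟩
    · rintro ⟨a, -, rfl⟩
      exact Dvd.intro_left a rfl
  · intro i hi
    rw [Finset.mem_map] at hi
    obtain ⟨a, -, rfl⟩ := hi
    exact Nat.succ_pos _

theorem mem_map_sEmb {n j : ℕ} : j ∈ (range n).map sEmb ↔ 0 < j ∧ j ≤ n := by
  rw [Finset.mem_map]
  constructor
  · rintro ⟨a, ha, rfl⟩
    rw [Finset.mem_range] at ha
    simp only [sEmb, Function.Embedding.coeFn_mk]
    omega
  · rintro ⟨h1, h2⟩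
    refine ⟨j - 1, Finset.mem_range.mpr (by omega), ?_⟩
    simp only [sEmb, Function.Embedding.coeFn_mk]
    omega

theorem pc_eq (n k : ℕ) (h : k ≤ n) : pc n k = Fintype.card (Nat.Partition k) := by
  rw [pc, ← Finset.card_univ]
  congr 1
  rw [Finset.filter_true_of_mem]
  intro p _ j hj
  rw [mem_map_sEmb]
  have hjk : j ≤ k := by
    simpa [p.parts_sum] using Multiset.single_le_sum (fun _ _ => Nat.zero_le _) _ hj
  exact ⟨p.parts_pos hj, hjk.trans h⟩

theorem pc_le (n k : ℕ) : pc n k ≤ Fintype.card (Nat.Partition k) := by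
  rw [pc, ← Finset.card_univ]
  exact Finset.card_le_card (Finset.filter_subset _ _)

theorem pc_zero (k : ℕ) (hk : 0 < k) : pc 0 k = 0 := by
  rw [pc, Finset.card_eq_zero, Finset.filter_eq_empty_iff]
  intro p _
  have hp : p.parts ≠ 0 := by
    intro h
    have := p.parts_sum
    rw [h] at this
    simp at this
    omega
  obtain ⟨j, hj⟩ := Multiset.exists_mem_of_ne_zero hp
  intro hall
  simpa using hall j hj

theorem key (n : ℕ) : ∀ z : ℂ, ‖z‖ < 1 →
    HasSum (fun k => (pc n k : ℂ) * z ^ k) (∏ m ∈ range n, (1 - z ^ (m + 1))⁻¹) := by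
  induction n with
  | zero =>
    intro z _
    have h0 : (fun k => (pc 0 k : ℂ) * z ^ k) = fun k => if k = 0 then 1 else 0 := by
      funext k
      rcases Nat.eq_zero_or_pos k with rfl | hk
      · rw [pc_eq 0 0 le_rfl]
        simp [Fintype.card_unique]
      · rw [pc_zero k hk]
        simp [Nat.pos_iff_ne_zero.mp hk]
    rw [h0, prod_range_zero]
    exact hasSum_ite_eq 0 1
  | succ n ih =>
    intro z hz
    have hzn : ∀ m : ℕ, ‖z ^ (m + 1)‖ < 1 := fun m => by
      rw [norm_pow]
      exact pow_lt_one₀ (norm_nonneg z) hz (Nat.succ_ne_zero m)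
    set f : ℕ → ℂ := fun k => (pc n k : ℂ) * z ^ k with hfdef
    set g : ℕ → ℂ := fun j => (if (n + 1) ∣ j then 1 else 0) * z ^ j with hgdef
    have hf : HasSum f (∏ m ∈ range n, (1 - z ^ (m + 1))⁻¹) := ih z hz
    -- summable norms for f
    have h1 := ih (‖z‖ : ℂ) (by rwa [Complex.norm_real, norm_norm])
    have h2 : Summable fun k => (pc n k : ℝ) * ‖z‖ ^ k := by
      rw [← Complex.summable_ofReal]
      refine h1.summable.congr fun k => ?_
      push_cast
      ring
    have hfnorm : Summable fun k => ‖f k‖ := by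
      refine h2.congr fun k => ?_
      simp [hfdef, norm_mul, norm_pow]
    -- geometric factor
    have hg : HasSum g ((1 - z ^ (n + 1))⁻¹) := by
      have he : Function.Injective (fun j : ℕ => (n + 1) * j) :=
        fun a b hab => by simpa using hab
      have h0 : ∀ x ∉ Set.range (fun j : ℕ => (n + 1) * j), g x = 0 := by
        intro x hx
        have hnd : ¬(n + 1) ∣ x := by
          intro ⟨c, hc⟩
          exact hx ⟨c, hc.symm⟩
        simp [hgdef, hnd]
      rw [← Function.Injective.hasSum_iff he h0]
      have hcomp : (g ∘ fun j : ℕ => (n + 1) * j) = fun j => (z ^ (n + 1)) ^ j := by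
        funext j
        have hd : (n + 1) ∣ (n + 1) * j := Dvd.intro j rfl
        simp only [hgdef, Function.comp_apply, if_pos hd, one_mul, pow_mul]
      rw [hcomp]
      exact hasSum_geometric_of_norm_lt_one (hzn n)
    have hgnorm : Summable fun j => ‖g j‖ := by
      refine Summable.of_nonneg_of_le (fun j => norm_nonneg _) (fun j => ?_)
        (summable_geometric_of_lt_one (norm_nonneg z) hz)
      simp only [hgdef, norm_mul, norm_pow]
      split_ifs <;> simp [norm_pow]
    -- Cauchy product
    have hFsum : ((∑' k, f k) * ∑' j, g j) =
        ∑' K, ∑ kl ∈ Finset.HasAntidiagonal.antidiagonal K, f kl.1 * g kl.2 :=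
      tsum_mul_tsum_eq_tsum_sum_antidiagonal_of_summable_norm hfnorm hgnorm
    have hFs : Summable fun K => ∑ kl ∈ Finset.HasAntidiagonal.antidiagonal K, f kl.1 * g kl.2 :=
      (summable_norm_sum_mul_antidiagonal_of_summable_norm hfnorm hgnorm).of_norm
    have hP : HasSum (fun K => ∑ kl ∈ Finset.HasAntidiagonal.antidiagonal K, f kl.1 * g kl.2)
        (∏ m ∈ range (n + 1), (1 - z ^ (m + 1))⁻¹) := by
      have h3 := hFs.hasSum
      rwa [← hFsum, hf.tsum_eq, hg.tsum_eq, ← prod_range_succ] at h3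
    have hEq : (fun K => ∑ kl ∈ Finset.HasAntidiagonal.antidiagonal K, f kl.1 * g kl.2) =
        fun K => (pc (n + 1) K : ℂ) * z ^ K := by
      funext K
      have hstep : ∀ kl ∈ Finset.HasAntidiagonal.antidiagonal K,
          f kl.1 * g kl.2 = ((pc n kl.1 : ℂ) * (if (n + 1) ∣ kl.2 then 1 else 0)) * z ^ K := by
        intro kl hkl
        rw [Finset.HasAntidiagonal.mem_antidiagonal] at hkl
        simp only [hfdef, hgdef]
        rw [← hkl, pow_add]
        ring
      rw [Finset.sum_congr rfl hstep, ← Finset.sum_mul]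
      congr 1
      have hc := pc_eq_coeff (n + 1) K
      rw [prod_range_succ, PowerSeries.coeff_mul] at hc
      rw [hc]
      refine Finset.sum_congr rfl fun kl _ => ?_
      rw [← pc_eq_coeff n kl.1, num_series', coeff_indicator]
      simp [Set.mem_setOf_eq]
    rwa [hEq] at hP

theorem keyR (n : ℕ) (x : ℝ) (hx : |x| < 1) :
    HasSum (fun k => (pc n k : ℝ) * x ^ k) (∏ m ∈ range n, (1 - x ^ (m + 1))⁻¹) := by
  have h := key n (x : ℂ) (by rwa [Complex.norm_real, Real.norm_eq_abs])
  rw [← Complex.hasSum_ofReal]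
  convert h using 1
  · funext k; push_cast; ring
  · push_cast; rfl

theorem card_mul_pow_le (x : ℝ) (hx0 : 0 ≤ x) (hx1 : x < 1) (k : ℕ) :
    (Fintype.card (Nat.Partition k) : ℝ) * x ^ k ≤ Real.exp (x / (1 - x) ^ 2) := by
  have hs := keyR k x (by rwa [abs_of_nonneg hx0])
  have hterm : (Fintype.card (Nat.Partition k) : ℝ) * x ^ k ≤
      ∏ m ∈ range k, (1 - x ^ (m + 1))⁻¹ := by
    rw [← pc_eq k k le_rfl, ← hs.tsum_eq]
    exact Summable.le_tsum hs.summable k fun j _ => by positivity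
  refine hterm.trans ?_
  have hlt1 : ∀ i : ℕ, x ^ (i + 1) < 1 := fun i => pow_lt_one₀ hx0 hx1 (Nat.succ_ne_zero i)
  have hpos : ∀ i : ℕ, (0 : ℝ) < 1 - x ^ (i + 1) := fun i => by
    have := hlt1 i; linarith
  have hprod : ∏ m ∈ range k, (1 - x ^ (m + 1))⁻¹ ≤
      ∏ m ∈ range k, Real.exp (x ^ (m + 1) / (1 - x)) := by
    refine Finset.prod_le_prod (fun i _ => (inv_pos.mpr (hpos i)).le) (fun i _ => ?_)
    have h1x : (0 : ℝ) < 1 - x := by linarith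
    have h2 : x ^ (i + 1) / (1 - x ^ (i + 1)) + 1 ≤ Real.exp (x ^ (i + 1) / (1 - x ^ (i + 1))) := by
      have := Real.add_one_le_exp (x ^ (i + 1) / (1 - x ^ (i + 1)))
      linarith
    have h3 : (1 - x ^ (i + 1))⁻¹ = x ^ (i + 1) / (1 - x ^ (i + 1)) + 1 := by
      field_simp [(hpos i).ne']
      ring
    have h4 : x ^ (i + 1) / (1 - x ^ (i + 1)) ≤ x ^ (i + 1) / (1 - x) := by
      apply div_le_div_of_nonneg_left (by positivity) h1x
      have : x ≤ 1 → x ^ (i+1) ≤ x := fun _ => by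
        calc x ^ (i + 1) = x ^ i * x := by ring
          _ ≤ 1 * x := by
              apply mul_le_mul_of_nonneg_right _ hx0
              exact pow_le_one₀ hx0 hx1.le
          _ = x := one_mul x
      linarith [this hx1.le]
    calc (1 - x ^ (i + 1))⁻¹ = x ^ (i + 1) / (1 - x ^ (i + 1)) + 1 := h3
      _ ≤ Real.exp (x ^ (i + 1) / (1 - x ^ (i + 1))) := h2
      _ ≤ Real.exp (x ^ (i + 1) / (1 - x)) := Real.exp_le_exp.mpr h4
  refine hprod.trans ?_
  rw [← Real.exp_sum]
  apply Real.exp_le_exp.mpr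
  have h1x : (0 : ℝ) < 1 - x := by linarith
  have hgeo : ∑ m ∈ range k, x ^ (m + 1) ≤ x / (1 - x) := by
    have h5 : ∑ m ∈ range k, x ^ (m + 1) = x * ∑ m ∈ range k, x ^ m := by
      rw [Finset.mul_sum]
      exact Finset.sum_congr rfl fun m _ => by ring
    have h6 : ∑ m ∈ range k, x ^ m ≤ (1 - x)⁻¹ := by
      rw [← tsum_geometric_of_lt_one hx0 hx1]
      exact Summable.sum_le_tsum _ (fun j _ => by positivity) (summable_geometric_of_lt_one hx0 hx1)
    rw [h5, div_eq_mul_inv]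
    exact mul_le_mul_of_nonneg_left h6 hx0
  calc ∑ m ∈ range k, x ^ (m + 1) / (1 - x) = (∑ m ∈ range k, x ^ (m + 1)) / (1 - x) := by
        rw [Finset.sum_div]
    _ ≤ (x / (1 - x)) / (1 - x) := by gcongr
    _ = x / (1 - x) ^ 2 := by rw [div_div, sq]
end

end EulerAux

/-- For `|z| < 1`, the partial products of `∏_{m=1}^∞ 1/(1 - z^m)` converge to the
value of the power series `∑_{k=0}^∞ p(k) z^k`, where `p` is the partition function. -/
theorem euler_product_partition_generating_function (z : ℂ) (hz : ‖z‖ < 1) :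
    Tendsto (fun n => ∏ m ∈ range n, (1 - z ^ (m + 1))⁻¹) atTop
      (nhds (∑' k : ℕ, (Fintype.card (Nat.Partition k) : ℂ) * z ^ k)) := by
  set x : ℝ := (1 + ‖z‖) / 2 with hxdef
  have hz0 : 0 ≤ ‖z‖ := norm_nonneg z
  have hzx : ‖z‖ < x := by rw [hxdef]; linarith
  have hx0 : 0 ≤ x := by rw [hxdef]; linarith
  have hx0' : 0 < x := by rw [hxdef]; linarith
  have hx1 : x < 1 := by rw [hxdef]; linarith
  set C : ℝ := Real.exp (x / (1 - x) ^ 2) with hCdef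
  have hC0 : 0 ≤ C := (Real.exp_pos _).le
  set pf : ℕ → ℝ := fun k => (Fintype.card (Nat.Partition k) : ℝ) with hpfdef
  have hpf0 : ∀ k, 0 ≤ pf k := fun k => Nat.cast_nonneg _
  have hbound : ∀ k, pf k * ‖z‖ ^ k ≤ C * (‖z‖ / x) ^ k := by
    intro k
    have h1 := EulerAux.card_mul_pow_le x hx0 hx1 k
    calc pf k * ‖z‖ ^ k = (pf k * x ^ k) * (‖z‖ / x) ^ k := by
          rw [mul_assoc, ← mul_pow]
          congr 2
          field_simp
      _ ≤ C * (‖z‖ / x) ^ k := by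
          refine mul_le_mul_of_nonneg_right ?_ (pow_nonneg (div_nonneg hz0 hx0) k)
          exact h1
  have hgsum : Summable fun k => pf k * ‖z‖ ^ k := by
    refine Summable.of_nonneg_of_le (fun k => by positivity) hbound ?_
    exact (summable_geometric_of_lt_one (by positivity) (by rw [div_lt_one hx0']; exact hzx)).mul_left C
  have hLnorm : Summable fun k => ‖(Fintype.card (Nat.Partition k) : ℂ) * z ^ k‖ := by
    refine hgsum.congr fun k => ?_
    simp [hpfdef, norm_mul, norm_pow]
  have hL : Summable fun k : ℕ => (Fintype.card (Nat.Partition k) : ℂ) * z ^ k := hLnorm.of_norm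
  set L : ℂ := ∑' k : ℕ, (Fintype.card (Nat.Partition k) : ℂ) * z ^ k with hLdef
  set g : ℕ → ℝ := fun k => 2 * (pf k * ‖z‖ ^ k) with hgdef
  have hgsum2 : Summable g := hgsum.mul_left 2
  rw [tendsto_iff_norm_sub_tendsto_zero]
  have hT : Tendsto (fun n => ∑' k, g (k + n)) atTop (nhds 0) := tendsto_sum_nat_add g
  refine squeeze_zero (fun n => norm_nonneg _) (fun n => ?_) hT
  -- ‖P_n z - L‖ ≤ ∑' k, g (k + n)
  set δ : ℕ → ℂ := fun k =>
    ((EulerAux.pc n k : ℂ) - (Fintype.card (Nat.Partition k) : ℂ)) * z ^ k with hδdef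
  have hδsum : HasSum δ ((∏ m ∈ range n, (1 - z ^ (m + 1))⁻¹) - L) := by
    have h2 := (EulerAux.key n z hz).sub hL.hasSum
    refine h2.congr_fun fun k => ?_
    simp only [hδdef]
    ring
  have hδle : ∀ k, ‖δ k‖ ≤ g k := by
    intro k
    have hle := EulerAux.pc_le n k
    simp only [hδdef, hgdef, norm_mul, norm_pow]
    have : ((EulerAux.pc n k : ℂ) - (Fintype.card (Nat.Partition k) : ℂ)) =
        (((EulerAux.pc n k : ℝ) - (Fintype.card (Nat.Partition k) : ℝ) : ℝ) : ℂ) := by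
      push_cast; ring
    rw [this, Complex.norm_real, Real.norm_eq_abs, abs_sub_comm,
      abs_of_nonneg (sub_nonneg.mpr (by exact_mod_cast hle))]
    have hbnd : (Fintype.card (Nat.Partition k) : ℝ) - (EulerAux.pc n k : ℝ) ≤ 2 * pf k := by
      have : (0:ℝ) ≤ (EulerAux.pc n k : ℝ) := Nat.cast_nonneg _
      simp only [hpfdef]
      linarith [hpf0 k]
    calc ((Fintype.card (Nat.Partition k) : ℝ) - (EulerAux.pc n k : ℝ)) * ‖z‖ ^ k
        ≤ (2 * pf k) * ‖z‖ ^ k := by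
          apply mul_le_mul_of_nonneg_right hbnd (by positivity)
      _ = 2 * (pf k * ‖z‖ ^ k) := by ring
  have hδzero : ∀ k < n, ‖δ k‖ = 0 := by
    intro k hk
    have := EulerAux.pc_eq n k hk.le
    simp only [hδdef, this]
    simp
  have hδnormsum : Summable fun k => ‖δ k‖ :=
    Summable.of_nonneg_of_le (fun k => norm_nonneg _) hδle hgsum2
  calc ‖(∏ m ∈ range n, (1 - z ^ (m + 1))⁻¹) - L‖ = ‖∑' k, δ k‖ := by rw [hδsum.tsum_eq]
    _ ≤ ∑' k, ‖δ k‖ := norm_tsum_le_tsum_norm hδnormsum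
    _ = ∑' k, ‖δ (k + n)‖ := by
        rw [← Summable.sum_add_tsum_nat_add n hδnormsum, Finset.sum_eq_zero (fun k hk =>
          hδzero k (Finset.mem_range.mp hk)), zero_add]
    _ ≤ ∑' k, g (k + n) := by
        refine Summable.tsum_le_tsum (fun k => hδle _) ?_ ?_
        · exact (summable_nat_add_iff n).mpr hδnormsum
        · exact (summable_nat_add_iff n).mpr hgsum2
end

section
/- (Euler's pentagonal number theorem) For |z| < 1, ∏_{m=1}^∞ (1−z^m) = 1 + Σ_{j=1}^∞ (−1)^j (z^{(3j²−j)/2} + z^{(3j²+j)/2}). -/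
open Filter Finset

namespace PentagonalAux

/-- The general term of the auxiliary series in Euler's proof. -/
noncomputable def T (z : ℂ) (c j p : ℕ) (t : ℕ) : ℂ :=
  z ^ (c + j * t) * ∏ i ∈ range t, (1 - z ^ (p + i))

/-- The auxiliary series `V_j` in Euler's proof. -/
noncomputable def V (z : ℂ) (j : ℕ) : ℂ := ∑' t, T z (j ^ 2 + j * (j - 1) / 2) j j t

variable {z : ℂ}

lemma even_mul_pred (n : ℕ) : ∃ k, (n+1) * n = 2 * k := by
  obtain ⟨k, hk⟩ := Nat.even_mul_succ_self n
  have h : (n+1)*n = n*(n+1) := Nat.mul_comm _ _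
  exact ⟨k, by omega⟩

lemma c_succ (j : ℕ) : (j+1)^2 + (j+1)*((j+1)-1)/2
    = (j^2 + j*(j-1)/2) + (3*j+1) := by
  rcases j with _ | m
  · norm_num
  · simp only [Nat.add_sub_cancel]
    obtain ⟨k, hk⟩ := even_mul_pred m
    have h2 : (m+1+1)*(m+1) = (m+1)*m + 2*(m+1) := by ring
    have h4 : (m+1+1)^2 = (m+1)^2 + (2*m+3) := by ring
    omega

lemma pent1 (j : ℕ) : (3*(j+1)^2 - (j+1))/2 = (j+1)^2 + (j+1)*((j+1)-1)/2 := by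
  simp only [Nat.add_sub_cancel]
  obtain ⟨k, hk⟩ := even_mul_pred j
  have h1 : 3*(j+1)^2 = 2*((j+1)^2) + (j+1)*j + (j+1) := by ring
  omega

lemma pent2 (j : ℕ) : (3*(j+1)^2 + (j+1))/2 = ((j+1)^2 + (j+1)*((j+1)-1)/2) + (j+1) := by
  obtain ⟨k, hk⟩ := even_mul_pred j
  have h1 : 3*(j+1)^2 = 2*((j+1)^2) + (j+1)*j + (j+1) := by ring
  have h2 : (j+1)*((j+1)-1) = (j+1)*j := by simp
  omega

lemma exp_ge (j : ℕ) : j + 1 ≤ (3*(j+1)^2 - (j+1))/2 := by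
  obtain ⟨k, hk⟩ := even_mul_pred j
  have h1 : 3*(j+1)^2 = 2*((j+1)^2) + (j+1)*j + (j+1) := by ring
  have h3 : j+1 ≤ (j+1)^2 := Nat.le_self_pow (by norm_num) _
  omega

lemma exp_ge' (j : ℕ) : j + 1 ≤ (3*(j+1)^2 + (j+1))/2 := by
  obtain ⟨k, hk⟩ := even_mul_pred j
  have h1 : 3*(j+1)^2 = 2*((j+1)^2) + (j+1)*j + (j+1) := by ring
  have h3 : j+1 ≤ (j+1)^2 := Nat.le_self_pow (by norm_num) _
  omega

lemma cexp_ge (j : ℕ) : j ≤ j^2 + j*(j-1)/2 := by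
  have h3 : j ≤ j^2 := Nat.le_self_pow (by norm_num) _
  omega

lemma prod_bound (hz : ‖z‖ < 1) (p t : ℕ) :
    ‖∏ i ∈ range t, (1 - z ^ (p + i))‖ ≤ Real.exp ((1 - ‖z‖)⁻¹) := by
  have h0 : (0:ℝ) ≤ ‖z‖ := norm_nonneg z
  calc ‖∏ i ∈ range t, (1 - z ^ (p + i))‖ ≤ ∏ i ∈ range t, ‖1 - z ^ (p + i)‖ :=
        norm_prod_le _ _
    _ ≤ ∏ i ∈ range t, Real.exp (‖z‖ ^ (p + i)) := by
        apply prod_le_prod (fun i _ => norm_nonneg _)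
        intro i _
        calc ‖1 - z ^ (p + i)‖ ≤ ‖(1:ℂ)‖ + ‖z ^ (p+i)‖ := norm_sub_le _ _
          _ = ‖z‖ ^ (p+i) + 1 := by rw [norm_one, norm_pow]; ring
          _ ≤ Real.exp (‖z‖ ^ (p + i)) := Real.add_one_le_exp _
    _ = Real.exp (∑ i ∈ range t, ‖z‖ ^ (p + i)) := (Real.exp_sum _ _).symm
    _ ≤ Real.exp ((1 - ‖z‖)⁻¹) := by
        apply Real.exp_le_exp.2
        calc ∑ i ∈ range t, ‖z‖ ^ (p + i) ≤ ∑ i ∈ range t, ‖z‖ ^ i := by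
              apply sum_le_sum
              intro i _
              exact pow_le_pow_of_le_one h0 hz.le (Nat.le_add_left i p)
          _ ≤ ∑' i : ℕ, ‖z‖ ^ i := Summable.sum_le_tsum _ (fun i _ => by positivity)
              (summable_geometric_of_lt_one h0 hz)
          _ = (1 - ‖z‖)⁻¹ := tsum_geometric_of_lt_one h0 hz

lemma T_bound (hz : ‖z‖ < 1) {j : ℕ} (hj : 1 ≤ j) (c p t : ℕ) :
    ‖T z c j p t‖ ≤ Real.exp ((1 - ‖z‖)⁻¹) * ‖z‖ ^ c * ‖z‖ ^ t := by
  have h0 : (0:ℝ) ≤ ‖z‖ := norm_nonneg z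
  have h1 : ‖z ^ (c + j * t)‖ ≤ ‖z‖ ^ c * ‖z‖ ^ t := by
    rw [norm_pow, ← pow_add]
    exact pow_le_pow_of_le_one h0 hz.le (by nlinarith [Nat.le_mul_of_pos_left t hj])
  calc ‖T z c j p t‖ = ‖z ^ (c + j * t)‖ * ‖∏ i ∈ range t, (1 - z ^ (p + i))‖ :=
        norm_mul _ _
    _ ≤ (‖z‖ ^ c * ‖z‖ ^ t) * Real.exp ((1 - ‖z‖)⁻¹) := by
        apply mul_le_mul h1 (prod_bound hz p t) (norm_nonneg _) (by positivity)
    _ = Real.exp ((1 - ‖z‖)⁻¹) * ‖z‖ ^ c * ‖z‖ ^ t := by ring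

lemma summable_T (hz : ‖z‖ < 1) {j : ℕ} (hj : 1 ≤ j) (c p : ℕ) :
    Summable (T z c j p) := by
  apply Summable.of_norm_bounded (g := fun t => Real.exp ((1 - ‖z‖)⁻¹) * ‖z‖ ^ c * ‖z‖ ^ t)
  · exact (summable_geometric_of_lt_one (norm_nonneg z) hz).mul_left _
  · exact T_bound hz hj c p

lemma tsum_T_bound (hz : ‖z‖ < 1) {j : ℕ} (hj : 1 ≤ j) (c p : ℕ) :
    ‖∑' t, T z c j p t‖ ≤ Real.exp ((1 - ‖z‖)⁻¹) * ‖z‖ ^ c * (1 - ‖z‖)⁻¹ := by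
  have h0 : (0:ℝ) ≤ ‖z‖ := norm_nonneg z
  have hg : Summable (fun t => Real.exp ((1 - ‖z‖)⁻¹) * ‖z‖ ^ c * ‖z‖ ^ t) :=
    (summable_geometric_of_lt_one h0 hz).mul_left _
  have hnorm : Summable (fun t => ‖T z c j p t‖) :=
    Summable.of_nonneg_of_le (fun t => norm_nonneg _) (T_bound hz hj c p) hg
  calc ‖∑' t, T z c j p t‖ ≤ ∑' t, ‖T z c j p t‖ := norm_tsum_le_tsum_norm hnorm
    _ ≤ ∑' t, Real.exp ((1 - ‖z‖)⁻¹) * ‖z‖ ^ c * ‖z‖ ^ t :=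
        Summable.tsum_le_tsum (T_bound hz hj c p) hnorm hg
    _ = Real.exp ((1 - ‖z‖)⁻¹) * ‖z‖ ^ c * ∑' t : ℕ, ‖z‖ ^ t := tsum_mul_left
    _ = Real.exp ((1 - ‖z‖)⁻¹) * ‖z‖ ^ c * (1 - ‖z‖)⁻¹ := by
        rw [tsum_geometric_of_lt_one h0 hz]

lemma rec_aux (hz : ‖z‖ < 1) {j : ℕ} (hj : 1 ≤ j) (a : ℕ) :
    ∑' t, T z a j j t = z ^ a + z ^ (a + j)
      - ∑' t, T z (a + (3 * j + 1)) (j + 1) (j + 1) t := by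
  have hX : Summable (T z (a + j) j (j + 1)) := summable_T hz hj _ _
  have hY : Summable (T z (a + 2 * j) j (j + 1)) := summable_T hz hj _ _
  have hW : Summable (T z (a + (3 * j + 1)) (j + 1) (j + 1)) :=
    summable_T hz (le_trans hj (Nat.le_succ j)) _ _
  have hstep : ∀ t, T z a j j (t + 1)
      = T z (a + j) j (j + 1) t - T z (a + 2 * j) j (j + 1) t := by
    intro t
    have hp : ∏ i ∈ range (t+1), (1 - z ^ (j + i))
        = (∏ i ∈ range t, (1 - z ^ ((j + 1) + i))) * (1 - z ^ j) := by
      rw [prod_range_succ' (fun i => 1 - z ^ (j + i)) t]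
      simp only [Nat.add_zero]
      congr 1
      exact prod_congr rfl (fun i _ => by ring_nf)
    simp only [T, hp]
    have he : a + j * (t + 1) = (a + j) + j * t := by ring
    rw [he]
    ring
  have hstep2 : ∀ t, T z (a + j) j (j + 1) (t + 1)
      = T z (a + 2 * j) j (j + 1) t - T z (a + (3 * j + 1)) (j + 1) (j + 1) t := by
    intro t
    have hp : ∏ i ∈ range (t+1), (1 - z ^ ((j+1) + i))
        = (∏ i ∈ range t, (1 - z ^ ((j + 1) + i))) * (1 - z ^ ((j+1) + t)) :=
      prod_range_succ _ t
    simp only [T, hp]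
    have he1 : (a + j) + j * (t + 1) = (a + 2 * j) + j * t := by ring
    have he2 : ((a + 2 * j) + j * t) + ((j + 1) + t) = (a + (3 * j + 1)) + (j + 1) * t := by
      ring
    rw [he1]
    calc z ^ (a + 2*j + j*t) * ((∏ i ∈ range t, (1 - z ^ ((j + 1) + i))) * (1 - z ^ ((j+1) + t)))
        = z ^ (a + 2*j + j*t) * (∏ i ∈ range t, (1 - z ^ ((j + 1) + i)))
          - z ^ ((a + 2*j + j*t) + ((j+1) + t)) * (∏ i ∈ range t, (1 - z ^ ((j + 1) + i))) := by
          rw [pow_add]; ring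
      _ = _ := by rw [he2]
  have h1 : ∑' t, T z a j j t = z ^ a + ∑' t, T z a j j (t + 1) := by
    rw [Summable.tsum_eq_zero_add (summable_T hz hj a j)]
    congr 1
    simp [T]
  have h2 : ∑' t, T z a j j (t + 1)
      = ∑' t, T z (a + j) j (j + 1) t - ∑' t, T z (a + 2 * j) j (j + 1) t := by
    rw [← Summable.tsum_sub hX hY]
    exact tsum_congr hstep
  have h3 : ∑' t, T z (a + j) j (j + 1) t
      = z ^ (a + j) + (∑' t, T z (a + 2 * j) j (j + 1) t
          - ∑' t, T z (a + (3 * j + 1)) (j + 1) (j + 1) t) := by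
    rw [Summable.tsum_eq_zero_add hX, ← Summable.tsum_sub hY hW]
    congr 1
    · simp [T]
    · exact tsum_congr hstep2
  rw [h1, h2, h3]
  ring

lemma V_rec (hz : ‖z‖ < 1) {j : ℕ} (hj : 1 ≤ j) :
    V z j = z ^ (j^2 + j*(j-1)/2) + z ^ ((j^2 + j*(j-1)/2) + j) - V z (j+1) := by
  have h := rec_aux hz hj (j^2 + j*(j-1)/2)
  rw [V, V, h, c_succ j]

lemma V_bound (hz : ‖z‖ < 1) {j : ℕ} (hj : 1 ≤ j) :
    ‖V z j‖ ≤ Real.exp ((1 - ‖z‖)⁻¹) * (1 - ‖z‖)⁻¹ * ‖z‖ ^ j := by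
  have h0 : (0:ℝ) ≤ ‖z‖ := norm_nonneg z
  have h1 : (0:ℝ) ≤ (1 - ‖z‖)⁻¹ := inv_nonneg.2 (by linarith)
  calc ‖V z j‖ ≤ Real.exp ((1 - ‖z‖)⁻¹) * ‖z‖ ^ (j^2 + j*(j-1)/2) * (1 - ‖z‖)⁻¹ :=
        tsum_T_bound hz hj _ _
    _ ≤ Real.exp ((1 - ‖z‖)⁻¹) * ‖z‖ ^ j * (1 - ‖z‖)⁻¹ := by
        apply mul_le_mul_of_nonneg_right _ h1
        apply mul_le_mul_of_nonneg_left _ (Real.exp_pos _).le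
        exact pow_le_pow_of_le_one h0 hz.le (cexp_ge j)
    _ = Real.exp ((1 - ‖z‖)⁻¹) * (1 - ‖z‖)⁻¹ * ‖z‖ ^ j := by ring

lemma telescope (z : ℂ) (n : ℕ) :
    ∏ m ∈ range n, (1 - z ^ (m+1)) = 1 - ∑ t ∈ range n, T z 1 1 1 t := by
  induction n with
  | zero => simp
  | succ n ih =>
    rw [prod_range_succ, sum_range_succ, ih]
    have hp : ∏ i ∈ range n, (1 - z ^ (1+i)) = ∏ m ∈ range n, (1 - z ^ (m+1)) :=
      prod_congr rfl (fun i _ => by rw [add_comm])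
    have hT : T z 1 1 1 n = z ^ (n+1) * (1 - ∑ t ∈ range n, T z 1 1 1 t) := by
      rw [T, hp, ih, one_mul, add_comm]
    rw [hT]
    ring

lemma alt_sum (hz : ‖z‖ < 1) (J : ℕ) :
    V z 1 = ∑ j ∈ range J, (-1:ℂ)^j *
        (z ^ ((j+1)^2 + (j+1)*((j+1)-1)/2) + z ^ (((j+1)^2 + (j+1)*((j+1)-1)/2) + (j+1)))
      + (-1:ℂ)^J * V z (J+1) := by
  induction J with
  | zero => simp
  | succ J ih =>
    rw [sum_range_succ, ih, V_rec hz (j := J + 1) (Nat.le_add_left 1 J)]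
    generalize (J+1)^2 + (J+1)*((J+1)-1)/2 = c
    simp only [pow_succ]
    ring

end PentagonalAux

open PentagonalAux

/-- Euler's pentagonal number theorem: for `|z| < 1`,
`∏_{m=1}^∞ (1 - z^m) = 1 + ∑_{j=1}^∞ (-1)^j (z^{(3j²-j)/2} + z^{(3j²+j)/2})`. -/
theorem pentagonal_number_theorem (z : ℂ) (hz : ‖z‖ < 1) :
    Tendsto (fun n => ∏ m ∈ range n, (1 - z ^ (m + 1))) atTop
      (nhds (1 + ∑' j : ℕ, (-1 : ℂ) ^ (j + 1) *
        (z ^ ((3 * (j + 1) ^ 2 - (j + 1)) / 2) + z ^ ((3 * (j + 1) ^ 2 + (j + 1)) / 2)))) := by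
  have h0 : (0:ℝ) ≤ ‖z‖ := norm_nonneg z
  set term : ℕ → ℂ := fun j => (-1 : ℂ) ^ (j + 1) *
      (z ^ ((3 * (j + 1) ^ 2 - (j + 1)) / 2) + z ^ ((3 * (j + 1) ^ 2 + (j + 1)) / 2)) with hterm_def
  -- rewrite term via the pentagonal exponent identities
  have hterm : ∀ j, term j = -((-1:ℂ)^j *
      (z ^ ((j+1)^2 + (j+1)*((j+1)-1)/2) + z ^ (((j+1)^2 + (j+1)*((j+1)-1)/2) + (j+1)))) := by
    intro j
    simp only [hterm_def]
    rw [pent1 j, pent2 j]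
    generalize (j+1)^2 + (j+1)*((j+1)-1)/2 = c
    simp only [pow_succ]
    ring
  -- summability of the pentagonal series
  have hS : Summable term := by
    apply Summable.of_norm_bounded (g := fun j => (2 * ‖z‖) * ‖z‖ ^ j)
    · exact (summable_geometric_of_lt_one h0 hz).mul_left _
    · intro j
      have hb : ∀ e : ℕ, j + 1 ≤ e → ‖z ^ e‖ ≤ ‖z‖ * ‖z‖ ^ j := by
        intro e he
        rw [norm_pow]
        calc ‖z‖ ^ e ≤ ‖z‖ ^ (j+1) := pow_le_pow_of_le_one h0 hz.le he
          _ = ‖z‖ * ‖z‖ ^ j := by rw [pow_succ]; ring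
      have hn : ‖(-1:ℂ)^(j+1)‖ = 1 := by simp
      calc ‖term j‖ ≤ ‖z ^ ((3 * (j + 1) ^ 2 - (j + 1)) / 2)‖
            + ‖z ^ ((3 * (j + 1) ^ 2 + (j + 1)) / 2)‖ := by
            simp only [hterm_def]
            rw [norm_mul, hn, one_mul]
            exact norm_add_le _ _
        _ ≤ (‖z‖ * ‖z‖ ^ j) + (‖z‖ * ‖z‖ ^ j) :=
            add_le_add (hb _ (exp_ge j)) (hb _ (exp_ge' j))
        _ = (2 * ‖z‖) * ‖z‖ ^ j := by ring
  -- partial sums of the pentagonal series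
  have hps : ∀ J, ∑ j ∈ range J, term j = -V z 1 + (-1:ℂ)^J * V z (J+1) := by
    intro J
    have := alt_sum hz (z := z) J
    calc ∑ j ∈ range J, term j
        = ∑ j ∈ range J, -((-1:ℂ)^j *
            (z ^ ((j+1)^2 + (j+1)*((j+1)-1)/2)
              + z ^ (((j+1)^2 + (j+1)*((j+1)-1)/2) + (j+1)))) :=
          sum_congr rfl (fun j _ => hterm j)
      _ = -∑ j ∈ range J, ((-1:ℂ)^j *
            (z ^ ((j+1)^2 + (j+1)*((j+1)-1)/2)
              + z ^ (((j+1)^2 + (j+1)*((j+1)-1)/2) + (j+1)))) := by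
          rw [Finset.sum_neg_distrib]
      _ = -V z 1 + (-1:ℂ)^J * V z (J+1) := by rw [this]; ring
  -- the remainder tends to zero
  have htend0 : Tendsto (fun J => (-1:ℂ)^J * V z (J+1)) atTop (nhds 0) := by
    rw [tendsto_zero_iff_norm_tendsto_zero]
    apply squeeze_zero (fun J => norm_nonneg _)
      (g := fun J => (Real.exp ((1 - ‖z‖)⁻¹) * (1 - ‖z‖)⁻¹ * ‖z‖) * ‖z‖ ^ J)
    · intro J
      have h1 : ‖(-1:ℂ)^J * V z (J+1)‖ = ‖V z (J+1)‖ := by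
        rw [norm_mul, norm_pow, norm_neg, norm_one, one_pow, one_mul]
      rw [h1]
      calc ‖V z (J+1)‖ ≤ Real.exp ((1 - ‖z‖)⁻¹) * (1 - ‖z‖)⁻¹ * ‖z‖ ^ (J+1) :=
            V_bound hz (Nat.succ_le_succ (Nat.zero_le J))
        _ = (Real.exp ((1 - ‖z‖)⁻¹) * (1 - ‖z‖)⁻¹ * ‖z‖) * ‖z‖ ^ J := by
            rw [pow_succ]; ring
    · simpa using (tendsto_pow_atTop_nhds_zero_of_lt_one h0 hz).const_mul
        (Real.exp ((1 - ‖z‖)⁻¹) * (1 - ‖z‖)⁻¹ * ‖z‖)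
  -- hence the pentagonal series sums to -V z 1
  have h1 : Tendsto (fun J => ∑ j ∈ range J, term j) atTop (nhds (-V z 1)) := by
    have h2 : Tendsto (fun J => -V z 1 + (-1:ℂ)^J * V z (J+1)) atTop (nhds (-V z 1 + 0)) :=
      tendsto_const_nhds.add htend0
    rw [add_zero] at h2
    exact h2.congr (fun J => (hps J).symm)
  have htsum : ∑' j, term j = -V z 1 :=
    tendsto_nhds_unique hS.hasSum.tendsto_sum_nat h1
  -- identify V z 1 as the limit of the partial products
  have hV1 : V z 1 = ∑' t, T z 1 1 1 t := by norm_num [V]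
  have hsum1 : Summable (T z 1 1 1) := summable_T hz le_rfl 1 1
  have hprod : Tendsto (fun n => ∏ m ∈ range n, (1 - z ^ (m + 1))) atTop
      (nhds (1 - V z 1)) := by
    have hh : Tendsto (fun n => ∑ t ∈ range n, T z 1 1 1 t) atTop (nhds (V z 1)) := by
      rw [hV1]
      exact hsum1.hasSum.tendsto_sum_nat
    have := (tendsto_const_nhds (x := (1:ℂ)) (f := atTop)).sub hh
    exact this.congr (fun n => (telescope z n).symm)
  rw [htsum]
  have : (1 : ℂ) + -V z 1 = 1 - V z 1 := by ring
  rw [this]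
  exact hprod
end

section
/- For every positive integer n, the difference between the number of partitions of n into an even number of distinct parts and the number of partitions of n into an odd number of distinct parts equals (−1)^j if n = j(3j±1)/2 for some positive integer j, and equals 0 otherwise. -/
open Finset

/-- The number of partitions of `n` into an even number of pairwise-distinct parts. -/
def evenDistinctsCount (n : ℕ) : ℕ :=
  ((Nat.Partition.distincts n).filter fun p => Even p.parts.card).card

/-- The number of partitions of `n` into an odd number of pairwise-distinct parts. -/
def oddDistinctsCount (n : ℕ) : ℕ :=
  ((Nat.Partition.distincts n).filter fun p => Odd p.parts.card).card

namespace Franklin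

def mx (S : Finset ℕ) : ℕ := S.sup id
noncomputable def mn (S : Finset ℕ) : ℕ := sInf (S : Set ℕ)
def P (S : Finset ℕ) : Set ℕ := {x | x ∈ S ∧ ∀ y, x ≤ y → y ≤ mx S → y ∈ S}
noncomputable def sb (S : Finset ℕ) : ℕ := sInf (P S)

lemma le_mx {S : Finset ℕ} {x : ℕ} (h : x ∈ S) : x ≤ mx S := Finset.le_sup (f := id) h
lemma mx_mem {S : Finset ℕ} (h : S.Nonempty) : mx S ∈ S := by
  obtain ⟨b, hb, he⟩ := Finset.exists_mem_eq_sup S h id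
  rw [mx, he]; exact hb
lemma mn_mem {S : Finset ℕ} (h : S.Nonempty) : mn S ∈ S := by
  have := Nat.sInf_mem (s := (S : Set ℕ)) (by exact_mod_cast h.to_set)
  exact_mod_cast this
lemma mn_le {S : Finset ℕ} {x : ℕ} (h : x ∈ S) : mn S ≤ x := Nat.sInf_le (by exact_mod_cast h)

lemma P_nonempty {S : Finset ℕ} (h : S.Nonempty) : (P S).Nonempty :=
  ⟨mx S, mx_mem h, fun y h1 h2 => by rw [le_antisymm h2 h1]; exact mx_mem h⟩
lemma sb_mem {S : Finset ℕ} (h : S.Nonempty) : sb S ∈ S := (Nat.sInf_mem (P_nonempty h)).1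
lemma sb_stair {S : Finset ℕ} (h : S.Nonempty) : ∀ y, sb S ≤ y → y ≤ mx S → y ∈ S :=
  (Nat.sInf_mem (P_nonempty h)).2
lemma sb_le {S : Finset ℕ} {x : ℕ} (hx : x ∈ P S) : sb S ≤ x := Nat.sInf_le hx
lemma sb_pred_not_mem {S : Finset ℕ} (h : S.Nonempty) (hp : 0 < sb S) : sb S - 1 ∉ S := by
  intro hm
  have : sb S - 1 ∈ P S := by
    refine ⟨hm, fun y h1 h2 => ?_⟩
    rcases eq_or_lt_of_le h1 with h1 | h1
    · rwa [← h1]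
    · exact sb_stair h y (by omega) h2
  have := sb_le this; omega

-- interval lemmas
lemma mx_Icc {a b : ℕ} (h : a ≤ b) : mx (Finset.Icc a b) = b :=
  le_antisymm (Finset.sup_le fun x hx => (Finset.mem_Icc.1 hx).2) (le_mx (Finset.mem_Icc.2 ⟨h, le_rfl⟩))
lemma mn_Icc {a b : ℕ} (h : a ≤ b) : mn (Finset.Icc a b) = a :=
  le_antisymm (mn_le (Finset.mem_Icc.2 ⟨le_rfl, h⟩))
    ((Finset.mem_Icc.1 (mn_mem ⟨a, Finset.mem_Icc.2 ⟨le_rfl, h⟩⟩)).1)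
lemma sb_Icc {a b : ℕ} (h : a ≤ b) : sb (Finset.Icc a b) = a := by
  have hne : (Finset.Icc a b).Nonempty := ⟨a, Finset.mem_Icc.2 ⟨le_rfl, h⟩⟩
  refine le_antisymm (sb_le ⟨Finset.mem_Icc.2 ⟨le_rfl, h⟩, fun y h1 h2 => ?_⟩) ?_
  · exact Finset.mem_Icc.2 ⟨h1, by rwa [mx_Icc h] at h2⟩
  · exact (Finset.mem_Icc.1 (sb_mem hne)).1

def Exc (S : Finset ℕ) : Prop :=
  ∃ k, 0 < k ∧ (S = Finset.Icc k (2*k-1) ∨ S = Finset.Icc (k+1) (2*k))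

noncomputable def frank (S : Finset ℕ) : Finset ℕ :=
  if mn S + sb S ≤ mx S + 1 then
    insert (mx S + 1) ((S.erase (mn S)).erase (mx S + 1 - mn S))
  else
    insert (mx S + 1 - sb S) (insert (sb S - 1) (S.erase (mx S)))

def Fn (n : ℕ) : Finset (Finset ℕ) :=
  (Finset.range (n+1)).powerset.filter fun S => (∀ x ∈ S, 0 < x) ∧ S.sum id = n

lemma mem_Fn {n : ℕ} {S : Finset ℕ} : S ∈ Fn n ↔ (∀ x ∈ S, 0 < x) ∧ S.sum id = n := by
  constructor
  · intro h; exact (Finset.mem_filter.1 h).2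
  · intro h
    refine Finset.mem_filter.2 ⟨Finset.mem_powerset.2 fun x hx => ?_, h⟩
    have : x ≤ S.sum id := Finset.single_le_sum (f := id) (fun i _ => Nat.zero_le i) hx
    rw [h.2] at this
    exact Finset.mem_range.2 (by omega)

lemma Fn_nonempty {n : ℕ} (hn : 0 < n) {S : Finset ℕ} (hS : S ∈ Fn n) : S.Nonempty := by
  rcases S.eq_empty_or_nonempty with rfl | h
  · have := (mem_Fn.1 hS).2; simp at this; omega
  · exact h


lemma caseA {S : Finset ℕ} (hne : S.Nonempty) (hpos : ∀ x ∈ S, 0 < x) (hE : ¬ Exc S)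
    (hc : mn S + sb S ≤ mx S + 1) :
    (frank S).sum id = S.sum id ∧ (frank S).card + 1 = S.card ∧
      (∀ x ∈ frank S, 0 < x) ∧ ¬ Exc (frank S) ∧ frank (frank S) = S := by
  set m := mn S with hm
  set M := mx S with hM
  set b := sb S with hb
  have f0 : 1 ≤ m := hpos _ (mn_mem hne)
  have f1 : m ≤ b := mn_le (sb_mem hne)
  have f2 : b ≤ M := le_mx (sb_mem hne)
  have f3 : m ≤ M := f1.trans f2
  -- key1 : 2*m ≤ M
  have key1 : 2 * m ≤ M := by
    by_contra hk
    have hbm : b = m := by omega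
    have hSI : S = Finset.Icc m M := by
      ext x
      simp only [Finset.mem_Icc]
      constructor
      · intro hx; exact ⟨mn_le hx, le_mx hx⟩
      · intro hx; exact sb_stair hne x (by omega) hx.2
    exact hE ⟨m, f0, Or.inl (by rw [hSI]; congr 1; omega)⟩
  have key2 : M + 1 - m ∈ S := sb_stair hne _ (by omega) (by omega)
  have hmne : m ≠ M + 1 - m := by omega
  have hM1 : M + 1 ∉ S := fun h => by have := le_mx h; omega
  set R := (S.erase m).erase (M + 1 - m) with hR
  set T := insert (M + 1) R with hT
  have hfS : frank S = T := by rw [frank, if_pos hc]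
  have memR : ∀ x, x ∈ R ↔ x ∈ S ∧ x ≠ m ∧ x ≠ M + 1 - m := by
    intro x
    simp only [hR, Finset.mem_erase]
    tauto
  have memT : ∀ x, x ∈ T ↔ x = M + 1 ∨ (x ∈ S ∧ x ≠ m ∧ x ≠ M + 1 - m) := by
    intro x
    simp only [hT, Finset.mem_insert, memR]
  have hM1R : M + 1 ∉ R := fun h => hM1 ((memR _).1 h).1
  have hMm : M + 1 - m ∈ S.erase m := Finset.mem_erase.2 ⟨fun h => hmne h.symm, key2⟩
  have decomp : S = insert m (insert (M + 1 - m) R) := by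
    rw [hR, Finset.insert_erase hMm, Finset.insert_erase (mn_mem hne)]
  have hmniR : m ∉ insert (M + 1 - m) R := by
    simp only [Finset.mem_insert, memR]
    push_neg
    exact ⟨hmne, by tauto⟩
  have hMmR : M + 1 - m ∉ R := by simp [memR]
  -- sums
  have sumT : T.sum id = S.sum id := by
    rw [hT, Finset.sum_insert hM1R, decomp, Finset.sum_insert hmniR, Finset.sum_insert hMmR]
    simp only [id]
    omega
  -- card
  have cardT : T.card + 1 = S.card := by
    rw [hT, Finset.card_insert_of_notMem hM1R, decomp, Finset.card_insert_of_notMem hmniR,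
      Finset.card_insert_of_notMem hMmR]
  -- positivity
  have posT : ∀ x ∈ T, 0 < x := by
    intro x hx
    rcases (memT x).1 hx with h | h
    · omega
    · exact hpos x h.1
  have hTne : T.Nonempty := ⟨M + 1, (memT _).2 (Or.inl rfl)⟩
  have mxT : mx T = M + 1 := by
    refine le_antisymm (Finset.sup_le fun x hx => ?_) (le_mx ((memT _).2 (Or.inl rfl)))
    simp only [id]
    rcases (memT x).1 hx with h | h
    · omega
    · have := le_mx h.1; omega
  have mnT : m < mn T := by
    have hmem := mn_mem hTne
    rcases (memT _).1 hmem with h | h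
    · omega
    · have := mn_le (S := S) h.1
      rcases h with ⟨_, h2, _⟩
      omega
  have sbT : sb T = M + 2 - m := by
    have hup : ∀ y, M + 2 - m ≤ y → y ≤ mx T → y ∈ T := by
      intro y h1 h2
      rw [mxT] at h2
      rcases eq_or_lt_of_le h2 with h2 | h2
      · exact (memT y).2 (Or.inl h2)
      · refine (memT y).2 (Or.inr ⟨sb_stair hne y (by omega) (by omega), by omega, by omega⟩)
    have hmem : M + 2 - m ∈ P T := ⟨hup _ le_rfl (by rw [mxT]; omega), hup⟩
    have h1 : sb T ≤ M + 2 - m := sb_le hmem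
    have h2 : M + 1 - m ∉ T := by
      intro h
      rcases (memT _).1 h with h | h
      · omega
      · exact h.2.2 rfl
    rcases Nat.lt_or_ge (sb T) (M + 2 - m) with h3 | h3
    · exfalso
      exact h2 (sb_stair hTne _ (by omega) (by rw [mxT]; omega))
    · omega
  refine ⟨by rw [hfS]; exact sumT, by rw [hfS]; exact cardT, by rw [hfS]; exact posT, ?_, ?_⟩
  · -- not exceptional
    rw [hfS]
    rintro ⟨k, hk, hcase | hcase⟩
    · have e1 : mn T = k := by rw [hcase]; exact mn_Icc (by omega)
      have e2 : mx T = 2 * k - 1 := by rw [hcase]; exact mx_Icc (by omega)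
      have e3 : sb T = k := by rw [hcase]; exact sb_Icc (by omega)
      omega
    · have e1 : mx T = 2 * k := by rw [hcase]; exact mx_Icc (by omega)
      have e3 : sb T = k + 1 := by rw [hcase]; exact sb_Icc (by omega)
      omega
  · -- involution
    rw [hfS, frank, if_neg (by omega)]
    have e1 : mx T + 1 - sb T = m := by omega
    have e2 : sb T - 1 = M + 1 - m := by omega
    rw [e1, e2, mxT, hT, Finset.erase_insert hM1R, ← decomp]

lemma caseB {S : Finset ℕ} (hne : S.Nonempty) (hpos : ∀ x ∈ S, 0 < x) (hE : ¬ Exc S)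
    (hc : ¬ (mn S + sb S ≤ mx S + 1)) :
    (frank S).sum id = S.sum id ∧ (frank S).card = S.card + 1 ∧
      (∀ x ∈ frank S, 0 < x) ∧ ¬ Exc (frank S) ∧ frank (frank S) = S := by
  set m := mn S with hm
  set M := mx S with hM
  set b := sb S with hb
  have f0 : 1 ≤ m := hpos _ (mn_mem hne)
  have f1 : m ≤ b := mn_le (sb_mem hne)
  have f2 : b ≤ M := le_mx (sb_mem hne)
  have f3 : m ≤ M := f1.trans f2
  have hc' : M + 2 ≤ m + b := by omega
  have g1 : 2 ≤ b := by
    by_contra hg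
    have hb1 : b = 1 := by omega
    have : m = 1 := by
      have := mn_le (sb_mem hne); omega
    omega
  have g2 : M + 3 ≤ 2 * b := by
    by_contra hg
    have hbm : m = b := by omega
    have hMb : M = 2 * b - 2 := by omega
    have hSI : S = Finset.Icc b M := by
      ext x
      simp only [Finset.mem_Icc]
      constructor
      · intro hx; constructor
        · have := mn_le hx; omega
        · exact le_mx hx
      · intro hx; exact sb_stair hne x hx.1 hx.2
    refine hE ⟨b - 1, by omega, Or.inr ?_⟩
    rw [hSI]
    congr 1 <;> omega
  have g3 : b - 1 ∉ S := sb_pred_not_mem hne (by omega)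
  have g4 : M + 1 - b ∉ S := fun h => by have := mn_le h; omega
  have g5 : M ∈ S := mx_mem hne
  set V := S.erase M with hV
  set U := insert (M + 1 - b) (insert (b - 1) V) with hU
  have hfS : frank S = U := by rw [frank, if_neg hc]
  have memV : ∀ x, x ∈ V ↔ x ∈ S ∧ x ≠ M := by
    intro x; simp only [hV, Finset.mem_erase]; tauto
  have memU : ∀ x, x ∈ U ↔ x = M + 1 - b ∨ x = b - 1 ∨ (x ∈ S ∧ x ≠ M) := by
    intro x; simp only [hU, Finset.mem_insert, memV]
  have hb1V : b - 1 ∉ V := fun h => g3 ((memV _).1 h).1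
  have hMbV : M + 1 - b ∉ insert (b - 1) V := by
    intro h
    rcases Finset.mem_insert.1 h with h | h
    · omega
    · exact g4 ((memV _).1 h).1
  have decomp : S = insert M V := (Finset.insert_erase g5).symm
  have hMV : M ∉ V := fun h => ((memV _).1 h).2 rfl
  have sumU : U.sum id = S.sum id := by
    rw [hU, Finset.sum_insert hMbV, Finset.sum_insert hb1V, decomp, Finset.sum_insert hMV]
    simp only [id]
    omega
  have cardU : U.card = S.card + 1 := by
    rw [hU, Finset.card_insert_of_notMem hMbV, Finset.card_insert_of_notMem hb1V, decomp,
      Finset.card_insert_of_notMem hMV]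
  have posU : ∀ x ∈ U, 0 < x := by
    intro x hx
    rcases (memU x).1 hx with h | h | h
    · omega
    · omega
    · exact hpos x h.1
  have hUne : U.Nonempty := ⟨M + 1 - b, (memU _).2 (Or.inl rfl)⟩
  have mxU : mx U = M - 1 := by
    refine le_antisymm (Finset.sup_le fun x hx => ?_) ?_
    · simp only [id]
      rcases (memU x).1 hx with h | h | h
      · omega
      · omega
      · have := le_mx h.1; omega
    · rcases Nat.lt_or_ge (b) M with h | h
      · exact le_mx ((memU _).2 (Or.inr (Or.inr ⟨sb_stair hne _ (by omega) (by omega), by omega⟩)))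
      · have hbM : b = M := by omega
        exact le_mx ((memU _).2 (Or.inr (Or.inl (by omega))))
  have mnU : mn U = M + 1 - b := by
    refine le_antisymm (mn_le ((memU _).2 (Or.inl rfl))) ?_
    have hmem := mn_mem hUne
    rcases (memU _).1 hmem with h | h | h
    · omega
    · omega
    · have := mn_le (S := S) h.1; omega
  have sbU : sb U ≤ b - 1 := by
    refine sb_le ⟨(memU _).2 (Or.inr (Or.inl rfl)), fun y h1 h2 => ?_⟩
    rw [mxU] at h2
    rcases eq_or_lt_of_le h1 with h1 | h1
    · exact (memU _).2 (Or.inr (Or.inl h1.symm))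
    · exact (memU _).2 (Or.inr (Or.inr ⟨sb_stair hne y (by omega) (by omega), by omega⟩))
  refine ⟨by rw [hfS]; exact sumU, by rw [hfS]; exact cardU, by rw [hfS]; exact posU, ?_, ?_⟩
  · rw [hfS]
    rintro ⟨k, hk, hcase | hcase⟩
    · have e1 : mn U = k := by rw [hcase]; exact mn_Icc (by omega)
      have e2 : mx U = 2 * k - 1 := by rw [hcase]; exact mx_Icc (by omega)
      omega
    · have e1 : mn U = k + 1 := by rw [hcase]; exact mn_Icc (by omega)
      have e2 : mx U = 2 * k := by rw [hcase]; exact mx_Icc (by omega)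
      omega
  · rw [hfS, frank, if_pos (by omega)]
    have e1 : mx U + 1 = M := by omega
    have e2 : mx U + 1 - mn U = b - 1 := by omega
    rw [e2, e1, mnU, hU, Finset.erase_insert hMbV, Finset.erase_insert hb1V, ← decomp]

lemma frank_spec {n : ℕ} (hn : 0 < n) {S : Finset ℕ} (hS : S ∈ Fn n) (hE : ¬ Exc S) :
    frank S ∈ Fn n ∧ ¬ Exc (frank S) ∧ frank (frank S) = S ∧
      ((-1 : ℤ) ^ (frank S).card + (-1 : ℤ) ^ S.card = 0) ∧ frank S ≠ S := by
  have hne := Fn_nonempty hn hS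
  have hpos := (mem_Fn.1 hS).1
  have hsum := (mem_Fn.1 hS).2
  by_cases hc : mn S + sb S ≤ mx S + 1
  · obtain ⟨h1, h2, h3, h4, h5⟩ := caseA hne hpos hE hc
    refine ⟨mem_Fn.2 ⟨h3, by rw [h1, hsum]⟩, h4, h5, ?_, ?_⟩
    · rw [← h2, pow_succ]; ring
    · intro h; rw [h] at h2; omega
  · obtain ⟨h1, h2, h3, h4, h5⟩ := caseB hne hpos hE hc
    refine ⟨mem_Fn.2 ⟨h3, by rw [h1, hsum]⟩, h4, h5, ?_, ?_⟩
    · rw [h2, pow_succ]; ring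
    · intro h; rw [h] at h2; omega

open scoped Classical in
lemma sum_Fn_eq_exc (n : ℕ) (hn : 0 < n) :
    ∑ S ∈ Fn n, (-1 : ℤ) ^ S.card = ∑ S ∈ (Fn n).filter Exc, (-1 : ℤ) ^ S.card := by
  rw [← Finset.sum_filter_add_sum_filter_not (Fn n) Exc (fun S => (-1 : ℤ) ^ S.card)]
  have h0 : ∑ S ∈ (Fn n).filter (fun S => ¬ Exc S), (-1 : ℤ) ^ S.card = 0 := by
    refine Finset.sum_involution (fun S _ => frank S) ?_ ?_ ?_ ?_
    · intro S hS
      obtain ⟨hS', hE⟩ := Finset.mem_filter.1 hS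
      have := (frank_spec hn hS' hE).2.2.2.1
      simpa [add_comm] using this
    · intro S hS _
      obtain ⟨hS', hE⟩ := Finset.mem_filter.1 hS
      exact (frank_spec hn hS' hE).2.2.2.2
    · intro S hS
      obtain ⟨hS', hE⟩ := Finset.mem_filter.1 hS
      exact Finset.mem_filter.2 ⟨(frank_spec hn hS' hE).1, (frank_spec hn hS' hE).2.1⟩
    · intro S hS
      obtain ⟨hS', hE⟩ := Finset.mem_filter.1 hS
      exact (frank_spec hn hS' hE).2.2.1
  rw [h0, add_zero]

lemma sum_Icc_mul_two (a b : ℕ) (ha : 0 < a) (h : a ≤ b) :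
    (∑ i ∈ Finset.Icc a b, i) * 2 = (a + b) * (b + 1 - a) := by
  have h1 : Finset.Icc a b = Finset.Ico a (b+1) := rfl
  have h2 := Finset.sum_range_id_mul_two (b+1)
  have h3 := Finset.sum_range_id_mul_two a
  have h4 : ∑ i ∈ Finset.range a, i + ∑ i ∈ Finset.Ico a (b+1), i = ∑ i ∈ Finset.range (b+1), i := by
    rw [Finset.range_eq_Ico, Finset.range_eq_Ico]
    exact Finset.sum_Ico_consecutive (fun i : ℕ => i) (Nat.zero_le _) (by omega)
  obtain ⟨d, rfl⟩ : ∃ d, a = d + 1 := ⟨a-1, by omega⟩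
  obtain ⟨c, rfl⟩ : ∃ c, b = d + c := ⟨b-d, by omega⟩
  have e1 : d + c + 1 - (d + 1) = c := by omega
  have e2 : d + c + 1 - 1 = d + c := by omega
  have e3 : d + 1 - 1 = d := by omega
  rw [h1, e1]
  rw [e2] at h2; rw [e3] at h3
  nlinarith [h2, h3, h4]

lemma E1_Fn {n k : ℕ} (hk : 0 < k) : Finset.Icc k (2*k-1) ∈ Fn n ↔ 2*n = k*(3*k-1) := by
  have hs := sum_Icc_mul_two k (2*k-1) hk (by omega)
  have e1 : k + (2*k-1) = 3*k-1 := by omega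
  have e2 : 2*k-1+1-k = k := by omega
  rw [e1, e2] at hs
  have hsum : (Finset.Icc k (2*k-1)).sum id * 2 = k * (3*k-1) := by
    show (∑ i ∈ Finset.Icc k (2*k-1), i) * 2 = _
    rw [hs]; ring
  rw [mem_Fn]
  constructor
  · rintro ⟨-, h2⟩
    omega
  · intro h
    refine ⟨fun x hx => ?_, ?_⟩
    · have := (Finset.mem_Icc.1 hx).1; omega
    · omega

lemma E2_Fn {n k : ℕ} (hk : 0 < k) : Finset.Icc (k+1) (2*k) ∈ Fn n ↔ 2*n = k*(3*k+1) := by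
  have hs := sum_Icc_mul_two (k+1) (2*k) (by omega) (by omega)
  have e1 : k+1 + 2*k = 3*k+1 := by omega
  have e2 : 2*k+1-(k+1) = k := by omega
  rw [e1, e2] at hs
  have hsum : (Finset.Icc (k+1) (2*k)).sum id * 2 = k * (3*k+1) := by
    show (∑ i ∈ Finset.Icc (k+1) (2*k), i) * 2 = _
    rw [hs]; ring
  rw [mem_Fn]
  constructor
  · rintro ⟨-, h2⟩
    omega
  · intro h
    refine ⟨fun x hx => ?_, ?_⟩
    · have := (Finset.mem_Icc.1 hx).1; omega
    · omega

lemma pent_eq1 {j k : ℕ} (hj : 0 < j) (hk : 0 < k) (h : j*(3*j-1) = k*(3*k-1)) : j = k := by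
  obtain ⟨a, rfl⟩ : ∃ a, j = a + 1 := ⟨j-1, by omega⟩
  obtain ⟨b, rfl⟩ : ∃ b, k = b + 1 := ⟨k-1, by omega⟩
  have e1 : 3*(a+1)-1 = 3*a+2 := by omega
  have e2 : 3*(b+1)-1 = 3*b+2 := by omega
  rw [e1, e2] at h
  rcases lt_trichotomy a b with h' | h' | h'
  · nlinarith
  · omega
  · nlinarith

lemma pent_eq2 {j k : ℕ} (hj : 0 < j) (hk : 0 < k) (h : j*(3*j+1) = k*(3*k+1)) : j = k := by
  rcases lt_trichotomy j k with h' | h' | h'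
  · nlinarith
  · omega
  · nlinarith

lemma pent_ne {j k : ℕ} (hj : 0 < j) (hk : 0 < k) : j*(3*j-1) ≠ k*(3*k+1) := by
  obtain ⟨a, rfl⟩ : ∃ a, j = a + 1 := ⟨j-1, by omega⟩
  have e1 : 3*(a+1)-1 = 3*a+2 := by omega
  rw [e1]
  intro h
  rcases Nat.lt_or_ge a k with h' | h'
  · nlinarith
  · nlinarith


open scoped Classical in
lemma filter_exc1 {n j : ℕ} (hj : 0 < j) (h : 2*n = j*(3*j-1)) :
    (Fn n).filter Exc = {Finset.Icc j (2*j-1)} := by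
  ext S
  simp only [Finset.mem_filter, Finset.mem_singleton]
  constructor
  · rintro ⟨hS, k, hk, rfl | rfl⟩
    · have h2 := (E1_Fn hk).1 hS
      have := pent_eq1 hj hk (by omega)
      subst this; rfl
    · have h2 := (E2_Fn hk).1 hS
      exact absurd (by omega : j*(3*j-1) = k*(3*k+1)) (pent_ne hj hk)
  · rintro rfl
    exact ⟨(E1_Fn hj).2 h, ⟨j, hj, Or.inl rfl⟩⟩

open scoped Classical in
lemma filter_exc2 {n j : ℕ} (hj : 0 < j) (h : 2*n = j*(3*j+1)) :
    (Fn n).filter Exc = {Finset.Icc (j+1) (2*j)} := by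
  ext S
  simp only [Finset.mem_filter, Finset.mem_singleton]
  constructor
  · rintro ⟨hS, k, hk, rfl | rfl⟩
    · have h2 := (E1_Fn hk).1 hS
      exact absurd (by omega : k*(3*k-1) = j*(3*j+1)) (pent_ne hk hj)
    · have h2 := (E2_Fn hk).1 hS
      have := pent_eq2 hk hj (by omega)
      subst this; rfl
  · rintro rfl
    exact ⟨(E2_Fn hj).2 h, ⟨j, hj, Or.inr rfl⟩⟩

open scoped Classical in
lemma filter_exc_empty {n : ℕ}
    (h : ¬ ∃ j : ℕ, 0 < j ∧ (2 * n = j * (3 * j - 1) ∨ 2 * n = j * (3 * j + 1))) :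
    (Fn n).filter Exc = ∅ := by
  rw [Finset.eq_empty_iff_forall_notMem]
  intro S hS
  obtain ⟨hS, k, hk, rfl | rfl⟩ := Finset.mem_filter.1 hS
  · exact h ⟨k, hk, Or.inl ((E1_Fn hk).1 hS)⟩
  · exact h ⟨k, hk, Or.inr ((E2_Fn hk).1 hS)⟩

lemma transfer (n : ℕ) :
    (evenDistinctsCount n : ℤ) - oddDistinctsCount n = ∑ S ∈ Fn n, (-1 : ℤ) ^ S.card := by
  classical
  have step2 : ∑ p ∈ Nat.Partition.distincts n, (-1 : ℤ) ^ (Multiset.card p.parts)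
      = ∑ S ∈ Fn n, (-1 : ℤ) ^ S.card := by
    refine Finset.sum_bij (fun p _ => p.parts.toFinset) ?_ ?_ ?_ ?_
    · intro p hp
      have hnd : p.parts.Nodup := by
        simpa [Nat.Partition.distincts] using hp
      refine mem_Fn.2 ⟨fun x hx => p.parts_pos (Multiset.mem_toFinset.1 hx), ?_⟩
      have : p.parts.toFinset.val = p.parts := by
        rw [Multiset.toFinset_val, Multiset.dedup_eq_self.2 hnd]
      show (p.parts.toFinset.val.map id).sum = n
      rw [this, Multiset.map_id, p.parts_sum]
    · intro p1 hp1 p2 hp2 he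
      have h1 : p1.parts.Nodup := by simpa [Nat.Partition.distincts] using hp1
      have h2 : p2.parts.Nodup := by simpa [Nat.Partition.distincts] using hp2
      have he' : p1.parts.toFinset = p2.parts.toFinset := he
      ext1
      calc p1.parts = p1.parts.toFinset.val := by
              rw [Multiset.toFinset_val, Multiset.dedup_eq_self.2 h1]
        _ = p2.parts.toFinset.val := by rw [he']
        _ = p2.parts := by rw [Multiset.toFinset_val, Multiset.dedup_eq_self.2 h2]
    · intro S hS
      obtain ⟨hpos, hsum⟩ := mem_Fn.1 hS
      refine ⟨⟨S.val, fun {i} hi => hpos i hi, ?_⟩, ?_, ?_⟩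
      · show S.val.sum = n
        have : (S.val.map id).sum = n := hsum
        rwa [Multiset.map_id] at this
      · simp only [Nat.Partition.distincts, Finset.mem_filter, Finset.mem_univ, true_and]
        exact S.nodup
      · exact Finset.val_toFinset S
    · intro p hp
      have hnd : p.parts.Nodup := by simpa [Nat.Partition.distincts] using hp
      rw [Multiset.toFinset_card_of_nodup hnd]
  have e1 : ∑ p ∈ (Nat.Partition.distincts n).filter (fun p => Even (Multiset.card p.parts)),
      (-1 : ℤ) ^ (Multiset.card p.parts) = (evenDistinctsCount n : ℤ) := by
    rw [Finset.sum_congr rfl (fun p hp => (Finset.mem_filter.1 hp).2.neg_one_pow)]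
    simp [evenDistinctsCount]
  have e2 : ∑ p ∈ (Nat.Partition.distincts n).filter (fun p => ¬ Even (Multiset.card p.parts)),
      (-1 : ℤ) ^ (Multiset.card p.parts) = -(oddDistinctsCount n : ℤ) := by
    rw [Finset.sum_congr rfl (fun p hp =>
      (Nat.not_even_iff_odd.1 (Finset.mem_filter.1 hp).2).neg_one_pow)]
    rw [Finset.sum_const]
    have : (Nat.Partition.distincts n).filter (fun p => ¬ Even (Multiset.card p.parts))
        = (Nat.Partition.distincts n).filter (fun p => Odd (Multiset.card p.parts)) :=
      Finset.filter_congr (fun p _ => Nat.not_even_iff_odd)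
    rw [this]
    simp [oddDistinctsCount]
  rw [← step2, ← Finset.sum_filter_add_sum_filter_not (Nat.Partition.distincts n)
    (fun p => Even (Multiset.card p.parts)), e1, e2]
  ring

end Franklin


/-- Franklin's combinatorial form of the pentagonal number theorem. -/
theorem franklin_pentagonal (n : ℕ) (hn : 0 < n) :
    (∀ j : ℕ, 0 < j → (2 * n = j * (3 * j - 1) ∨ 2 * n = j * (3 * j + 1)) →
        (evenDistinctsCount n : ℤ) - oddDistinctsCount n = (-1) ^ j) ∧
      ((¬ ∃ j : ℕ, 0 < j ∧ (2 * n = j * (3 * j - 1) ∨ 2 * n = j * (3 * j + 1))) →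
        (evenDistinctsCount n : ℤ) - oddDistinctsCount n = 0) := by
  classical
  have key := (Franklin.transfer n).trans (Franklin.sum_Fn_eq_exc n hn)
  constructor
  · intro j hj hcase
    rcases hcase with h | h
    · rw [key, Franklin.filter_exc1 hj h, Finset.sum_singleton]
      have hc : (Finset.Icc j (2*j-1)).card = j := by rw [Nat.card_Icc]; omega
      rw [hc]
    · rw [key, Franklin.filter_exc2 hj h, Finset.sum_singleton]
      have hc : (Finset.Icc (j+1) (2*j)).card = j := by rw [Nat.card_Icc]; omega
      rw [hc]
  · intro h
    rw [key, Franklin.filter_exc_empty h, Finset.sum_empty]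
end

section
/- For every positive integer n, the absolute value of the difference between the number of partitions of n with an even number of parts and the number of partitions of n with an odd number of parts equals the number of partitions of n into distinct odd parts. -/
open Finset


open Finset

namespace PartitionParityAux

open Multiset

/-- the odd part of `q` -/
def op (q : ℕ) : ℕ := q / 2 ^ q.factorization 2

/-- `q` belongs to class `o` at level `≥ a` -/
def cls (o a q : ℕ) : Prop := op q = o ∧ 2 ^ a * o ≤ q

instance (o a : ℕ) : DecidablePred (cls o a) := fun _ => instDecidableAnd

/-- level weight -/
def lw (P : Multiset ℕ) (o a : ℕ) : ℕ := (P.filter (cls o a)).sum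

lemma ordProj_mul_op (q : ℕ) : 2 ^ q.factorization 2 * op q = q :=
  Nat.ordProj_mul_ordCompl_eq_self q 2

lemma op_pos {q : ℕ} (hq : q ≠ 0) : 0 < op q := Nat.ordCompl_pos 2 hq

lemma op_odd {q : ℕ} (hq : q ≠ 0) : Odd (op q) := by
  rw [Nat.odd_iff, ← Nat.two_dvd_ne_zero]
  exact Nat.not_dvd_ordCompl Nat.prime_two hq

lemma op_dvd (q : ℕ) : op q ∣ q := Nat.ordCompl_dvd q 2

lemma op_two_pow_mul {o : ℕ} (ho : Odd o) (b : ℕ) : op (2 ^ b * o) = o := by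
  have ho0 : o ≠ 0 := by rintro rfl; simp [Nat.odd_iff] at ho
  have hfac : (2 ^ b * o).factorization 2 = b := by
    rw [Nat.factorization_mul (pow_ne_zero _ two_ne_zero) ho0,
      Nat.Prime.factorization_pow Nat.prime_two]
    have : o.factorization 2 = 0 :=
      Nat.factorization_eq_zero_of_not_dvd (by rw [Nat.two_dvd_ne_zero, Nat.odd_iff.mp ho])
    simp [this]
  rw [op, hfac, Nat.mul_div_cancel_left _ (pow_pos two_pos b)]

lemma op_of_odd {q : ℕ} (hq : Odd q) : op q = q := by
  simpa using op_two_pow_mul hq 0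

lemma cls_pow_mul {o : ℕ} (ho : Odd o) (a b : ℕ) : cls o a (2 ^ b * o) ↔ a ≤ b := by
  have ho0 : 0 < o := ho.pos
  constructor
  · rintro ⟨-, h2⟩
    have := (Nat.pow_le_pow_iff_right one_lt_two).mp (le_of_mul_le_mul_right h2 ho0)
    exact this
  · intro hab
    exact ⟨op_two_pow_mul ho b,
      Nat.mul_le_mul_right _ ((Nat.pow_le_pow_iff_right one_lt_two).mpr hab)⟩

lemma cls_elim {o a q : ℕ} (hq : q ≠ 0) (h : cls o a q) : ∃ b, a ≤ b ∧ q = 2 ^ b * o := by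
  obtain ⟨h1, h2⟩ := h
  refine ⟨q.factorization 2, ?_, by rw [← h1, ordProj_mul_op]⟩
  have hq' : q = 2 ^ q.factorization 2 * o := by rw [← h1, ordProj_mul_op]
  have ho : 0 < o := h1 ▸ op_pos hq
  rw [hq'] at h2
  exact (Nat.pow_le_pow_iff_right one_lt_two).mp (le_of_mul_le_mul_right h2 ho)

lemma cls_dvd {o a q : ℕ} (hq : q ≠ 0) (h : cls o a q) : 2 ^ a * o ∣ q := by
  obtain ⟨b, hab, rfl⟩ := cls_elim hq h
  exact mul_dvd_mul (pow_dvd_pow 2 hab) dvd_rfl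

lemma sum_le_sum {s t : Multiset ℕ} (h : s ≤ t) : s.sum ≤ t.sum := by
  obtain ⟨u, rfl⟩ := Multiset.le_iff_exists_add.mp h
  simp

lemma lw_le_sum (P : Multiset ℕ) (o a : ℕ) : lw P o a ≤ P.sum :=
  sum_le_sum (Multiset.filter_le _ _)

lemma lw_cons (P : Multiset ℕ) (q o a : ℕ) :
    lw (q ::ₘ P) o a = (if cls o a q then q else 0) + lw P o a := by
  rw [lw, Multiset.filter_cons, Multiset.sum_add, lw]
  split <;> simp

lemma dvd_lw (P : Multiset ℕ) (hpos : ∀ q ∈ P, q ≠ 0) (o a : ℕ) : 2 ^ a * o ∣ lw P o a := by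
  refine Multiset.dvd_sum fun q hq => ?_
  rw [Multiset.mem_filter] at hq
  exact cls_dvd (hpos q hq.1) hq.2

lemma two_mul_le_of_dvd_of_lt {d m : ℕ} (hdvd : d ∣ m) (hlt : d < m) : 2 * d ≤ m := by
  obtain ⟨k, rfl⟩ := hdvd
  have : 2 ≤ k := by nlinarith
  nlinarith

/-- a `bad` multiset has some class of weight at least 2 -/
def badM (P : Multiset ℕ) : Prop := ∃ o, 0 < o ∧ 2 * o ≤ lw P o 0

def omin (P : Multiset ℕ) (h : badM P) : ℕ := Nat.find h

lemma exists_amin (P : Multiset ℕ) (o : ℕ) : ∃ a, lw P o (a + 1) ≤ 2 ^ (a + 1) * o := by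
  rcases Nat.eq_zero_or_pos o with rfl | ho
  · refine ⟨0, ?_⟩
    have : ∀ q ∈ P.filter (cls 0 1), q = 0 := by
      intro q hq
      rw [Multiset.mem_filter] at hq
      by_contra hq0
      have := op_pos hq0
      rw [hq.2.1] at this
      omega
    simp [lw, Multiset.sum_eq_zero_iff.mpr this]
  · refine ⟨P.sum, le_trans (lw_le_sum _ _ _) ?_⟩
    calc P.sum ≤ 2 ^ P.sum := (Nat.lt_two_pow_self (n := P.sum)).le
    _ ≤ 2 ^ (P.sum + 1) := Nat.pow_le_pow_right two_pos (by omega)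
    _ ≤ 2 ^ (P.sum + 1) * o := Nat.le_mul_of_pos_right _ ho

def amin (P : Multiset ℕ) (o : ℕ) : ℕ := Nat.find (exists_amin P o)

def moveM (P : Multiset ℕ) (h : badM P) : Multiset ℕ :=
  if lw P (omin P h) (amin P (omin P h) + 1) = 0 then
    2 ^ (amin P (omin P h) + 1) * omin P h ::ₘ
      (P.erase (2 ^ amin P (omin P h) * omin P h)).erase (2 ^ amin P (omin P h) * omin P h)
  else
    2 ^ amin P (omin P h) * omin P h ::ₘ 2 ^ amin P (omin P h) * omin P h ::ₘ
      P.erase (2 ^ (amin P (omin P h) + 1) * omin P h)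

end PartitionParityAux
namespace PartitionParityAux
open Multiset

lemma omin_pos (P : Multiset ℕ) (h : badM P) : 0 < omin P h := (Nat.find_spec h).1

lemma omin_base (P : Multiset ℕ) (h : badM P) : 2 * omin P h ≤ lw P (omin P h) 0 :=
  (Nat.find_spec h).2

lemma lw_pos_elim {P : Multiset ℕ} {o a : ℕ} (hlw : lw P o a ≠ 0) : ∃ q ∈ P, cls o a q := by
  have hf : P.filter (cls o a) ≠ 0 := fun h0 => by simp [lw, h0] at hlw
  obtain ⟨q, hq⟩ := Multiset.exists_mem_of_ne_zero hf
  rw [Multiset.mem_filter] at hq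
  exact ⟨q, hq.1, hq.2⟩

lemma omin_odd (P : Multiset ℕ) (hpos : ∀ q ∈ P, q ≠ 0) (h : badM P) : Odd (omin P h) := by
  have h2 := omin_base P h
  have hne : lw P (omin P h) 0 ≠ 0 := by have := omin_pos P h; omega
  obtain ⟨q, hqP, hq⟩ := lw_pos_elim hne
  rw [← hq.1]
  exact op_odd (hpos q hqP)

lemma amin_spec (P : Multiset ℕ) (o : ℕ) :
    lw P o (amin P o + 1) ≤ 2 ^ (amin P o + 1) * o := Nat.find_spec (exists_amin P o)

lemma amin_min (P : Multiset ℕ) (o : ℕ) {b : ℕ} (hb : b < amin P o) :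
    2 ^ (b + 1) * o < lw P o (b + 1) := by
  have := Nat.find_min (exists_amin P o) hb
  omega

lemma chain (P : Multiset ℕ) (hpos : ∀ q ∈ P, q ≠ 0) (h : badM P) :
    2 ^ (amin P (omin P h) + 1) * omin P h ≤ lw P (omin P h) (amin P (omin P h)) := by
  set o := omin P h
  cases ha : amin P o with
  | zero => simpa using omin_base P h
  | succ b =>
      have hlt : 2 ^ (b + 1) * o < lw P o (b + 1) := amin_min P o (by omega)
      have hdvd : 2 ^ (b + 1) * o ∣ lw P o (b + 1) := dvd_lw P hpos o (b + 1)
      have := two_mul_le_of_dvd_of_lt hdvd hlt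
      calc 2 ^ (b + 1 + 1) * o = 2 * (2 ^ (b + 1) * o) := by ring
      _ ≤ lw P o (b + 1) := this

theorem moveM_spec (P : Multiset ℕ) (hpos : ∀ q ∈ P, q ≠ 0) (h : badM P) :
    (∀ q ∈ moveM P h, q ≠ 0) ∧ (moveM P h).sum = P.sum ∧ badM (moveM P h) ∧
      (moveM P h).card % 2 ≠ P.card % 2 ∧ ∀ h', moveM (moveM P h) h' = P := by
  have ho : 0 < omin P h := omin_pos P h
  have hodd : Odd (omin P h) := omin_odd P hpos h
  have hbase := omin_base P h
  set o := omin P h with homin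
  set a := amin P o with hamin
  set x := 2 ^ a * o with hx
  have hxpos : 0 < x := by positivity
  have hy : 2 ^ (a + 1) * o = 2 * x := by rw [hx]; ring
  have hchain : 2 * x ≤ lw P o a := by rw [← hy]; exact chain P hpos h
  have hclsx : ∀ c, cls o c x ↔ c ≤ a := fun c => cls_pow_mul hodd c a
  have hclsy : ∀ c, cls o c (2 * x) ↔ c ≤ a + 1 := by
    intro c; rw [← hy]; exact cls_pow_mul hodd c (a + 1)
  have hopx : op x = o := op_two_pow_mul hodd a
  have hopy : op (2 * x) = o := by rw [← hy]; exact op_two_pow_mul hodd (a + 1)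
  have hclsx' : ∀ o' ≠ o, ∀ c, ¬ cls o' c x := fun o' ho' c hc => ho' (hc.1.symm.trans hopx)
  have hclsy' : ∀ o' ≠ o, ∀ c, ¬ cls o' c (2 * x) := fun o' ho' c hc => ho' (hc.1.symm.trans hopy)
  by_cases hR : lw P o (a + 1) = 0
  -- MERGE case
  · have hkey : ∀ q ∈ P, cls o a q → q = x := by
      intro q hqP hq
      obtain ⟨b, hab, rfl⟩ := cls_elim (hpos q hqP) hq
      rcases eq_or_lt_of_le hab with rfl | hlt
      · rfl
      · exfalso
        have hq1 : cls o (a + 1) (2 ^ b * o) := (cls_pow_mul hodd _ _).mpr hlt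
        have hmem : (2 ^ b * o) ∈ P.filter (cls o (a + 1)) := Multiset.mem_filter.mpr ⟨hqP, hq1⟩
        have hle : 2 ^ b * o ≤ lw P o (a + 1) :=
          Multiset.single_le_sum (fun _ _ => Nat.zero_le _) _ hmem
        rw [hR] at hle
        have : 0 < 2 ^ b * o := by positivity
        omega
    set F := P.filter (cls o a) with hF
    have hFrep : F = Multiset.replicate F.card x :=
      Multiset.eq_replicate_card.mpr fun q hq => by
        rw [hF, Multiset.mem_filter] at hq; exact hkey q hq.1 hq.2
    have hsumF : lw P o a = F.card * x := by
      show (P.filter (cls o a)).sum = _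
      rw [← hF, hFrep]; simp [Multiset.sum_replicate, mul_comm]
    have hk2 : 2 ≤ F.card := by
      rw [hsumF] at hchain; nlinarith
    have hcount : 2 ≤ P.count x := by
      have : F.count x = P.count x := by
        rw [hF, Multiset.count_filter, if_pos ((hclsx a).mpr le_rfl)]
      rw [← this, hFrep, Multiset.count_replicate, if_pos rfl]
      exact hk2
    have hx1 : x ∈ P := Multiset.count_pos.mp (by omega)
    have hx2 : x ∈ P.erase x := by
      rw [← Multiset.count_pos, Multiset.count_erase_self]; omega
    set Q := (P.erase x).erase x with hQ
    have hPQ : P = x ::ₘ x ::ₘ Q := by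
      rw [hQ, Multiset.cons_erase hx2, Multiset.cons_erase hx1]
    have hmove : moveM P h = 2 * x ::ₘ Q := by
      rw [moveM, ← homin, ← hamin, if_pos hR, hy, ← hx, ← hQ]
    -- lw computations
    have hlwP : ∀ o' c, lw P o' c =
        (if cls o' c x then x else 0) + ((if cls o' c x then x else 0) + lw Q o' c) := by
      intro o' c; rw [hPQ, lw_cons, lw_cons]
    have hlwP' : ∀ o' c, lw (moveM P h) o' c = (if cls o' c (2 * x) then 2 * x else 0) + lw Q o' c := by
      intro o' c; rw [hmove, lw_cons]
    have E1 : ∀ o', o' ≠ o → ∀ c, lw (moveM P h) o' c = lw P o' c := by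
      intro o' ho' c
      rw [hlwP, hlwP', if_neg (hclsx' o' ho' c), if_neg (hclsy' o' ho' c)]
      omega
    have E2 : ∀ c, c ≤ a → lw (moveM P h) o c = lw P o c := by
      intro c hc
      rw [hlwP, hlwP', if_pos ((hclsx c).mpr hc), if_pos ((hclsy c).mpr (by omega))]
      ring
    have hQ0 : lw Q o (a + 1) = 0 := by
      have := hlwP o (a + 1)
      rw [if_neg (by rw [hclsx]; omega), hR] at this
      omega
    have E3 : lw (moveM P h) o (a + 1) = 2 * x := by
      rw [hlwP', if_pos ((hclsy (a + 1)).mpr le_rfl), hQ0]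
      omega
    -- conclusions
    have hQle : Q ≤ P := le_trans (Multiset.erase_le _ _) (Multiset.erase_le _ _)
    have cpos : ∀ q ∈ moveM P h, q ≠ 0 := by
      intro q hq
      rw [hmove, Multiset.mem_cons] at hq
      rcases hq with rfl | hq
      · omega
      · exact hpos q (Multiset.mem_of_le hQle hq)
    have csum : (moveM P h).sum = P.sum := by
      rw [hmove, hPQ, Multiset.sum_cons, Multiset.sum_cons, Multiset.sum_cons]; ring
    have cbad : badM (moveM P h) := ⟨o, ho, by rw [E2 0 (Nat.zero_le a)]; exact hbase⟩
    have ccard : (moveM P h).card % 2 ≠ P.card % 2 := by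
      rw [hmove, hPQ]; simp only [Multiset.card_cons]; omega
    refine ⟨cpos, csum, cbad, ccard, ?_⟩
    intro h'
    have heo : omin (moveM P h) h' = o := by
      rw [omin]; refine (Nat.find_eq_iff h').mpr ?_
      refine ⟨⟨ho, by rw [E2 0 (Nat.zero_le a)]; exact hbase⟩, ?_⟩
      intro o'' ho''
      have hne : o'' ≠ o := by omega
      rw [E1 o'' hne]
      exact Nat.find_min h ho''
    have hea : amin (moveM P h) o = a := by
      rw [amin, Nat.find_eq_iff]
      constructor
      · rw [E3, hy]
      · intro b hb
        rw [E2 (b + 1) (by omega)]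
        have := amin_min P o (hamin ▸ hb)
        omega
    rw [moveM, heo, hea, if_neg (by rw [E3]; omega), hy, ← hx, hmove,
      Multiset.erase_cons_head, hPQ]
  -- SPLIT case
  · have hxley : ∀ q ∈ P.filter (cls o (a + 1)), 2 * x ≤ q := by
      intro q hq
      rw [Multiset.mem_filter] at hq
      rw [← hy]
      exact hq.2.2
    obtain ⟨q, hqP, hq⟩ := lw_pos_elim hR
    have hqmem : q ∈ P.filter (cls o (a + 1)) := Multiset.mem_filter.mpr ⟨hqP, hq⟩
    have hqle : q ≤ lw P o (a + 1) := Multiset.single_le_sum (fun _ _ => Nat.zero_le _) _ hqmem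
    have hqy : q = 2 * x := by
      have h1 := hxley q hqmem
      have h2 := amin_spec P o
      rw [← hamin, hy] at h2
      omega
    set F := P.filter (cls o (a + 1)) with hF
    have hFy : F = {2 * x} := by
      have hcons : F = q ::ₘ F.erase q := (Multiset.cons_erase hqmem).symm
      have hsum : F.sum ≤ 2 * x := by
        have h2 := amin_spec P o
        rw [← hamin, hy] at h2
        rw [hF]; exact h2
      have hsplit := congrArg Multiset.sum hcons
      rw [Multiset.sum_cons] at hsplit
      have hrest : (F.erase q).sum = 0 := by omega
      have hzero : F.erase q = 0 := by
        by_contra h0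
        obtain ⟨z, hz⟩ := Multiset.exists_mem_of_ne_zero h0
        have hzF : z ∈ F := Multiset.mem_of_mem_erase hz
        have hz1 : 2 * x ≤ z := hxley z hzF
        have hz2 : z = 0 := Multiset.sum_eq_zero_iff.mp hrest z hz
        omega
      rw [hcons, hzero, hqy]
      rfl
    have hyP : (2 * x) ∈ P := by
      have : (2 * x) ∈ F := by rw [hFy]; exact Multiset.mem_singleton_self _
      exact Multiset.mem_of_mem_filter this
    have hlwa1 : lw P o (a + 1) = 2 * x := by
      show (P.filter (cls o (a + 1))).sum = _
      rw [← hF, hFy]; simp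
    set Q := P.erase (2 * x) with hQ
    have hPQ : P = 2 * x ::ₘ Q := (Multiset.cons_erase hyP).symm
    have hmove : moveM P h = x ::ₘ x ::ₘ Q := by
      rw [moveM, ← homin, ← hamin, if_neg hR, hy, ← hx, ← hQ]
    have hlwP : ∀ o' c, lw P o' c = (if cls o' c (2 * x) then 2 * x else 0) + lw Q o' c := by
      intro o' c; rw [hPQ, lw_cons]
    have hlwP' : ∀ o' c, lw (moveM P h) o' c =
        (if cls o' c x then x else 0) + ((if cls o' c x then x else 0) + lw Q o' c) := by
      intro o' c; rw [hmove, lw_cons, lw_cons]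
    have E1 : ∀ o', o' ≠ o → ∀ c, lw (moveM P h) o' c = lw P o' c := by
      intro o' ho' c
      rw [hlwP, hlwP', if_neg (hclsx' o' ho' c), if_neg (hclsy' o' ho' c)]
      omega
    have E2 : ∀ c, c ≤ a → lw (moveM P h) o c = lw P o c := by
      intro c hc
      rw [hlwP, hlwP', if_pos ((hclsx c).mpr hc), if_pos ((hclsy c).mpr (by omega))]
      ring
    have hQ0 : lw Q o (a + 1) = 0 := by
      have := hlwP o (a + 1)
      rw [if_pos ((hclsy (a + 1)).mpr le_rfl), hlwa1] at this
      omega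
    have E3 : lw (moveM P h) o (a + 1) = 0 := by
      rw [hlwP', if_neg (by rw [hclsx]; omega), hQ0]
    have hQle : Q ≤ P := Multiset.erase_le _ _
    have cpos : ∀ q ∈ moveM P h, q ≠ 0 := by
      intro q hq
      rw [hmove, Multiset.mem_cons, Multiset.mem_cons] at hq
      rcases hq with rfl | rfl | hq
      · omega
      · omega
      · exact hpos q (Multiset.mem_of_le hQle hq)
    have csum : (moveM P h).sum = P.sum := by
      rw [hmove, hPQ, Multiset.sum_cons, Multiset.sum_cons, Multiset.sum_cons]; ring
    have cbad : badM (moveM P h) := ⟨o, ho, by rw [E2 0 (Nat.zero_le a)]; exact hbase⟩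
    have ccard : (moveM P h).card % 2 ≠ P.card % 2 := by
      rw [hmove, hPQ]; simp only [Multiset.card_cons]; omega
    refine ⟨cpos, csum, cbad, ccard, ?_⟩
    intro h'
    have heo : omin (moveM P h) h' = o := by
      rw [omin]; refine (Nat.find_eq_iff h').mpr ?_
      refine ⟨⟨ho, by rw [E2 0 (Nat.zero_le a)]; exact hbase⟩, ?_⟩
      intro o'' ho''
      have hne : o'' ≠ o := by omega
      rw [E1 o'' hne]
      exact Nat.find_min h ho''
    have hea : amin (moveM P h) o = a := by
      rw [amin, Nat.find_eq_iff]
      constructor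
      · rw [E3]; positivity
      · intro b hb
        rw [E2 (b + 1) (by omega)]
        have := amin_min P o (hamin ▸ hb)
        omega
    rw [moveM, heo, hea, if_pos E3, hy, ← hx, hmove,
      Multiset.erase_cons_head, Multiset.erase_cons_head, hPQ]

end PartitionParityAux
namespace PartitionParityAux
open Multiset

lemma badM_iff (P : Multiset ℕ) (hpos : ∀ q ∈ P, q ≠ 0) :
    badM P ↔ ¬((∀ q ∈ P, ¬Even q) ∧ P.Nodup) := by
  constructor
  · rintro ⟨o, ho, hlw⟩ ⟨hodd, hnodup⟩
    have hall : ∀ q ∈ P.filter (cls o 0), q = o := by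
      intro q hq
      rw [Multiset.mem_filter] at hq
      have hq' : Odd q := Nat.not_even_iff_odd.mp (hodd q hq.1)
      rw [← hq.2.1, op_of_odd hq']
    have hrep : P.filter (cls o 0) = Multiset.replicate (P.filter (cls o 0)).card o :=
      Multiset.eq_replicate_card.mpr hall
    have hcard : (P.filter (cls o 0)).card ≤ 1 := by
      have h1 := (Multiset.nodup_iff_count_le_one.mp (hnodup.filter (cls o 0))) o
      rw [hrep, Multiset.count_replicate, if_pos rfl] at h1
      exact h1
    have hsum : lw P o 0 = (P.filter (cls o 0)).card * o := by
      show (P.filter (cls o 0)).sum = _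
      conv_lhs => rw [hrep]
      rw [Multiset.sum_replicate, smul_eq_mul]
    nlinarith
  · intro hng
    rw [not_and_or] at hng
    have hbase : ∀ q ∈ P, cls (op q) 0 q := by
      intro q hq
      exact ⟨rfl, by simpa using Nat.le_of_dvd (Nat.pos_of_ne_zero (hpos q hq)) (op_dvd q)⟩
    rcases hng with hev | hnd
    · push_neg at hev
      obtain ⟨q, hqP, hq⟩ := hev
      have hq0 : q ≠ 0 := hpos q hqP
      refine ⟨op q, op_pos hq0, ?_⟩
      have hmem : q ∈ P.filter (cls (op q) 0) := Multiset.mem_filter.mpr ⟨hqP, hbase q hqP⟩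
      have hle : q ≤ lw P (op q) 0 :=
        Multiset.single_le_sum (fun _ _ => Nat.zero_le _) _ hmem
      have hv : 1 ≤ q.factorization 2 := by
        by_contra hv0
        have h0 : q.factorization 2 = 0 := by omega
        have hopq : op q = q := by rw [op, h0]; simp
        have : Odd q := hopq ▸ op_odd hq0
        exact (Nat.not_even_iff_odd.mpr this) hq
      have h2 : 2 * op q ≤ q := by
        conv_rhs => rw [← ordProj_mul_op q]
        have h22 : (2:ℕ) ≤ 2 ^ q.factorization 2 := by
          calc (2:ℕ) = 2 ^ 1 := (pow_one 2).symm
          _ ≤ _ := Nat.pow_le_pow_right two_pos hv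
        nlinarith [op_pos hq0]
      omega
    · rw [Multiset.nodup_iff_count_le_one] at hnd
      push_neg at hnd
      obtain ⟨q, hq⟩ := hnd
      have hc2 : 2 ≤ P.count q := by omega
      have hqP : q ∈ P := Multiset.count_pos.mp (by omega)
      have hq0 : q ≠ 0 := hpos q hqP
      refine ⟨op q, op_pos hq0, ?_⟩
      have hrle : Multiset.replicate 2 q ≤ P.filter (cls (op q) 0) := by
        rw [Multiset.le_iff_count]
        intro b
        rw [Multiset.count_replicate]
        split
        · next hb =>
            subst hb
            rw [Multiset.count_filter, if_pos (hbase q hqP)]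
            exact hc2
        · exact Nat.zero_le _
      have hle : 2 * q ≤ lw P (op q) 0 := by
        have := sum_le_sum hrle
        rw [Multiset.sum_replicate, smul_eq_mul] at this
        exact this
      have hoq : op q ≤ q := Nat.le_of_dvd (Nat.pos_of_ne_zero hq0) (op_dvd q)
      omega

lemma odd_parts_card_parity :
    ∀ P : Multiset ℕ, (∀ q ∈ P, ¬Even q) → (Even P.sum ↔ Even (Multiset.card P)) := by
  intro P
  induction P using Multiset.induction_on with
  | empty => intro _; simp
  | cons a s ih =>
    intro h
    have ha := h a (Multiset.mem_cons_self _ _)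
    have ihs := ih fun q hq => h q (Multiset.mem_cons_of_mem hq)
    rw [Multiset.sum_cons, Multiset.card_cons, Nat.even_add, Nat.even_add_one]
    tauto

variable {n : ℕ}

lemma parts_ne_zero (p : n.Partition) : ∀ q ∈ p.parts, q ≠ 0 :=
  fun _ hq => (p.parts_pos hq).ne'

open scoped Classical in
noncomputable def pmove (p : n.Partition) : n.Partition :=
  if h : badM p.parts then
    { parts := moveM p.parts h
      parts_pos := fun {q} hq =>
        Nat.pos_of_ne_zero ((moveM_spec p.parts (parts_ne_zero p) h).1 q hq)
      parts_sum := by rw [(moveM_spec p.parts (parts_ne_zero p) h).2.1, p.parts_sum] }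
  else p

lemma pmove_parts (p : n.Partition) (h : badM p.parts) : (pmove p).parts = moveM p.parts h := by
  rw [pmove, dif_pos h]

lemma pmove_bad (p : n.Partition) (h : badM p.parts) : badM (pmove p).parts := by
  rw [pmove_parts p h]; exact (moveM_spec p.parts (parts_ne_zero p) h).2.2.1

lemma pmove_parity (p : n.Partition) (h : badM p.parts) :
    Multiset.card (pmove p).parts % 2 ≠ Multiset.card p.parts % 2 := by
  rw [pmove_parts p h]; exact (moveM_spec p.parts (parts_ne_zero p) h).2.2.2.1

lemma pmove_pmove (p : n.Partition) (h : badM p.parts) : pmove (pmove p) = p := by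
  have h' : badM (pmove p).parts := pmove_bad p h
  apply Nat.Partition.ext
  rw [pmove_parts _ h']
  have hspec := (moveM_spec p.parts (parts_ne_zero p) h).2.2.2.2
  revert h'
  rw [pmove_parts p h]
  exact fun h' => hspec h'

lemma badM_iff_not_mem (p : n.Partition) :
    badM p.parts ↔ p ∉ Nat.Partition.oddDistincts n := by
  rw [badM_iff p.parts (parts_ne_zero p), Nat.Partition.oddDistincts, Finset.mem_inter,
    Nat.Partition.odds, Nat.Partition.restricted, Nat.Partition.distincts, Finset.mem_filter, Finset.mem_filter]
  simp only [Finset.mem_univ, true_and]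
  try tauto

end PartitionParityAux


open PartitionParityAux in
/-- The absolute value of the difference between the number of partitions of `n` with an
even number of parts and those with an odd number of parts equals the number of partitions
of `n` into distinct odd parts. -/
theorem abs_even_sub_odd_parts_eq_card_oddDistincts (n : ℕ) (hn : 0 < n) :
    (((Finset.univ.filter fun p : Nat.Partition n => Even p.parts.card).card : ℤ)
        - ((Finset.univ.filter fun p : Nat.Partition n => Odd p.parts.card).card : ℤ)).natAbs
      = (Nat.Partition.oddDistincts n).card := by
  classical
  set G := Nat.Partition.oddDistincts n with hG
  set E := Finset.univ.filter fun p : Nat.Partition n => Even (Multiset.card p.parts) with hE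
  set O := Finset.univ.filter fun p : Nat.Partition n => Odd (Multiset.card p.parts) with hO
  have hbij : (E.filter (· ∉ G)).card = (O.filter (· ∉ G)).card := by
    apply Finset.card_bij' (fun p _ => pmove p) (fun p _ => pmove p)
    · intro p hp
      simp only [hE, hO, Finset.mem_filter, Finset.mem_univ, true_and] at hp ⊢
      have hbad : badM p.parts := (badM_iff_not_mem p).mpr hp.2
      have hpar := pmove_parity p hbad
      constructor
      · rw [Nat.even_iff] at hp; rw [Nat.odd_iff]
        omega
      · exact (badM_iff_not_mem _).mp (pmove_bad p hbad)
    · intro p hp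
      simp only [hE, hO, Finset.mem_filter, Finset.mem_univ, true_and] at hp ⊢
      have hbad : badM p.parts := (badM_iff_not_mem p).mpr hp.2
      have hpar := pmove_parity p hbad
      constructor
      · rw [Nat.odd_iff] at hp; rw [Nat.even_iff]
        omega
      · exact (badM_iff_not_mem _).mp (pmove_bad p hbad)
    · intro p hp
      simp only [hE, Finset.mem_filter, Finset.mem_univ, true_and] at hp
      exact pmove_pmove p ((badM_iff_not_mem p).mpr hp.2)
    · intro p hp
      simp only [hO, Finset.mem_filter, Finset.mem_univ, true_and] at hp
      exact pmove_pmove p ((badM_iff_not_mem p).mpr hp.2)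
  have hEsplit : (E.filter (· ∈ G)).card + (E.filter (· ∉ G)).card = E.card :=
    Finset.card_filter_add_card_filter_not (· ∈ G)
  have hOsplit : (O.filter (· ∈ G)).card + (O.filter (· ∉ G)).card = O.card :=
    Finset.card_filter_add_card_filter_not (· ∈ G)
  have hparity : ∀ p : Nat.Partition n, p ∈ G →
      (Even (Multiset.card p.parts) ↔ Even n) := by
    intro p hp
    have hodd : ∀ q ∈ p.parts, ¬Even q := by
      rw [hG, Nat.Partition.oddDistincts, Finset.mem_inter, Nat.Partition.odds, Nat.Partition.restricted,
        Finset.mem_filter] at hp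
      exact hp.1.2
    conv_rhs => rw [← p.parts_sum]
    exact (odd_parts_card_parity p.parts hodd).symm
  by_cases hne : Even n
  · have h1 : E.filter (· ∈ G) = G := by
      ext p
      simp only [hE, Finset.mem_filter, Finset.mem_univ, true_and]
      constructor
      · exact fun h => h.2
      · exact fun h => ⟨(hparity p h).mpr hne, h⟩
    have h2 : O.filter (· ∈ G) = ∅ := by
      ext p
      simp only [hO, Finset.mem_filter, Finset.mem_univ, true_and, Finset.notMem_empty,
        iff_false, not_and]
      intro hodd hpG
      rw [Nat.odd_iff] at hodd
      have := (hparity p hpG).mpr hne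
      rw [Nat.even_iff] at this
      omega
    rw [h1] at hEsplit
    rw [h2] at hOsplit
    simp only [Finset.card_empty, zero_add] at hOsplit
    have hcalc : ((E.card : ℤ) - O.card) = (G.card : ℤ) := by omega
    rw [hcalc]
    exact Int.natAbs_natCast _
  · have h1 : E.filter (· ∈ G) = ∅ := by
      ext p
      simp only [hE, Finset.mem_filter, Finset.mem_univ, true_and, Finset.notMem_empty,
        iff_false, not_and]
      intro heven hpG
      exact hne ((hparity p hpG).mp heven)
    have h2 : O.filter (· ∈ G) = G := by
      ext p
      simp only [hO, Finset.mem_filter, Finset.mem_univ, true_and]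
      constructor
      · exact fun h => h.2
      · intro h
        refine ⟨?_, h⟩
        exact Nat.not_even_iff_odd.mp fun hc => hne ((hparity p h).mp hc)
    rw [h1] at hEsplit
    rw [h2] at hOsplit
    simp only [Finset.card_empty, zero_add] at hEsplit
    have hcalc : ((E.card : ℤ) - O.card) = -(G.card : ℤ) := by omega
    rw [hcalc, Int.natAbs_neg]
    exact Int.natAbs_natCast _
end

section
/- For |z| < 1, ∏_{k=1}^∞ (1−z^k)³ = Σ_{k=0}^∞ (−1)^k (2k+1) z^{k(k+1)/2}. -/
open Filter Finset Topology

namespace JacobiCube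

noncomputable section

/-- triangular numbers: tri n = 0+1+...+(n-1) -/
def tri (n : ℕ) : ℕ := ∑ i ∈ range n, i

lemma tri_succ (n : ℕ) : tri (n + 1) = tri n + n := Finset.sum_range_succ _ n

lemma tri_cast (n : ℕ) : 2 * (tri n : ℤ) = n * (n - 1) := by
  induction n with
  | zero => simp [tri]
  | succ k ih => rw [tri_succ]; push_cast; push_cast at ih; ring_nf; ring_nf at ih; nlinarith [ih]

/-- integer triangular: eps a = a(a+1)/2 -/
def eps (a : ℤ) : ℤ := a * (a + 1) / 2

lemma eps_two (a : ℤ) : 2 * eps a = a * (a + 1) := by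
  have h : (2:ℤ) ∣ a * (a + 1) := (Int.even_mul_succ_self a).two_dvd
  exact Int.mul_ediv_cancel' h

variable (q : ℂ)

/-- partial Euler products -/
def P (m : ℕ) : ℂ := ∏ i ∈ range m, (1 - q ^ (i + 1))

/-- Gaussian binomial as a complex number -/
def B (m j : ℕ) : ℂ := if j ≤ m then P q m / (P q j * P q (m - j)) else 0

variable {q}

lemma norm_pow_lt (hq : ‖q‖ < 1) (i : ℕ) : ‖q ^ (i + 1)‖ < 1 := by
  rw [norm_pow]
  exact pow_lt_one₀ (norm_nonneg q) hq (Nat.succ_ne_zero i)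

lemma one_sub_ne (hq : ‖q‖ < 1) (i : ℕ) : 1 - q ^ (i + 1) ≠ 0 := by
  intro h
  have h2 : q ^ (i+1) = 1 := by linear_combination -h
  have := norm_pow_lt hq i
  rw [h2] at this; simp at this

lemma P_ne (hq : ‖q‖ < 1) (m : ℕ) : P q m ≠ 0 :=
  Finset.prod_ne_zero_iff.mpr fun i _ => one_sub_ne hq i

lemma P_zero : P q 0 = 1 := by simp [P]

lemma P_succ (m : ℕ) : P q (m + 1) = P q m * (1 - q ^ (m + 1)) := Finset.prod_range_succ _ m

lemma B_zero (hq : ‖q‖ < 1) (m : ℕ) : B q m 0 = 1 := by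
  rw [B, if_pos (Nat.zero_le m), P_zero, Nat.sub_zero, one_mul, div_self (P_ne hq m)]

lemma B_self (hq : ‖q‖ < 1) (m : ℕ) : B q m m = 1 := by
  rw [B, if_pos le_rfl, Nat.sub_self, P_zero, mul_one, div_self (P_ne hq m)]

lemma B_of_gt {m j : ℕ} (h : m < j) : B q m j = 0 := by
  simp [B, Nat.not_le.mpr h]

lemma B_pascal (hq : ‖q‖ < 1) (m j : ℕ) (hj : j ≤ m) :
    B q (m + 1) (j + 1) = B q m (j + 1) + q ^ (m - j) * B q m j := by
  rcases eq_or_lt_of_le hj with rfl | hjm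
  · rw [B_self hq, B_of_gt (Nat.lt_succ_self j), B_self hq]
    simp
  · obtain ⟨a, rfl⟩ : ∃ a, m = j + (a + 1) := ⟨m - j - 1, by omega⟩
    have e1 : j + (a + 1) + 1 - (j + 1) = a + 1 := by omega
    have e2 : j + (a + 1) - (j + 1) = a := by omega
    have e3 : j + (a + 1) - j = a + 1 := by omega
    rw [B, B, B, if_pos (by omega), if_pos (by omega), if_pos (by omega), e1, e2, e3]
    have h1 := P_ne (q := q) hq j
    have h2 := P_ne (q := q) hq (j + 1)
    have h3 := P_ne (q := q) hq (a + 1)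
    have h4 := P_ne (q := q) hq a
    have h5 := one_sub_ne (q := q) hq j
    have h6 := one_sub_ne (q := q) hq a
    rw [show j + (a+1) + 1 = (j + (a+1)) + 1 from rfl, P_succ (j + (a+1)), P_succ a, P_succ j]
    field_simp
    rw [show j + (a + 1) + 1 = (a + 1) + (j + 1) from by omega, pow_add]
    ring

lemma tri_zero : tri 0 = 0 := rfl

lemma rothe (hq : ‖q‖ < 1) (x t : ℂ) (m : ℕ) :
    ∏ i ∈ range m, (x + t * q ^ i) =
      ∑ j ∈ range (m + 1), q ^ tri j * B q m j * t ^ j * x ^ (m - j) := by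
  induction m with
  | zero => simp [tri_zero, B_zero hq]
  | succ m ih =>
    have hA : (∑ j ∈ range (m+1), q ^ (tri j + j) * B q m (j+1) * t^(j+1) * x^(m-j)) + x ^ (m+1)
        = x * ∑ j ∈ range (m+1), q ^ tri j * B q m j * t ^ j * x ^ (m - j) := by
      rw [Finset.mul_sum,
        Finset.sum_range_succ' (fun j => x * (q ^ tri j * B q m j * t ^ j * x ^ (m - j))) m]
      congr 1
      · rw [Finset.sum_range_succ, B_of_gt (Nat.lt_succ_self m)]
        simp only [mul_zero, zero_mul, add_zero]
        apply Finset.sum_congr rfl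
        intro j hj
        have hjm : j < m := mem_range.mp hj
        rw [tri_succ, show m - j = (m - (j+1)) + 1 from by omega, pow_succ]
        ring
      · simp only [tri_zero, pow_zero, B_zero hq, one_mul, mul_one, Nat.sub_zero, pow_succ]
        ring
    have hB : (∑ j ∈ range (m+1), q ^ (tri j + m) * B q m j * t^(j+1) * x^(m-j))
        = (t * q ^ m) * ∑ j ∈ range (m+1), q ^ tri j * B q m j * t ^ j * x ^ (m - j) := by
      rw [Finset.mul_sum]
      apply Finset.sum_congr rfl
      intro j hj
      rw [pow_add]
      ring
    rw [prod_range_succ, ih,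
      Finset.sum_range_succ' (fun j => q ^ tri j * B q (m+1) j * t ^ j * x ^ (m + 1 - j)) (m+1)]
    have hsplit : ∀ j ∈ range (m+1),
        q ^ tri (j+1) * B q (m+1) (j+1) * t^(j+1) * x^(m+1-(j+1))
        = q ^ (tri j + j) * B q m (j+1) * t^(j+1) * x^(m-j)
          + q ^ (tri j + m) * B q m j * t^(j+1) * x^(m-j) := by
      intro j hj
      have hjm : j ≤ m := by have := mem_range.mp hj; omega
      rw [B_pascal hq m j hjm, tri_succ, show m + 1 - (j+1) = m - j from by omega,
        show q ^ (tri j + m) = q ^ (tri j + j) * q ^ (m - j) from by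
          rw [← pow_add]; congr 1; omega]
      ring
    rw [Finset.sum_congr rfl hsplit, Finset.sum_add_distrib]
    have hf0 : q ^ tri 0 * B q (m+1) 0 * t ^ 0 * x ^ (m + 1 - 0) = x ^ (m+1) := by
      simp [tri_zero, B_zero hq]
    rw [hf0]
    linear_combination -hA - hB

/-- coefficients of the finite Jacobi polynomial -/
def coeff (q : ℂ) (n j : ℕ) : ℂ := (-1) ^ (j + n) * q ^ eps ((j : ℤ) - (n : ℤ)) * B q (2 * n) j

lemma finite_jacobi (hq : ‖q‖ < 1) (hq0 : q ≠ 0) (m : ℕ) (w : ℂ) :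
    (∏ i ∈ range (m + 1), (w - q ^ i)) * ∏ i ∈ range (m + 1), (1 - w * q ^ (i + 1)) =
      ∑ j ∈ range (2 * (m + 1) + 1), coeff q (m + 1) j * w ^ j := by
  set n := m + 1 with hn
  have key := rothe hq (q ^ m) (-w) (2 * n)
  have hsplit : ∏ i ∈ range (2 * n), (q ^ m + -w * q ^ i)
      = (∏ i ∈ range n, (q ^ m + -w * q ^ i)) * ∏ i ∈ range n, (q ^ m + -w * q ^ (n + i)) := by
    rw [two_mul, Finset.prod_range_add]
  have blockA : ∏ i ∈ range n, (q ^ m + -w * q ^ i)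
      = ((-1) ^ n * q ^ tri n) * ∏ i ∈ range n, (w - q ^ i) := by
    rw [← Finset.prod_range_reflect (fun i => q ^ m + -w * q ^ i) n]
    have : ∀ i ∈ range n, q ^ m + -w * q ^ (n - 1 - i) = (-1 * q ^ (m - i)) * (w - q ^ i) := by
      intro i hi
      have him : i ≤ m := by have := mem_range.mp hi; omega
      rw [show n - 1 - i = m - i from by omega,
        show (q : ℂ) ^ m = q ^ (m - i) * q ^ i from by rw [← pow_add]; congr 1; omega]
      ring
    rw [Finset.prod_congr rfl this, Finset.prod_mul_distrib, Finset.prod_mul_distrib,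
      Finset.prod_const, Finset.prod_pow_eq_pow_sum]
    have hs : ∑ i ∈ range n, (m - i) = tri n := by
      have := Finset.sum_range_reflect (fun i => i) n
      simp only [tri]
      rw [← this]
      apply Finset.sum_congr rfl
      intro i hi
      have := mem_range.mp hi
      omega
    rw [hs]
    simp [Finset.card_range]
  have blockB : ∏ i ∈ range n, (q ^ m + -w * q ^ (n + i))
      = q ^ (m * n) * ∏ i ∈ range n, (1 - w * q ^ (i + 1)) := by
    have : ∀ i ∈ range n, q ^ m + -w * q ^ (n + i) = q ^ m * (1 - w * q ^ (i + 1)) := by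
      intro i hi
      rw [show n + i = m + (i + 1) from by omega, pow_add]
      ring
    rw [Finset.prod_congr rfl this, Finset.prod_mul_distrib, Finset.prod_const, ← pow_mul]
    simp [Finset.card_range]
  have hF : ((-1 : ℂ) ^ n * q ^ (tri n + m * n)) ≠ 0 :=
    mul_ne_zero (pow_ne_zero _ (by norm_num)) (pow_ne_zero _ hq0)
  apply mul_left_cancel₀ hF
  have hR : ∀ j ∈ range (2 * n + 1),
      q ^ tri j * B q (2 * n) j * (-w) ^ j * (q ^ m) ^ (2 * n - j)
      = ((-1) ^ n * q ^ (tri n + m * n)) * (coeff q n j * w ^ j) := by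
    intro j hj
    have hj2 : j ≤ 2 * n := by have := mem_range.mp hj; omega
    rw [coeff, ← pow_mul]
    have hsign : (-w) ^ j = (-1 : ℂ) ^ j * w ^ j := by
      rw [neg_pow]
    have hsign2 : ((-1 : ℂ) ^ n * ((-1 : ℂ) ^ (j + n))) = (-1 : ℂ) ^ j := by
      rw [← pow_add, show n + (j + n) = j + 2 * n from by ring, pow_add, pow_mul]
      norm_num
    have hqexp : (q ^ tri j * q ^ (m * (2 * n - j)) : ℂ)
        = q ^ (tri n + m * n) * q ^ eps ((j : ℤ) - (n : ℤ)) := by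
      rw [← zpow_natCast q (tri j), ← zpow_natCast q (m * (2 * n - j)),
        ← zpow_natCast q (tri n + m * n), ← zpow_add₀ hq0, ← zpow_add₀ hq0]
      congr 1
      have h1 := tri_cast j
      have h2 := tri_cast n
      have h3 := eps_two ((j : ℤ) - (n : ℤ))
      have hc : ((m * (2 * n - j) : ℕ) : ℤ) = (m : ℤ) * (2 * n - j) := by
        push_cast [Nat.cast_sub hj2]
        ring
      apply mul_left_cancel₀ (two_ne_zero (α := ℤ))
      push_cast [Nat.cast_sub hj2]
      push_cast [hn]
      push_cast [hn] at h1 h2 h3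
      linear_combination h1 - h2 - h3
    calc q ^ tri j * B q (2 * n) j * (-w) ^ j * q ^ (m * (2 * n - j))
        = (q ^ tri j * q ^ (m * (2 * n - j))) * ((-1) ^ j * (B q (2 * n) j * w ^ j)) := by
          rw [hsign]; ring
      _ = (q ^ (tri n + m * n) * q ^ eps ((j : ℤ) - (n : ℤ)))
            * (((-1) ^ n * (-1 : ℂ) ^ (j + n)) * (B q (2 * n) j * w ^ j)) := by
          rw [hqexp, hsign2]
      _ = (-1) ^ n * q ^ (tri n + m * n) * ((-1) ^ (j + n) * q ^ eps ((j : ℤ) - (n : ℤ)) * B q (2 * n) j * w ^ j) := by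
          ring
  rw [Finset.mul_sum, ← Finset.sum_congr rfl hR, ← key, hsplit, blockA, blockB, pow_add]
  ring

open Polynomial in
lemma key_identity (hq : ‖q‖ < 1) (hq0 : q ≠ 0) (m : ℕ) :
    P q m * P q (m + 1) = ∑ j ∈ range (2 * (m + 1) + 1), (j : ℂ) * coeff q (m + 1) j := by
  classical
  set Lp : Polynomial ℂ :=
    (∏ i ∈ range (m + 1), (X - C (q ^ i))) * ∏ i ∈ range (m + 1), (C 1 - X * C (q ^ (i + 1)))
    with hLp
  set Rp : Polynomial ℂ := ∑ j ∈ range (2 * (m + 1) + 1), C (coeff q (m + 1) j) * X ^ j with hRp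
  have h1 : Lp = Rp := by
    apply Polynomial.funext
    intro x
    rw [hLp, hRp]
    simp only [eval_mul, eval_prod, eval_finset_sum, eval_sub, eval_pow, eval_X, eval_C,
      eval_one, eval_add]
    exact finite_jacobi hq hq0 m x
  have hG : Lp = (X - C 1) *
      ((∏ i ∈ range m, (X - C (q ^ (i + 1)))) * ∏ i ∈ range (m + 1), (C 1 - X * C (q ^ (i + 1)))) := by
    rw [hLp, Finset.prod_range_succ' (fun i => X - C (q ^ i)) m]
    simp only [pow_zero, map_one]
    ring
  have h2 : eval 1 (derivative Lp) = eval 1 (derivative Rp) := by rw [h1]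
  have hL2 : eval 1 (derivative Lp) = P q m * P q (m + 1) := by
    rw [hG, derivative_mul]
    simp only [derivative_sub, derivative_X, derivative_C, sub_zero, eval_add, eval_mul,
      eval_sub, eval_one, eval_X, eval_C, sub_self, zero_mul, add_zero, mul_zero, one_mul,
      eval_prod, one_mul]
    rfl
  have hR2 : eval 1 (derivative Rp) = ∑ j ∈ range (2 * (m + 1) + 1), (j : ℂ) * coeff q (m + 1) j := by
    rw [hRp, derivative_sum]
    rw [eval_finset_sum]
    apply Finset.sum_congr rfl
    intro j hj
    rw [derivative_C_mul, derivative_X_pow, eval_mul, eval_C, eval_mul, eval_C, eval_pow, eval_X]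
    simp [mul_comm]
  rw [← hL2, h2, hR2]

section analytic

variable (hq : ‖q‖ < 1)

lemma summable_log (hq : ‖q‖ < 1) : Summable fun i : ℕ => Complex.log (1 - q ^ (i + 1)) := by
  have hgeo : Summable fun i : ℕ => (3 / 2 : ℝ) * ‖q‖ ^ (i + 1) :=
    ((summable_geometric_of_lt_one (norm_nonneg q) hq).mul_left _).comp_injective
      (add_left_injective 1)
  apply Summable.of_norm_bounded_eventually_nat hgeo
  have hev : ∀ᶠ i : ℕ in atTop, ‖q‖ ^ (i + 1) ≤ 1 / 2 := by
    have h0 : Tendsto (fun i : ℕ => ‖q‖ ^ (i + 1)) atTop (𝓝 0) := by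
      have := tendsto_pow_atTop_nhds_zero_of_norm_lt_one (x := ‖q‖) (by simpa using hq)
      exact this.comp (tendsto_add_atTop_nat 1)
    exact h0.eventually_le_const (by norm_num)
  filter_upwards [hev] with i hi
  have : (1 : ℂ) - q ^ (i + 1) = 1 + (-(q ^ (i + 1))) := by ring
  rw [this]
  have hb := Complex.norm_log_one_add_half_le_self (z := -(q ^ (i + 1)))
    (by rwa [norm_neg, norm_pow])
  rw [norm_neg, norm_pow] at hb
  exact hb

lemma multipliable_euler (hq : ‖q‖ < 1) : Multipliable fun i : ℕ => 1 - q ^ (i + 1) :=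
  Complex.multipliable_of_summable_log (summable_log hq)

lemma tendsto_P (hq : ‖q‖ < 1) :
    Tendsto (fun n => P q n) atTop (𝓝 (∏' i : ℕ, (1 - q ^ (i + 1)))) :=
  (multipliable_euler hq).hasProd.tendsto_prod_nat

lemma tprod_ne_zero (hq : ‖q‖ < 1) : (∏' i : ℕ, (1 - q ^ (i + 1))) ≠ 0 := by
  have := Complex.cexp_tsum_eq_tprod (fun i => one_sub_ne hq i) (summable_log hq)
  rw [← this]
  exact Complex.exp_ne_zero _

/-- uniform upper bound for the partial products -/
lemma P_norm_le (hq : ‖q‖ < 1) (n : ℕ) : ‖P q n‖ ≤ Real.exp (‖q‖ / (1 - ‖q‖)) := by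
  have h0 : (0:ℝ) ≤ ‖q‖ := norm_nonneg q
  have h1 : (0:ℝ) < 1 - ‖q‖ := by linarith
  rw [P, norm_prod]
  calc ∏ i ∈ range n, ‖1 - q ^ (i + 1)‖
      ≤ ∏ i ∈ range n, Real.exp (‖q‖ ^ (i + 1)) := by
        apply Finset.prod_le_prod (fun i _ => norm_nonneg _)
        intro i _
        calc ‖1 - q ^ (i+1)‖ ≤ ‖(1:ℂ)‖ + ‖q ^ (i+1)‖ := norm_sub_le _ _
          _ = ‖q‖ ^ (i+1) + 1 := by rw [norm_one, norm_pow]; ring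
          _ ≤ Real.exp (‖q‖ ^ (i+1)) := Real.add_one_le_exp _
    _ = Real.exp (∑ i ∈ range n, ‖q‖ ^ (i + 1)) := (Real.exp_sum _ _).symm
    _ ≤ Real.exp (‖q‖ / (1 - ‖q‖)) := by
        apply Real.exp_le_exp.mpr
        have : ∑ i ∈ range n, ‖q‖ ^ (i + 1) = ‖q‖ * ∑ i ∈ range n, ‖q‖ ^ i := by
          rw [Finset.mul_sum]
          exact Finset.sum_congr rfl fun i _ => by rw [pow_succ]; ring
        rw [this, div_eq_mul_inv]
        apply mul_le_mul_of_nonneg_left _ h0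
        have hsum := Summable.sum_le_tsum (range n) (fun i _ => pow_nonneg h0 i)
          (summable_geometric_of_lt_one h0 hq)
        rwa [tsum_geometric_of_lt_one h0 hq] at hsum

/-- Weierstrass lower bound -/
lemma one_sub_sum_le_prod (f : ℕ → ℝ) (hf0 : ∀ i, 0 ≤ f i) (hf1 : ∀ i, f i ≤ 1) (s : Finset ℕ) :
    1 - ∑ i ∈ s, f i ≤ ∏ i ∈ s, (1 - f i) := by
  classical
  induction s using Finset.induction with
  | empty => simp
  | @insert a s' hx ih =>
    rw [Finset.prod_insert hx, Finset.sum_insert hx]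
    have hprod0 : (0:ℝ) ≤ ∏ i ∈ s', (1 - f i) :=
      Finset.prod_nonneg fun i _ => by linarith [hf1 i]
    have hprod1 : ∏ i ∈ s', (1 - f i) ≤ 1 :=
      Finset.prod_le_one (fun i _ => by linarith [hf1 i]) (fun i _ => by linarith [hf0 i])
    nlinarith [hf0 a, hf1 a, ih]

/-- uniform positive lower bound for partial products -/
lemma P_norm_lower (hq : ‖q‖ < 1) : ∃ c : ℝ, 0 < c ∧ ∀ n, c ≤ ‖P q n‖ := by
  have h0 : (0:ℝ) ≤ ‖q‖ := norm_nonneg q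
  have h1 : (0:ℝ) < 1 - ‖q‖ := by linarith
  -- pick N with tail sum ≤ 1/2
  obtain ⟨N, hN⟩ : ∃ N : ℕ, ∑' i : ℕ, ‖q‖ ^ (N + i + 1) ≤ 1 / 2 := by
    have hts : ∀ N : ℕ, ∑' i : ℕ, ‖q‖ ^ (N + i + 1) = ‖q‖ ^ (N + 1) / (1 - ‖q‖) := by
      intro N
      have : ∀ i : ℕ, ‖q‖ ^ (N + i + 1) = ‖q‖ ^ (N + 1) * ‖q‖ ^ i := fun i => by
        rw [← pow_add]; congr 1; omega
      rw [tsum_congr this, tsum_mul_left, tsum_geometric_of_lt_one h0 hq, div_eq_mul_inv]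
    have hlim : Tendsto (fun N : ℕ => ‖q‖ ^ (N + 1) / (1 - ‖q‖)) atTop (𝓝 0) := by
      have := tendsto_pow_atTop_nhds_zero_of_norm_lt_one (x := ‖q‖) (by simpa using hq)
      simpa using (this.comp (tendsto_add_atTop_nat 1)).div_const (1 - ‖q‖)
    obtain ⟨N, hN⟩ := (hlim.eventually_le_const (by norm_num : (0:ℝ) < 1/2)).exists
    exact ⟨N, by rw [hts]; exact hN⟩
  set PR : ℕ → ℝ := fun n => ∏ i ∈ range n, (1 - ‖q‖ ^ (i + 1)) with hPR
  have hfac0 : ∀ i : ℕ, 0 < 1 - ‖q‖ ^ (i + 1) := by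
    intro i
    have : ‖q‖ ^ (i + 1) < 1 := pow_lt_one₀ h0 hq (Nat.succ_ne_zero i)
    linarith
  have hPRpos : ∀ n, 0 < PR n := fun n => Finset.prod_pos fun i _ => hfac0 i
  have hPle : ∀ n, PR n ≤ ‖P q n‖ := by
    intro n
    rw [P, norm_prod]
    apply Finset.prod_le_prod (fun i _ => le_of_lt (hfac0 i))
    intro i _
    calc 1 - ‖q‖ ^ (i + 1) = ‖(1:ℂ)‖ - ‖q ^ (i + 1)‖ := by rw [norm_one, norm_pow]
      _ ≤ ‖1 - q ^ (i + 1)‖ := norm_sub_norm_le _ _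
  refine ⟨PR N / 2, by have := hPRpos N; linarith, fun n => ?_⟩
  refine le_trans ?_ (hPle n)
  rcases le_or_gt n N with h | h
  · -- PR is antitone
    have : PR N ≤ PR n := by
      rw [hPR]
      simp only
      rw [show N = n + (N - n) from by omega, Finset.prod_range_add]
      have h2 : ∏ i ∈ range (N - n), (1 - ‖q‖ ^ (n + i + 1)) ≤ 1 :=
        Finset.prod_le_one (fun i _ => by linarith [hfac0 (n+i)]) (fun i _ => by linarith [pow_nonneg h0 (n+i+1)])
      nlinarith [hPRpos n, h2, Finset.prod_nonneg (fun i (_ : i ∈ range (N - n)) =>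
        le_of_lt (hfac0 (n + i)))]
    linarith [hPRpos N]
  · -- split at N
    obtain ⟨d, rfl⟩ : ∃ d, n = N + d := ⟨n - N, by omega⟩
    have hsplit : PR (N + d) = PR N * ∏ i ∈ range d, (1 - ‖q‖ ^ (N + i + 1)) := by
      rw [hPR]
      simp only
      rw [Finset.prod_range_add]
    have htail : 1 / 2 ≤ ∏ i ∈ range d, (1 - ‖q‖ ^ (N + i + 1)) := by
      have hb := one_sub_sum_le_prod (fun i => ‖q‖ ^ (N + i + 1))
        (fun i => pow_nonneg h0 _) (fun i => le_of_lt (by linarith [hfac0 (N + i)])) (range d)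
      have hsum : ∑ i ∈ range d, ‖q‖ ^ (N + i + 1) ≤ 1 / 2 := by
        refine le_trans (Summable.sum_le_tsum (range d) (fun i _ => pow_nonneg h0 _) ?_) hN
        exact ((summable_geometric_of_lt_one h0 hq).mul_left (‖q‖ ^ (N+1))).congr fun i => by
          rw [← pow_add]; congr 1; omega
      linarith
    rw [hsplit]
    calc PR N / 2 = PR N * (1/2) := by ring
      _ ≤ PR N * ∏ i ∈ range d, (1 - ‖q‖ ^ (N + i + 1)) := by
          apply mul_le_mul_of_nonneg_left htail (le_of_lt (hPRpos N))

end analytic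

section limits

/-- the infinite Euler product -/
def E (q : ℂ) : ℂ := ∏' i : ℕ, (1 - q ^ (i + 1))

/-- truncated summand -/
def F (q : ℂ) (n : ℕ) (k : ℤ) : ℂ :=
  if -(n : ℤ) ≤ k ∧ k ≤ n then
    (k : ℂ) * (-1) ^ k * q ^ eps k * B q (2 * n) (k + n).toNat else 0

/-- limit summand -/
def finf (q : ℂ) (k : ℤ) : ℂ := (k : ℂ) * (-1) ^ k * q ^ eps k / E q

lemma eps_nonneg (k : ℤ) : 0 ≤ eps k := by
  have h := eps_two k
  have h2 : 0 ≤ k * (k + 1) := by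
    rcases le_or_gt 0 k with hk | hk
    · exact mul_nonneg hk (by omega)
    · nlinarith [mul_nonneg (by omega : (0:ℤ) ≤ -k) (by omega : (0:ℤ) ≤ -(k+1))]
  linarith

lemma eps_toNat_ge (k : ℤ) : (k.natAbs : ℤ) - 1 ≤ (eps k).toNat := by
  have h := eps_two k
  have h0 := eps_nonneg k
  have h1 : 2 * (k.natAbs : ℤ) - 2 ≤ k * (k + 1) := by
    rcases le_or_gt 0 k with hk | hk
    · rw [Int.natAbs_of_nonneg hk]
      nlinarith [sq_nonneg (k - 1)]
    · have habs : (k.natAbs : ℤ) = -k := by omega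
      rw [habs]
      have h2 : 0 ≤ (k + 1) * (k + 2) := by
        rcases le_or_gt k (-2) with h' | h'
        · nlinarith [mul_nonneg (by omega : (0:ℤ) ≤ -(k+1)) (by omega : (0:ℤ) ≤ -(k+2))]
        · have hk1 : k = -1 := by omega
          simp [hk1]
      nlinarith
  omega

lemma norm_q_eps (hq0 : q ≠ 0) (k : ℤ) : ‖q ^ eps k‖ = ‖q‖ ^ (eps k).toNat := by
  conv_lhs => rw [show eps k = ((eps k).toNat : ℤ) from (Int.toNat_of_nonneg (eps_nonneg k)).symm,
    zpow_natCast]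
  rw [norm_pow]

lemma norm_q_eps_le (hq : ‖q‖ < 1) (hq0 : q ≠ 0) (k : ℤ) :
    ‖q ^ eps k‖ ≤ ‖q‖ ^ (k.natAbs - 1) := by
  rw [norm_q_eps hq0]
  apply pow_le_pow_of_le_one (norm_nonneg q) hq.le
  have := eps_toNat_ge k
  omega

lemma summable_bound (hq : ‖q‖ < 1) (Cb : ℝ) :
    Summable (fun k : ℤ => Cb * ((k.natAbs : ℝ) * ‖q‖ ^ (k.natAbs - 1))) := by
  apply Summable.mul_left
  have hnat : Summable (fun n : ℕ => (n : ℝ) * ‖q‖ ^ (n - 1)) := by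
    rw [← summable_nat_add_iff 1]
    have h1 : Summable (fun n : ℕ => (n : ℝ) * ‖q‖ ^ n) := by
      simpa using summable_pow_mul_geometric_of_norm_lt_one (R := ℝ) 1 (by simpa using hq)
    have h2 : Summable (fun n : ℕ => ‖q‖ ^ n) :=
      summable_geometric_of_lt_one (norm_nonneg q) hq
    apply ((h1.add h2).congr)
    intro n
    simp only [Nat.add_sub_cancel]
    push_cast
    ring
  apply Summable.of_nat_of_neg <;> simpa using hnat

/-- uniform bound on Gaussian binomials -/
lemma B_bound (hq : ‖q‖ < 1) : ∃ Cb : ℝ, 0 ≤ Cb ∧ ∀ m j, ‖B q m j‖ ≤ Cb := by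
  obtain ⟨c, hc, hcle⟩ := P_norm_lower hq
  refine ⟨Real.exp (‖q‖ / (1 - ‖q‖)) / (c * c), by positivity, fun m j => ?_⟩
  rw [B]
  split
  · rw [norm_div, norm_mul]
    apply div_le_div₀ (by positivity) (P_norm_le hq m) (by positivity)
    exact mul_le_mul (hcle j) (hcle (m - j)) hc.le (le_trans hc.le (hcle j))
  · simp only [norm_zero]
    positivity

lemma tendsto_toNat_add (k : ℤ) : Tendsto (fun n : ℕ => (k + n).toNat) atTop atTop := by
  apply tendsto_atTop_atTop.2
  intro b
  exact ⟨b + k.natAbs, fun n hn => by omega⟩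

lemma tendsto_sub_toNat (k : ℤ) : Tendsto (fun n : ℕ => 2 * n - (k + n).toNat) atTop atTop := by
  apply tendsto_atTop_atTop.2
  intro b
  exact ⟨b + k.natAbs, fun n hn => by omega⟩

lemma tendsto_two_mul : Tendsto (fun n : ℕ => 2 * n) atTop atTop :=
  tendsto_atTop_atTop.2 fun b => ⟨b, fun n hn => by omega⟩

lemma tendsto_F (hq : ‖q‖ < 1) (hq0 : q ≠ 0) (k : ℤ) :
    Tendsto (fun n => F q n k) atTop (𝓝 (finf q k)) := by
  have hE0 : E q ≠ 0 := tprod_ne_zero hq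
  have hB : Tendsto (fun n : ℕ =>
      P q (2 * n) / (P q (k + n).toNat * P q (2 * n - (k + n).toNat))) atTop
      (𝓝 (E q / (E q * E q))) := by
    apply Tendsto.div
    · exact (tendsto_P hq).comp tendsto_two_mul
    · exact Tendsto.mul ((tendsto_P hq).comp (tendsto_toNat_add k))
        ((tendsto_P hq).comp (tendsto_sub_toNat k))
    · exact mul_ne_zero hE0 hE0
  have hcongr : ∀ᶠ n : ℕ in atTop, ((k : ℂ) * (-1) ^ k * q ^ eps k) *
      (P q (2 * n) / (P q (k + n).toNat * P q (2 * n - (k + n).toNat))) = F q n k := by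
    filter_upwards [eventually_ge_atTop k.natAbs] with n hn
    rw [F, if_pos (by omega), B, if_pos (by omega)]
  have heq : finf q k = ((k : ℂ) * (-1) ^ k * q ^ eps k) * (E q / (E q * E q)) := by
    rw [finf]
    field_simp
  rw [heq]
  exact (Tendsto.const_mul ((k : ℂ) * (-1) ^ k * q ^ eps k) hB).congr' hcongr

lemma tendsto_tsum_F (hq : ‖q‖ < 1) (hq0 : q ≠ 0) :
    Tendsto (fun n => ∑' k : ℤ, F q n k) atTop (𝓝 (∑' k : ℤ, finf q k)) := by
  obtain ⟨Cb, hCb0, hCb⟩ := B_bound hq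
  apply tendsto_tsum_of_dominated_convergence (summable_bound hq Cb)
    (fun k => tendsto_F hq hq0 k)
  filter_upwards with n k
  rw [F]
  split
  · rename_i h
    rw [norm_mul, norm_mul, norm_mul, norm_zpow, norm_neg, norm_one, one_zpow]
    have h1 : ‖(k : ℂ)‖ = (k.natAbs : ℝ) := by
      rw [Nat.cast_natAbs, show ((k : ℂ)) = ((k : ℝ) : ℂ) from by push_cast; rfl,
        Complex.norm_real, Real.norm_eq_abs]
      simp [Int.cast_abs]
    rw [h1, mul_one]
    calc (k.natAbs : ℝ) * ‖q ^ eps k‖ * ‖B q (2 * n) (k + n).toNat‖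
        ≤ (k.natAbs : ℝ) * ‖q‖ ^ (k.natAbs - 1) * Cb := by
          apply mul_le_mul _ (hCb _ _) (norm_nonneg _) (by positivity)
          exact mul_le_mul_of_nonneg_left (norm_q_eps_le hq hq0 k) (by positivity)
      _ = Cb * ((k.natAbs : ℝ) * ‖q‖ ^ (k.natAbs - 1)) := by ring
  · simp only [norm_zero]
    positivity

end limits

section assemble

lemma coeff_sum_zero (hq : ‖q‖ < 1) (hq0 : q ≠ 0) (m : ℕ) :
    ∑ j ∈ range (2 * (m + 1) + 1), coeff q (m + 1) j = 0 := by
  have h := finite_jacobi hq hq0 m 1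
  simp only [one_pow, mul_one] at h
  rw [← h]
  apply mul_eq_zero_of_left
  apply Finset.prod_eq_zero (Finset.mem_range.mpr (Nat.succ_pos m))
  simp

lemma tsum_F_eq (hq : ‖q‖ < 1) (hq0 : q ≠ 0) (m : ℕ) :
    ∑' k : ℤ, F q (m + 1) k = P q m * P q (m + 1) := by
  set n := m + 1 with hn
  have hsupp : ∀ k : ℤ, k ∉ Finset.Icc (-(n : ℤ)) (n : ℤ) → F q n k = 0 := by
    intro k hk
    rw [Finset.mem_Icc] at hk
    rw [F, if_neg (by tauto)]
  rw [tsum_eq_sum hsupp]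
  have hbij : ∑ k ∈ Finset.Icc (-(n : ℤ)) (n : ℤ), F q n k
      = ∑ j ∈ range (2 * n + 1), ((j : ℂ) - (n : ℂ)) * coeff q n j := by
    apply Finset.sum_nbij' (i := fun k : ℤ => (k + n).toNat) (j := fun j : ℕ => (j : ℤ) - n)
    · intro k hk
      rw [Finset.mem_Icc] at hk
      rw [Finset.mem_range]
      omega
    · intro j hj
      rw [Finset.mem_range] at hj
      rw [Finset.mem_Icc]
      omega
    · intro k hk
      rw [Finset.mem_Icc] at hk
      omega
    · intro j hj
      rw [Finset.mem_range] at hj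
      omega
    · intro k hk
      rw [Finset.mem_Icc] at hk
      set jj : ℕ := (k + n).toNat with hjj
      have hjZ : (jj : ℤ) = k + n := by omega
      rw [F, if_pos (by omega), coeff]
      have hc1 : ((jj : ℂ) - (n : ℂ)) = (k : ℂ) := by
        have h := congrArg (fun x : ℤ => (x : ℂ)) hjZ
        push_cast at h
        have hnC : ((n : ℕ) : ℂ) = (m : ℂ) + 1 := by rw [hn]; push_cast; ring
        linear_combination h
      have hc2 : ((jj : ℤ) - n) = k := by omega
      have hc3 : ((-1 : ℂ)) ^ (jj + n) = (-1 : ℂ) ^ k := by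
        have h1 : ((-1 : ℂ)) ^ (jj + n) = ((-1 : ℂ)) ^ ((jj + n : ℕ) : ℤ) := (zpow_natCast _ _).symm
        rw [h1, show ((jj + n : ℕ) : ℤ) = k + 2 * n from by omega,
          zpow_add₀ (by norm_num : (-1:ℂ) ≠ 0), show ((2 * n : ℤ)) = 2 * (n : ℤ) from by push_cast; ring,
          zpow_mul]
        norm_num
      rw [hc1, hc2, hc3]
      ring
  rw [hbij]
  have hsum : ∑ j ∈ range (2 * n + 1), ((j : ℂ) - (n : ℂ)) * coeff q n j
      = (∑ j ∈ range (2 * n + 1), (j : ℂ) * coeff q n j)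
        - (n : ℂ) * ∑ j ∈ range (2 * n + 1), coeff q n j := by
    rw [Finset.mul_sum, ← Finset.sum_sub_distrib]
    apply Finset.sum_congr rfl
    intro j _
    ring
  rw [hsum, hn, coeff_sum_zero hq hq0 m, mul_zero, sub_zero, ← key_identity hq hq0 m]

lemma E_cube (hq : ‖q‖ < 1) (hq0 : q ≠ 0) :
    E q ^ 3 = ∑' k : ℕ, (-1 : ℂ) ^ k * (2 * k + 1) * q ^ (k * (k + 1) / 2) := by
  have hE0 : E q ≠ 0 := tprod_ne_zero hq
  -- g over ℤ
  set g : ℤ → ℂ := fun k => (k : ℂ) * (-1) ^ k * q ^ eps k with hg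
  have hgsum : Summable g := by
    apply Summable.of_norm_bounded (summable_bound hq 1)
    intro k
    rw [hg]
    simp only
    rw [norm_mul, norm_mul, norm_zpow, norm_neg, norm_one, one_zpow, mul_one]
    have h1 : ‖(k : ℂ)‖ = (k.natAbs : ℝ) := by
      rw [Nat.cast_natAbs, show ((k : ℂ)) = ((k : ℝ) : ℂ) from by push_cast; rfl,
        Complex.norm_real, Real.norm_eq_abs]
      simp [Int.cast_abs]
    rw [h1, one_mul]
    exact mul_le_mul_of_nonneg_left (norm_q_eps_le hq hq0 k) (by positivity)
  -- step 1: E^2 = tsum finf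
  have hsq : E q * E q = ∑' k : ℤ, finf q k := by
    have h1 : Tendsto (fun m : ℕ => P q m * P q (m + 1)) atTop (𝓝 (E q * E q)) :=
      (tendsto_P hq).mul ((tendsto_P hq).comp (tendsto_add_atTop_nat 1))
    have h2 : Tendsto (fun m : ℕ => P q m * P q (m + 1)) atTop (𝓝 (∑' k : ℤ, finf q k)) := by
      have h3 := (tendsto_tsum_F hq hq0).comp (tendsto_add_atTop_nat 1)
      apply h3.congr
      intro m
      exact tsum_F_eq hq hq0 m
    exact tendsto_nhds_unique h1 h2
  -- step 2: tsum finf = (tsum g) / E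
  have hdiv : ∑' k : ℤ, finf q k = (∑' k : ℤ, g k) / E q := by
    rw [← tsum_div_const]
    exact tsum_congr fun k => by rw [hg, finf]
  have hcube : E q ^ 3 = ∑' k : ℤ, g k := by
    have := hsq.trans hdiv
    field_simp at this
    linear_combination this
  rw [hcube]
  -- step 3: split ℤ-sum into ℕ-sums
  have hinj2 : Function.Injective (fun nn : ℕ => -((nn : ℤ) + 1)) := by
    intro a b hab
    simpa using hab
  have hf1 : Summable (fun nn : ℕ => g nn) := hgsum.comp_injective Nat.cast_injective
  have hf2 : Summable (fun nn : ℕ => g (-((nn : ℤ) + 1))) := hgsum.comp_injective hinj2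
  rw [tsum_of_nat_of_neg_add_one hf1 hf2, ← Summable.tsum_add hf1 hf2]
  apply tsum_congr
  intro nn
  -- per-term identity
  have e1 : eps ((nn : ℤ)) = ((nn * (nn + 1) / 2 : ℕ) : ℤ) := by
    apply mul_left_cancel₀ (two_ne_zero (α := ℤ))
    rw [eps_two]
    have h2 : 2 * (nn * (nn + 1) / 2) = nn * (nn + 1) :=
      Nat.two_mul_div_two_of_even (Nat.even_mul_succ_self nn)
    have h3 : ((2 * (nn * (nn + 1) / 2) : ℕ) : ℤ) = ((nn * (nn + 1) : ℕ) : ℤ) := by rw [h2]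
    push_cast at h3
    push_cast
    linear_combination -h3
  have e2 : eps (-((nn : ℤ) + 1)) = eps nn := by
    apply mul_left_cancel₀ (two_ne_zero (α := ℤ))
    rw [eps_two, eps_two]
    ring
  have s1 : ((-1 : ℂ)) ^ ((nn : ℤ)) = (-1 : ℂ) ^ nn := zpow_natCast _ _
  have s2 : ((-1 : ℂ)) ^ (-((nn : ℤ) + 1)) = -((-1 : ℂ) ^ nn) := by
    rw [show -((nn : ℤ) + 1) = -(((nn + 1 : ℕ) : ℤ)) from by push_cast; ring, zpow_neg,
      zpow_natCast, ← inv_pow, show ((-1 : ℂ))⁻¹ = -1 from by norm_num, pow_succ]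
    ring
  have hqpow : q ^ eps ((nn : ℤ)) = q ^ (nn * (nn + 1) / 2 : ℕ) := by
    rw [e1, zpow_natCast]
  simp only [hg]
  rw [e2, s1, s2, hqpow]
  push_cast
  ring

end assemble

end

end JacobiCube

/-- Jacobi's identity: for `|z| < 1`,
`∏_{k=1}^∞ (1 - z^k)³ = ∑_{k=0}^∞ (-1)^k (2k+1) z^{k(k+1)/2}`. -/
theorem jacobi_cube_identity (z : ℂ) (hz : ‖z‖ < 1) :
    Tendsto (fun n => ∏ m ∈ range n, (1 - z ^ (m + 1)) ^ 3) atTop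
      (nhds (∑' k : ℕ, (-1 : ℂ) ^ k * (2 * k + 1) * z ^ (k * (k + 1) / 2))) := by
  rcases eq_or_ne z 0 with rfl | hz0
  · have h1 : ∀ n : ℕ, ∏ m ∈ range n, ((1 : ℂ) - 0 ^ (m + 1)) ^ 3 = 1 := by
      intro n
      apply Finset.prod_eq_one
      intro i _
      rw [zero_pow (Nat.succ_ne_zero i)]
      norm_num
    have h2 : (∑' k : ℕ, (-1 : ℂ) ^ k * (2 * (k : ℂ) + 1) * (0 : ℂ) ^ (k * (k + 1) / 2)) = 1 := by
      rw [tsum_eq_single 0]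
      · norm_num
      · intro k hk
        have hne : k * (k + 1) / 2 ≠ 0 := by
          have h3 : 2 ≤ k * (k + 1) := by nlinarith [Nat.one_le_iff_ne_zero.mpr hk]
          have h4 : 1 ≤ k * (k + 1) / 2 := (Nat.le_div_iff_mul_le (by norm_num)).mpr (by omega)
          omega
        rw [zero_pow hne, mul_zero]
    rw [h2]
    exact Tendsto.congr (fun n => (h1 n).symm) tendsto_const_nhds
  · rw [← JacobiCube.E_cube hz hz0]
    have hE := Filter.Tendsto.pow (JacobiCube.tendsto_P hz) 3
    apply hE.congr
    intro n
    rw [JacobiCube.P, ← Finset.prod_pow]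
end

section
/- For |z| < 1, Σ_{k=0}^∞ z^{k(k+1)/2} = ∏_{k=1}^∞ (1−z^{2k})/(1−z^{2k−1}). -/
open Filter Finset

noncomputable def gtt (z x : ℂ) (j : ℕ) : ℂ :=
  x ^ j * ∏ i ∈ range j, (1 - x * z ^ (2 * i)) / (1 - x * z ^ (2 * i + 1))

lemma one_sub_ne {w : ℂ} (h : ‖w‖ < 1) : (1 : ℂ) - w ≠ 0 := by
  intro h0; rw [sub_eq_zero] at h0; rw [← h0] at h; simp at h

lemma norm_mul_pow_lt {z x : ℂ} (hz : ‖z‖ < 1) (hx : ‖x‖ < 1) (m : ℕ) : ‖x * z ^ m‖ < 1 := by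
  rw [norm_mul, norm_pow]
  calc ‖x‖ * ‖z‖ ^ m ≤ ‖x‖ * 1 :=
        mul_le_mul_of_nonneg_left (pow_le_one₀ (norm_nonneg z) hz.le) (norm_nonneg x)
    _ < 1 := by simpa using hx

lemma gtt_succ (z x : ℂ) (j : ℕ) :
    gtt z x (j + 1) = gtt z x j * (x * ((1 - x * z ^ (2 * j)) / (1 - x * z ^ (2 * j + 1)))) := by
  unfold gtt; rw [prod_range_succ, pow_succ]; ring

lemma summable_gtt {z x : ℂ} (hz : ‖z‖ < 1) (hx : ‖x‖ < 1) : Summable (gtt z x) := by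
  set r : ℝ := (1 + ‖x‖) / 2 with hr
  have hr1 : r < 1 := by rw [hr]; linarith
  have hxr : ‖x‖ < r := by rw [hr]; linarith
  apply summable_of_ratio_norm_eventually_le hr1
  have hz2 : ‖z ^ 2‖ < 1 := by
    rw [norm_pow]; exact pow_lt_one₀ (norm_nonneg z) hz (by norm_num)
  have hten : Tendsto (fun j : ℕ => x * ((1 - x * z ^ (2 * j)) / (1 - x * z ^ (2 * j + 1))))
      atTop (nhds x) := by
    have hp : Tendsto (fun j : ℕ => (z ^ 2) ^ j) atTop (nhds 0) :=
      tendsto_pow_atTop_nhds_zero_of_norm_lt_one hz2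
    have hp1 : Tendsto (fun j : ℕ => x * z ^ (2 * j)) atTop (nhds 0) := by
      have := hp.const_mul x
      simpa [pow_mul] using this
    have hp2 : Tendsto (fun j : ℕ => x * z ^ (2 * j + 1)) atTop (nhds 0) := by
      have := (hp.const_mul (x * z))
      rw [mul_zero] at this
      refine this.congr fun j => ?_
      rw [pow_add, pow_mul, pow_one]; ring
    have hnum : Tendsto (fun j : ℕ => 1 - x * z ^ (2 * j)) atTop (nhds 1) := by
      have := hp1.const_sub 1; simpa using this
    have hden : Tendsto (fun j : ℕ => 1 - x * z ^ (2 * j + 1)) atTop (nhds 1) := by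
      have := hp2.const_sub 1; simpa using this
    have := (hnum.div hden one_ne_zero).const_mul x
    simpa using this
  have hnorm : Tendsto (fun j : ℕ => ‖x * ((1 - x * z ^ (2 * j)) / (1 - x * z ^ (2 * j + 1)))‖)
      atTop (nhds ‖x‖) := hten.norm
  filter_upwards [hnorm.eventually_le_const hxr] with j hj
  rw [gtt_succ, norm_mul]
  exact mul_le_mul_of_nonneg_left hj (norm_nonneg _) |>.trans (by rw [mul_comm])|>.trans le_rfl

lemma gtt_key {z x : ℂ} (hz : ‖z‖ < 1) (hx : ‖x‖ < 1) (j : ℕ) :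
    gtt z x j - z * x ^ 2 * gtt z (x * z ^ 2) j
      = gtt z x j * ((1 - x ^ 2 * z ^ (2 * j)) / (1 - x))
        - gtt z x (j + 1) * ((1 - x ^ 2 * z ^ (2 * (j + 1))) / (1 - x)) := by
  set N := ∏ i ∈ range j, (1 - x * z ^ (2 * i)) with hN
  set D := ∏ i ∈ range j, (1 - x * z ^ (2 * i + 1)) with hD
  have hDne : D ≠ 0 := by
    rw [hD]
    exact prod_ne_zero_iff.mpr fun i _ => one_sub_ne (norm_mul_pow_lt hz hx _)
  have h1x : (1 : ℂ) - x ≠ 0 := one_sub_ne hx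
  have h1xz : (1 : ℂ) - x * z ≠ 0 := by
    have := one_sub_ne (norm_mul_pow_lt hz hx 1); simpa using this
  have h1xzj : (1 : ℂ) - x * z ^ (2 * j + 1) ≠ 0 := one_sub_ne (norm_mul_pow_lt hz hx _)
  have e1 : gtt z x j = x ^ j * N / D := by
    rw [gtt, prod_div_distrib, ← hN, ← hD]; ring
  have e2 : gtt z x (j + 1)
      = x ^ j * N / D * (x * ((1 - x * z ^ (2 * j)) / (1 - x * z ^ (2 * j + 1)))) := by
    rw [gtt_succ, e1]
  have hN2 : (∏ i ∈ range j, (1 - x * z ^ (2 * i + 2))) * (1 - x)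
      = N * (1 - x * z ^ (2 * j)) := by
    calc (∏ i ∈ range j, (1 - x * z ^ (2 * i + 2))) * (1 - x)
        = (∏ i ∈ range j, (1 - x * z ^ (2 * (i + 1)))) * (1 - x * z ^ (2 * 0)) := by
          refine congrArg₂ (· * ·) ?_ ?_
          · exact prod_congr rfl fun i _ => by ring_nf
          · norm_num
      _ = ∏ i ∈ range (j + 1), (1 - x * z ^ (2 * i)) :=
          (prod_range_succ' (fun i => 1 - x * z ^ (2 * i)) j).symm
      _ = N * (1 - x * z ^ (2 * j)) := prod_range_succ (fun i => 1 - x * z ^ (2 * i)) j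
  have hD2 : (∏ i ∈ range j, (1 - x * z ^ (2 * i + 3))) * (1 - x * z)
      = D * (1 - x * z ^ (2 * j + 1)) := by
    calc (∏ i ∈ range j, (1 - x * z ^ (2 * i + 3))) * (1 - x * z)
        = (∏ i ∈ range j, (1 - x * z ^ (2 * (i + 1) + 1))) * (1 - x * z ^ (2 * 0 + 1)) := by
          refine congrArg₂ (· * ·) ?_ ?_
          · exact prod_congr rfl fun i _ => by ring_nf
          · norm_num
      _ = ∏ i ∈ range (j + 1), (1 - x * z ^ (2 * i + 1)) :=
          (prod_range_succ' (fun i => 1 - x * z ^ (2 * i + 1)) j).symm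
      _ = D * (1 - x * z ^ (2 * j + 1)) := prod_range_succ (fun i => 1 - x * z ^ (2 * i + 1)) j
  have e3 : gtt z (x * z ^ 2) j
      = x ^ j * z ^ (2 * j) * (∏ i ∈ range j, (1 - x * z ^ (2 * i + 2)))
        / (∏ i ∈ range j, (1 - x * z ^ (2 * i + 3))) := by
    rw [gtt, prod_div_distrib, mul_pow, ← pow_mul]
    rw [show (∏ i ∈ range j, (1 - x * z ^ 2 * z ^ (2 * i)))
          = ∏ i ∈ range j, (1 - x * z ^ (2 * i + 2)) from
        prod_congr rfl fun i _ => by ring,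
      show (∏ i ∈ range j, (1 - x * z ^ 2 * z ^ (2 * i + 1)))
          = ∏ i ∈ range j, (1 - x * z ^ (2 * i + 3)) from
        prod_congr rfl fun i _ => by ring]
    rw [mul_div_assoc]
  have hP2 : (∏ i ∈ range j, (1 - x * z ^ (2 * i + 2)))
      = N * (1 - x * z ^ (2 * j)) / (1 - x) := by rw [eq_div_iff h1x]; exact hN2
  have hQ2 : (∏ i ∈ range j, (1 - x * z ^ (2 * i + 3)))
      = D * (1 - x * z ^ (2 * j + 1)) / (1 - x * z) := by rw [eq_div_iff h1xz]; exact hD2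
  rw [e1, e2, e3, hP2, hQ2]
  field_simp
  ring

lemma gtt_rec {z x : ℂ} (hz : ‖z‖ < 1) (hx : ‖x‖ < 1) :
    (∑' j, gtt z x j) = 1 + x + z * x ^ 2 * ∑' j, gtt z (x * z ^ 2) j := by
  have hxz2 : ‖x * z ^ 2‖ < 1 := norm_mul_pow_lt hz hx 2
  have hS1 := summable_gtt hz hx
  have hS2 := summable_gtt hz hxz2
  have h1x : (1 : ℂ) - x ≠ 0 := one_sub_ne hx
  set v : ℕ → ℂ := fun j => gtt z x j * ((1 - x ^ 2 * z ^ (2 * j)) / (1 - x)) with hv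
  have hz2 : ‖z ^ 2‖ < 1 := by
    rw [norm_pow]; exact pow_lt_one₀ (norm_nonneg z) hz (by norm_num)
  have hvten : Tendsto v atTop (nhds 0) := by
    have h0 : Tendsto (fun j => gtt z x j) atTop (nhds 0) := hS1.tendsto_atTop_zero
    have hp : Tendsto (fun j : ℕ => (z ^ 2) ^ j) atTop (nhds 0) :=
      tendsto_pow_atTop_nhds_zero_of_norm_lt_one hz2
    have hp1 : Tendsto (fun j : ℕ => x ^ 2 * z ^ (2 * j)) atTop (nhds 0) := by
      have := hp.const_mul (x ^ 2); simpa [pow_mul] using this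
    have hfac : Tendsto (fun j : ℕ => (1 - x ^ 2 * z ^ (2 * j)) / (1 - x)) atTop
        (nhds ((1 - 0) / (1 - x))) := by
      exact ((tendsto_const_nhds.sub hp1)).div_const _
    have := h0.mul hfac
    simpa using this
  have key : ∀ j, gtt z x j - z * x ^ 2 * gtt z (x * z ^ 2) j = v j - v (j + 1) :=
    fun j => gtt_key hz hx j
  have hd : Summable (fun j => gtt z x j - z * x ^ 2 * gtt z (x * z ^ 2) j) :=
    hS1.sub (hS2.mul_left (z * x ^ 2))
  have hpart : Tendsto (fun n => ∑ j ∈ range n,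
      (gtt z x j - z * x ^ 2 * gtt z (x * z ^ 2) j)) atTop (nhds (v 0)) := by
    have heq : ∀ n, ∑ j ∈ range n, (gtt z x j - z * x ^ 2 * gtt z (x * z ^ 2) j)
        = v 0 - v n := by
      intro n
      rw [← sum_range_sub' v n]
      exact sum_congr rfl fun j _ => key j
    rw [tendsto_congr heq]
    simpa using tendsto_const_nhds.sub hvten
  have huniq := tendsto_nhds_unique hd.hasSum.tendsto_sum_nat hpart
  rw [Summable.tsum_sub hS1 (hS2.mul_left (z * x ^ 2)), tsum_mul_left] at huniq
  have hv0 : v 0 = 1 + x := by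
    have hg0 : gtt z x 0 = 1 := by simp [gtt]
    rw [hv]
    simp only [hg0, mul_zero, pow_zero, mul_one, one_mul]
    rw [div_eq_iff h1x]; ring
  rw [hv0] at huniq
  linear_combination huniq

lemma gtt_bound {z x : ℂ} (hz : ‖z‖ < 1) (hx1 : ‖x‖ ≤ ‖z‖ ^ 2)
    (hx2 : ‖x‖ ≤ (1 - ‖z‖ ^ 3) / 4) : ‖∑' j, gtt z x j‖ ≤ 2 := by
  set c : ℝ := 1 - ‖z‖ ^ 3 with hc
  have hcpos : 0 < c := by
    have : ‖z‖ ^ 3 < 1 := pow_lt_one₀ (norm_nonneg z) hz (by norm_num)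
    rw [hc]; linarith
  have hxle1 : ‖x‖ ≤ 1 := hx1.trans (pow_le_one₀ (norm_nonneg z) hz.le)
  have hratio : ∀ j : ℕ, ‖x * ((1 - x * z ^ (2 * j)) / (1 - x * z ^ (2 * j + 1)))‖ ≤ 1 / 2 := by
    intro j
    have hnum : ‖1 - x * z ^ (2 * j)‖ ≤ 2 := by
      calc ‖1 - x * z ^ (2 * j)‖ ≤ ‖(1 : ℂ)‖ + ‖x * z ^ (2 * j)‖ := norm_sub_le _ _
        _ ≤ 1 + 1 := by
            apply add_le_add (le_of_eq (norm_one))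
            rw [norm_mul, norm_pow]
            exact mul_le_one₀ hxle1 (by positivity) (pow_le_one₀ (norm_nonneg z) hz.le)
        _ = 2 := by norm_num
    have hwden : ‖x * z ^ (2 * j + 1)‖ ≤ ‖z‖ ^ 3 := by
      rw [norm_mul, norm_pow]
      calc ‖x‖ * ‖z‖ ^ (2 * j + 1) ≤ ‖z‖ ^ 2 * ‖z‖ ^ 1 := by
            apply mul_le_mul hx1 _ (by positivity) (by positivity)
            exact pow_le_pow_of_le_one (norm_nonneg z) hz.le (by omega)
        _ = ‖z‖ ^ 3 := by ring
    have hden : c ≤ ‖1 - x * z ^ (2 * j + 1)‖ := by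
      have h1 := norm_sub_norm_le (1 : ℂ) (x * z ^ (2 * j + 1))
      rw [norm_one] at h1
      rw [hc]; linarith
    rw [norm_mul, norm_div]
    calc ‖x‖ * (‖1 - x * z ^ (2 * j)‖ / ‖1 - x * z ^ (2 * j + 1)‖)
        ≤ (c / 4) * (2 / c) := by
          apply mul_le_mul hx2 _ (by positivity) (by positivity)
          exact div_le_div₀ (by norm_num) hnum hcpos hden
      _ = 1 / 2 := by field_simp; ring
  have hbnd : ∀ j, ‖gtt z x j‖ ≤ (1 / 2 : ℝ) ^ j := by
    intro j
    induction j with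
    | zero => simp [gtt]
    | succ n ih =>
        rw [gtt_succ, norm_mul, pow_succ]
        exact mul_le_mul ih (hratio n) (norm_nonneg _) (pow_nonneg (by norm_num) n)
  have hgeo : Summable (fun j : ℕ => (1 / 2 : ℝ) ^ j) :=
    summable_geometric_of_lt_one (by norm_num) (by norm_num)
  have hsn : Summable (fun j => ‖gtt z x j‖) :=
    Summable.of_nonneg_of_le (fun _ => norm_nonneg _) hbnd hgeo
  calc ‖∑' j, gtt z x j‖ ≤ ∑' j, ‖gtt z x j‖ := norm_tsum_le_tsum_norm hsn
    _ ≤ ∑' j : ℕ, (1 / 2 : ℝ) ^ j := Summable.tsum_le_tsum hbnd hsn hgeo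
    _ = 2 := by rw [tsum_geometric_of_lt_one (by norm_num) (by norm_num)]; norm_num

lemma gauss_sum_eq {z : ℂ} (hz : ‖z‖ < 1) :
    (∑' k : ℕ, z ^ (k * (k + 1) / 2)) = 1 + z * ∑' j, gtt z (z ^ 2) j := by
  have hTs : Summable (fun s : ℕ => z ^ (s * (s + 1) / 2)) := by
    apply Summable.of_norm
    refine Summable.of_nonneg_of_le (fun _ => norm_nonneg _) (fun s => ?_)
      (summable_geometric_of_lt_one (norm_nonneg z) hz)
    rw [norm_pow]
    apply pow_le_pow_of_le_one (norm_nonneg z) hz.le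
    calc s = s * 2 / 2 := by omega
      _ ≤ s * (s + 1) / 2 := Nat.div_le_div_right (by nlinarith [sq_nonneg s, Nat.zero_le s])
  have hval : ∀ N : ℕ, (∑ s ∈ range (2 * N + 1), z ^ (s * (s + 1) / 2))
      + z ^ (2 * N ^ 2 + 3 * N + 1) * ∑' j, gtt z (z ^ (2 * N + 2)) j
      = 1 + z * ∑' j, gtt z (z ^ 2) j := by
    intro N
    induction N with
    | zero => norm_num
    | succ N ih =>
      have hx : ‖z ^ (2 * N + 2)‖ < 1 := by
        rw [norm_pow]; exact pow_lt_one₀ (norm_nonneg z) hz (by omega)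
      rw [← ih, gtt_rec hz hx]
      rw [show (z : ℂ) ^ (2 * (N + 1) + 2) = z ^ (2 * N + 2) * z ^ 2 from by ring]
      rw [show 2 * (N + 1) + 1 = 2 * N + 1 + 1 + 1 from by ring]
      rw [sum_range_succ, sum_range_succ]
      rw [show (2 * N + 1) * (2 * N + 1 + 1) = (2 * N ^ 2 + 3 * N + 1) * 2 from by ring,
        Nat.mul_div_cancel _ two_pos]
      rw [show (2 * N + 1 + 1) * (2 * N + 1 + 1 + 1) = (2 * N ^ 2 + 5 * N + 3) * 2 from by ring,
        Nat.mul_div_cancel _ two_pos]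
      ring
  have hS : Tendsto (fun N : ℕ => ∑ s ∈ range (2 * N + 1), z ^ (s * (s + 1) / 2)) atTop
      (nhds (∑' k : ℕ, z ^ (k * (k + 1) / 2))) := by
    apply hTs.hasSum.tendsto_sum_nat.comp
    exact tendsto_atTop_mono (fun n => by omega : ∀ n : ℕ, n ≤ 2 * n + 1) tendsto_id
  have hrem : Tendsto (fun N : ℕ => z ^ (2 * N ^ 2 + 3 * N + 1)
      * ∑' j, gtt z (z ^ (2 * N + 2)) j) atTop (nhds 0) := by
    rw [tendsto_zero_iff_norm_tendsto_zero]
    have hq : (0 : ℝ) < (1 - ‖z‖ ^ 3) / 4 := by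
      have : ‖z‖ ^ 3 < 1 := pow_lt_one₀ (norm_nonneg z) hz (by norm_num)
      linarith
    have hzp : Tendsto (fun n : ℕ => ‖z‖ ^ n) atTop (nhds 0) :=
      tendsto_pow_atTop_nhds_zero_of_lt_one (norm_nonneg z) hz
    have hzp2 : Tendsto (fun N : ℕ => ‖z‖ ^ (2 * N + 2)) atTop (nhds 0) :=
      hzp.comp (tendsto_atTop_mono (fun n => by omega : ∀ n : ℕ, n ≤ 2 * n + 2) tendsto_id)
    have hev : ∀ᶠ N : ℕ in atTop, ‖z‖ ^ (2 * N + 2) ≤ (1 - ‖z‖ ^ 3) / 4 :=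
      hzp2.eventually_le_const hq
    apply squeeze_zero' (Filter.Eventually.of_forall fun N => norm_nonneg _)
      (g := fun N : ℕ => 2 * ‖z‖ ^ (N + 1))
    · filter_upwards [hev] with N hN
      rw [norm_mul, norm_pow]
      have hb : ‖∑' j, gtt z (z ^ (2 * N + 2)) j‖ ≤ 2 := by
        apply gtt_bound hz
        · rw [norm_pow]
          exact pow_le_pow_of_le_one (norm_nonneg z) hz.le (by omega)
        · rw [norm_pow]; exact hN
      calc ‖z‖ ^ (2 * N ^ 2 + 3 * N + 1) * ‖∑' j, gtt z (z ^ (2 * N + 2)) j‖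
          ≤ ‖z‖ ^ (N + 1) * 2 := by
            apply mul_le_mul _ hb (norm_nonneg _) (by positivity)
            exact pow_le_pow_of_le_one (norm_nonneg z) hz.le (by nlinarith)
        _ = 2 * ‖z‖ ^ (N + 1) := by ring
    · have := (hzp.comp (tendsto_atTop_mono (fun n => by omega : ∀ n : ℕ, n ≤ n + 1)
        tendsto_id)).const_mul (2 : ℝ)
      simpa using this
  have h1 : Tendsto (fun N : ℕ => (∑ s ∈ range (2 * N + 1), z ^ (s * (s + 1) / 2))
      + z ^ (2 * N ^ 2 + 3 * N + 1) * ∑' j, gtt z (z ^ (2 * N + 2)) j) atTop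
      (nhds ((∑' k : ℕ, z ^ (k * (k + 1) / 2)) + 0)) := hS.add hrem
  rw [add_zero] at h1
  exact tendsto_nhds_unique h1 ((tendsto_congr hval).mpr tendsto_const_nhds)

lemma one_sub_pow_ne {z : ℂ} (hz : ‖z‖ < 1) {m : ℕ} (hm : 1 ≤ m) : (1 : ℂ) - z ^ m ≠ 0 :=
  one_sub_ne (by rw [norm_pow]; exact pow_lt_one₀ (norm_nonneg z) hz (by omega))

lemma gauss_prod_eq {z : ℂ} (hz : ‖z‖ < 1) (n : ℕ) :
    (∏ m ∈ range n, (1 - z ^ (2 * (m + 1))) / (1 - z ^ (2 * (m + 1) - 1)))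
      = 1 + z * ∑ j ∈ range n, gtt z (z ^ 2) j := by
  induction n with
  | zero => simp
  | succ n ih =>
    have hA : (∏ m ∈ range n, ((1 - z ^ (2 * (m + 1))) / (1 - z ^ (2 * (m + 1) - 1))))
        = (∏ m ∈ range n, (1 - z ^ (2 * m + 2))) / (∏ m ∈ range n, (1 - z ^ (2 * m + 1))) := by
      rw [← prod_div_distrib]
      exact prod_congr rfl fun m _ => by
        rw [show 2 * (m + 1) - 1 = 2 * m + 1 from by omega,
          show 2 * (m + 1) = 2 * m + 2 from by ring]
    have hgtt : gtt z (z ^ 2) n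
        = z ^ (2 * n) * (∏ i ∈ range n, (1 - z ^ (2 * i + 2)))
          / (∏ i ∈ range n, (1 - z ^ (2 * i + 3))) := by
      rw [gtt, prod_div_distrib, ← pow_mul]
      rw [show (∏ i ∈ range n, (1 - z ^ 2 * z ^ (2 * i)))
            = ∏ i ∈ range n, (1 - z ^ (2 * i + 2)) from prod_congr rfl fun i _ => by ring,
        show (∏ i ∈ range n, (1 - z ^ 2 * z ^ (2 * i + 1)))
            = ∏ i ∈ range n, (1 - z ^ (2 * i + 3)) from prod_congr rfl fun i _ => by ring]
      rw [mul_div_assoc]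
    have hshift : (∏ i ∈ range n, (1 - z ^ (2 * i + 3))) * (1 - z)
        = (∏ m ∈ range n, (1 - z ^ (2 * m + 1))) * (1 - z ^ (2 * n + 1)) := by
      calc (∏ i ∈ range n, (1 - z ^ (2 * i + 3))) * (1 - z)
          = (∏ i ∈ range n, (1 - z ^ (2 * (i + 1) + 1))) * (1 - z ^ (2 * 0 + 1)) := by
            refine congrArg₂ (· * ·) ?_ ?_
            · exact prod_congr rfl fun i _ => by ring_nf
            · norm_num
        _ = ∏ i ∈ range (n + 1), (1 - z ^ (2 * i + 1)) :=
            (prod_range_succ' (fun i => 1 - z ^ (2 * i + 1)) n).symm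
        _ = _ := prod_range_succ (fun i => 1 - z ^ (2 * i + 1)) n
    have hBne : (∏ m ∈ range n, (1 - z ^ (2 * m + 1))) ≠ 0 :=
      prod_ne_zero_iff.mpr fun m _ => one_sub_pow_ne hz (by omega)
    have h1z : (1 : ℂ) - z ≠ 0 := by
      have := one_sub_pow_ne hz (m := 1) le_rfl; simpa using this
    have h1zn : (1 : ℂ) - z ^ (2 * n + 1) ≠ 0 := one_sub_pow_ne hz (by omega)
    have hB2 : (∏ i ∈ range n, (1 - z ^ (2 * i + 3)))
        = (∏ m ∈ range n, (1 - z ^ (2 * m + 1))) * (1 - z ^ (2 * n + 1)) / (1 - z) := by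
      rw [eq_div_iff h1z]; exact hshift
    rw [prod_range_succ, sum_range_succ]
    rw [show (1 : ℂ) + z * (∑ x ∈ range n, gtt z (z ^ 2) x + gtt z (z ^ 2) n)
        = (1 + z * ∑ x ∈ range n, gtt z (z ^ 2) x) + z * gtt z (z ^ 2) n from by ring]
    rw [← ih, hA]
    rw [show 2 * (n + 1) - 1 = 2 * n + 1 from by omega,
      show 2 * (n + 1) = 2 * n + 2 from by ring]
    rw [hgtt, hB2]
    field_simp
    ring


/-- Gauss's identity: for `|z| < 1`,
`∑_{k=0}^∞ z^{k(k+1)/2} = ∏_{k=1}^∞ (1 - z^{2k}) / (1 - z^{2k-1})`. -/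
theorem gauss_triangular_identity (z : ℂ) (hz : ‖z‖ < 1) :
    Tendsto (fun n => ∏ m ∈ range n, (1 - z ^ (2 * (m + 1))) / (1 - z ^ (2 * (m + 1) - 1)))
      atTop (nhds (∑' k : ℕ, z ^ (k * (k + 1) / 2))) := by
  have hz2 : ‖z ^ 2‖ < 1 := by
    rw [norm_pow]; exact pow_lt_one₀ (norm_nonneg z) hz (by norm_num)
  have hsum : Summable (gtt z (z ^ 2)) := summable_gtt hz hz2
  have h1 : Tendsto (fun n => ∑ j ∈ range n, gtt z (z ^ 2) j) atTop
      (nhds (∑' j, gtt z (z ^ 2) j)) := hsum.hasSum.tendsto_sum_nat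
  have h2 : Tendsto (fun n => 1 + z * ∑ j ∈ range n, gtt z (z ^ 2) j) atTop
      (nhds (1 + z * ∑' j, gtt z (z ^ 2) j)) := (h1.const_mul z).const_add 1
  rw [gauss_sum_eq hz]
  exact h2.congr fun n => (gauss_prod_eq hz n).symm
end

section
/- Define the two-variable partition polynomial p(k,ω) = Σ_{i=1}^{k} p_i(k) ω^i, where p_i(k) is the number of partitions of k into exactly i parts. Then for every k ≥ 0: Σ_{j=0}^{2k+1} p(j,ω)·p(2k+1−j,−ω) = 0, and Σ_{j=0}^{2k} p(j,ω)·p(2k−j,−ω) = p(k,ω²), as identities of polynomials in ω (with p(0,ω)=1). -/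
open Finset Polynomial

/-- The partition polynomial `p(k, ω) = ∑_i p_i(k) ω^i`, where `p_i(k)` is the number of
partitions of `k` into exactly `i` parts (and `p(0, ω) = 1`). -/
noncomputable def partitionPoly (k : ℕ) : Polynomial ℤ :=
  ∑ i ∈ Finset.range (k + 1),
    C (((Finset.univ.filter fun p : Nat.Partition k => p.parts.card = i).card : ℤ)) * X ^ i

open scoped Classical

noncomputable def Eser (r : Polynomial ℤ) (d : ℕ) : PowerSeries (Polynomial ℤ) :=
  PowerSeries.mk fun k => if d ∣ k then r ^ (k / d) else 0

lemma Eser_inv (r : Polynomial ℤ) (d : ℕ) (hd : 0 < d) :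
    (1 - PowerSeries.C r * PowerSeries.X ^ d) * Eser r d = 1 := by
  have hre : (1 - PowerSeries.C r * PowerSeries.X ^ d) * Eser r d
      = Eser r d - PowerSeries.C r * (Eser r d * PowerSeries.X ^ d) := by ring
  rw [hre]
  refine PowerSeries.ext fun k => ?_
  rw [map_sub, PowerSeries.coeff_C_mul, PowerSeries.coeff_mul_X_pow']
  simp only [Eser, PowerSeries.coeff_mk, PowerSeries.coeff_one]
  rcases Nat.eq_zero_or_pos k with rfl | hk
  · rw [if_pos (dvd_zero d), if_neg (by omega), if_pos rfl]
    simp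
  · rw [if_neg hk.ne']
    by_cases hdk : d ≤ k
    · rw [if_pos hdk]
      by_cases hdvd : d ∣ k
      · have h2 : d ∣ k - d := Nat.dvd_sub hdvd dvd_rfl
        rw [if_pos hdvd, if_pos h2]
        have h3 : (k - d) / d + 1 = k / d := by
          rw [← Nat.add_div_right (k - d) hd, Nat.sub_add_cancel hdk]
        rw [← h3, pow_succ]
        ring
      · rw [if_neg hdvd, if_neg (fun h => hdvd (by
          have := Nat.dvd_add h (dvd_refl d)
          rwa [Nat.sub_add_cancel hdk] at this))]
        ring
    · rw [if_neg hdk, if_neg (fun h => hdk (Nat.le_of_dvd hk h))]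
      ring

lemma Eser_mul_Eser (r : Polynomial ℤ) (d : ℕ) (hd : 0 < d) :
    Eser r d * Eser (-r) d = Eser (r ^ 2) (2 * d) := by
  have h1 := Eser_inv r d hd
  have h2 := Eser_inv (-r) d hd
  have h3 := Eser_inv (r ^ 2) (2 * d) (by omega)
  have hfac : (1 : PowerSeries (Polynomial ℤ)) - PowerSeries.C (r ^ 2) * PowerSeries.X ^ (2 * d)
      = (1 - PowerSeries.C r * PowerSeries.X ^ d) * (1 - PowerSeries.C (-r) * PowerSeries.X ^ d) := by
    rw [pow_mul']
    push_cast [map_neg, map_pow]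
    ring
  calc Eser r d * Eser (-r) d
      = Eser r d * Eser (-r) d * ((1 - PowerSeries.C (r ^ 2) * PowerSeries.X ^ (2 * d)) * Eser (r ^ 2) (2 * d)) := by rw [h3, mul_one]
    _ = ((1 - PowerSeries.C r * PowerSeries.X ^ d) * Eser r d) * ((1 - PowerSeries.C (-r) * PowerSeries.X ^ d) * Eser (-r) d) * Eser (r ^ 2) (2 * d) := by rw [hfac]; ring
    _ = Eser (r ^ 2) (2 * d) := by rw [h1, h2]; ring

theorem wGF {R : Type*} [CommSemiring R] (n : ℕ) (s : Finset ℕ) (hs : ∀ i ∈ s, 0 < i)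
    (w : ℕ → R) :
    ∑ p ∈ Finset.univ.filter (fun p : n.Partition => ∀ j ∈ p.parts, j ∈ s),
        ∏ i ∈ s, w i ^ (p.parts.count i)
      = PowerSeries.coeff n
          (∏ i ∈ s, PowerSeries.mk fun k => if i ∣ k then w i ^ (k / i) else 0) := by
  rw [PowerSeries.coeff_prod]
  simp_rw [PowerSeries.coeff_mk]
  rw [← Finset.sum_filter_of_ne (p := fun f : ℕ →₀ ℕ => ∀ i ∈ s, i ∣ f i)
    (by
      intro f hf hne
      by_contra hcon
      push_neg at hcon
      obtain ⟨i, hi, hnd⟩ := hcon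
      exact hne (Finset.prod_eq_zero hi (by rw [if_neg hnd])))]
  set φ : (p : Nat.Partition n) →
      p ∈ Finset.univ.filter (fun p : n.Partition => ∀ j ∈ p.parts, j ∈ s) → ℕ →₀ ℕ :=
    fun p _ => {
      toFun := fun i => p.parts.count i • i
      support := Finset.filter (fun i => i ≠ 0) p.parts.toFinset
      mem_support_toFun := fun a => by
        simp only [smul_eq_mul, ne_eq, mul_eq_zero, Multiset.count_eq_zero]
        rw [not_or, not_not]
        simp only [Multiset.mem_toFinset, not_not, mem_filter] }
  refine Finset.sum_bij φ ?_ ?_ ?_ ?_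
  · intro a ha
    simp only [mem_filter] at ha ⊢
    constructor
    · rw [Finset.mem_finsuppAntidiag]
      dsimp only [φ, ne_eq, smul_eq_mul, Finsupp.coe_mk]
      refine ⟨?_, ?_⟩
      · conv_rhs => rw [← a.parts_sum]
        rw [Finset.sum_multiset_count_of_subset a.parts s
          (fun i hi => ha.2 i (Multiset.mem_toFinset.mp hi))]
        simp [smul_eq_mul]
      · intro i hi
        simp only [φ, ne_eq, Multiset.mem_toFinset, mem_filter] at hi
        exact ha.2 i hi.1
    · intro i hi
      dsimp only [φ, ne_eq, smul_eq_mul, Finsupp.coe_mk]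
      exact dvd_mul_left i _
  · intro p₁ hp₁ p₂ hp₂ h
    apply Nat.Partition.ext
    simp only [true_and, mem_univ, mem_filter] at hp₁ hp₂
    ext i
    simp only [φ, ne_eq, Multiset.mem_toFinset, not_not, smul_eq_mul, Finsupp.mk.injEq] at h
    by_cases hi : i = 0
    · rw [hi]
      rw [Multiset.count_eq_zero_of_notMem]
      · rw [Multiset.count_eq_zero_of_notMem]
        intro a; exact Nat.lt_irrefl 0 (hs 0 (hp₂ 0 a))
      intro a; exact Nat.lt_irrefl 0 (hs 0 (hp₁ 0 a))
    · rw [← mul_left_inj' hi]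
      rw [funext_iff] at h
      exact h.2 i
  · simp only [φ, mem_filter, Finset.mem_finsuppAntidiag, mem_univ, exists_prop, true_and]
    rintro f hf
    obtain ⟨⟨hf₁, hf₂⟩, hf₄⟩ := hf
    refine ⟨⟨∑ i ∈ s, Multiset.replicate (f i / i) i, ?_, ?_⟩, ?_, ?_⟩
    · intro i hi
      simp only [exists_prop, Multiset.mem_sum, mem_map, Function.Embedding.coeFn_mk] at hi
      rcases hi with ⟨t, ht, z⟩
      apply hs
      rwa [Multiset.eq_of_mem_replicate z]
    · simp_rw [Multiset.sum_sum, Multiset.sum_replicate, Nat.nsmul_eq_mul]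
      rw [← hf₁]
      refine sum_congr rfl fun i hi => Nat.div_mul_cancel (hf₄ i hi)
    · intro i hi
      rw [Multiset.mem_sum] at hi
      rcases hi with ⟨j, hj₁, hj₂⟩
      rwa [Multiset.eq_of_mem_replicate hj₂]
    · ext i
      simp_rw [Multiset.count_sum', Multiset.count_replicate, sum_ite_eq']
      simp only [ne_eq, Multiset.mem_toFinset, not_not, smul_eq_mul, ite_mul,
        zero_mul, Finsupp.coe_mk]
      split_ifs with h
      · exact Nat.div_mul_cancel (hf₄ i h)
      · apply symm
        rw [← Finsupp.notMem_support_iff]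
        exact notMem_mono hf₂ h
  · intro p hp
    simp only [mem_filter, mem_univ, true_and] at hp
    refine Finset.prod_congr rfl fun i hi => ?_
    dsimp only [φ, ne_eq, smul_eq_mul, Finsupp.coe_mk]
    have hdvd : i ∣ Multiset.count i p.parts * i := dvd_mul_left i _
    rw [if_pos hdvd, Nat.mul_div_cancel _ (hs i hi)]

lemma Nat.Partition.card_le (m : ℕ) (p : m.Partition) : p.parts.card ≤ m := by
  have h := Multiset.card_nsmul_le_sum (s := p.parts) (a := 1) (fun x hx => p.parts_pos hx)
  simpa [p.parts_sum] using h

lemma partitionPoly_eq (m : ℕ) :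
    partitionPoly m = ∑ p : m.Partition, (X : Polynomial ℤ) ^ p.parts.card := by
  rw [partitionPoly,
    ← Finset.sum_fiberwise_of_maps_to (g := fun p : m.Partition => p.parts.card)
      (t := Finset.range (m + 1))
      (fun p _ => Finset.mem_range.mpr (Nat.lt_succ_of_le (Nat.Partition.card_le m p)))
      (fun p => (X : Polynomial ℤ) ^ p.parts.card)]
  refine Finset.sum_congr rfl fun i _ => ?_
  rw [Finset.sum_congr rfl (fun p hp => by rw [(Finset.mem_filter.mp hp).2]),
    Finset.sum_const, map_natCast (Polynomial.C : ℤ →+* Polynomial ℤ), nsmul_eq_mul]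

lemma partitionPoly_comp (m : ℕ) (q : Polynomial ℤ) :
    (partitionPoly m).comp q = ∑ p : m.Partition, q ^ p.parts.card := by
  rw [partitionPoly_eq, Polynomial.comp, Polynomial.eval₂_finset_sum]
  exact Finset.sum_congr rfl fun p _ => by
    rw [← Polynomial.comp, Polynomial.X_pow_comp]

lemma pow_count_prod {r : Polynomial ℤ} {s : Finset ℕ} {n : ℕ} (p : n.Partition)
    (hp : ∀ j ∈ p.parts, j ∈ s) :
    ∏ i ∈ s, r ^ (p.parts.count i) = r ^ p.parts.card := by
  rw [Finset.prod_pow_eq_pow_sum]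
  congr 1
  rw [← Multiset.toFinset_sum_count_eq p.parts]
  exact (Finset.sum_subset (fun i hi => hp i (Multiset.mem_toFinset.mp hi))
    (fun i _ hi => Multiset.count_eq_zero_of_notMem
      (fun h => hi (Multiset.mem_toFinset.mpr h)))).symm

lemma part_le_sum {n : ℕ} (p : n.Partition) {j : ℕ} (hj : j ∈ p.parts) : j ≤ n := by
  have := Multiset.single_le_sum (fun (x : ℕ) _ => Nat.zero_le x) _ hj
  rwa [p.parts_sum] at this

lemma coeff_prodE (N n : ℕ) (h : n ≤ N) (r : Polynomial ℤ) :
    PowerSeries.coeff n (∏ m ∈ Icc 1 N, Eser r m) = ∑ p : n.Partition, r ^ p.parts.card := by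
  simp only [Eser]
  rw [← wGF n (Icc 1 N) (fun i hi => (mem_Icc.mp hi).1) (fun _ => r)]
  have huniv : (Finset.univ.filter fun p : n.Partition => ∀ j ∈ p.parts, j ∈ Icc 1 N)
      = Finset.univ := by
    refine Finset.filter_true_of_mem fun p _ j hj => mem_Icc.mpr ⟨p.parts_pos hj, ?_⟩
    exact le_trans (part_le_sum p hj) h
  rw [huniv]
  exact Finset.sum_congr rfl fun p _ =>
    pow_count_prod p (fun j hj => mem_Icc.mpr ⟨p.parts_pos hj, le_trans (part_le_sum p hj) h⟩)

lemma coeff_prodE_even (N n : ℕ) (r : Polynomial ℤ) :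
    PowerSeries.coeff n (∏ m ∈ Icc 1 N, Eser r (2 * m))
      = ∑ p ∈ Finset.univ.filter
          (fun p : n.Partition => ∀ j ∈ p.parts, j ∈ (Icc 1 N).image (2 * ·)),
          r ^ p.parts.card := by
  have hinj : Set.InjOn (2 * ·) (Icc 1 N) := fun a _ b _ hab => by
    simpa using hab
  rw [← Finset.prod_image (f := fun i => Eser r i) (g := (2 * ·)) (fun a ha b hb => hinj ha hb)]
  simp only [Eser]
  rw [← wGF n ((Icc 1 N).image (2 * ·))
    (by rintro i hi; obtain ⟨m, hm, rfl⟩ := Finset.mem_image.mp hi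
        have := (mem_Icc.mp hm).1; omega) (fun _ => r)]
  exact Finset.sum_congr rfl fun p hp =>
    pow_count_prod p (Finset.mem_filter.mp hp).2

lemma filter_even_empty (k N : ℕ) :
    (Finset.univ.filter
      (fun p : Nat.Partition (2 * k + 1) => ∀ j ∈ p.parts, j ∈ (Icc 1 N).image (2 * ·)))
      = ∅ := by
  rw [Finset.filter_eq_empty_iff]
  intro p _ hall
  have h2 : 2 ∣ p.parts.sum := Multiset.dvd_sum fun x hx => by
    obtain ⟨m, _, rfl⟩ := Finset.mem_image.mp (hall x hx)
    exact dvd_mul_right 2 m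
  rw [p.parts_sum] at h2
  omega

lemma sum_even_parts (k N : ℕ) (hN : k ≤ N) (r : Polynomial ℤ) :
    ∑ p ∈ Finset.univ.filter
        (fun p : Nat.Partition (2 * k) => ∀ j ∈ p.parts, j ∈ (Icc 1 N).image (2 * ·)),
        r ^ p.parts.card
      = ∑ q : Nat.Partition k, r ^ q.parts.card := by
  refine Finset.sum_bij'
    (i := fun p hp => (⟨p.parts.map (· / 2), ?_, ?_⟩ : Nat.Partition k))
    (j := fun q _ => (⟨q.parts.map (2 * ·), ?_, ?_⟩ : Nat.Partition (2 * k)))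
    ?_ ?_ ?_ ?_ ?_
  · -- pos for halves
    intro x hx
    obtain ⟨j, hj, rfl⟩ := Multiset.mem_map.mp hx
    have hall := (Finset.mem_filter.mp hp).2
    obtain ⟨m, hm, rfl⟩ := Finset.mem_image.mp (hall j hj)
    have := (mem_Icc.mp hm).1
    omega
  · -- sum for halves
    have hall := (Finset.mem_filter.mp hp).2
    have hdb : (p.parts.map (· / 2)).map (2 * ·) = p.parts := by
      rw [Multiset.map_map]
      conv_rhs => rw [← Multiset.map_id p.parts]
      refine Multiset.map_congr rfl fun j hj => ?_
      obtain ⟨m, _, rfl⟩ := Finset.mem_image.mp (hall j hj)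
      simp [Nat.mul_div_cancel_left m (by norm_num : 0 < 2)]
    have h2 : ((p.parts.map (· / 2)).map (2 * ·)).sum = 2 * (p.parts.map (· / 2)).sum := by
      rw [Multiset.map_map]
      simpa using Multiset.sum_map_mul_left (a := (2:ℕ)) (f := fun x => x)
        (s := p.parts.map (· / 2))
    rw [hdb, p.parts_sum] at h2
    omega
  · -- pos for doubles
    intro x hx
    obtain ⟨j, hj, rfl⟩ := Multiset.mem_map.mp hx
    have := q.parts_pos hj
    omega
  · -- sum for doubles
    have h2 : (q.parts.map (2 * ·)).sum = 2 * q.parts.sum := by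
      simpa using Multiset.sum_map_mul_left (a := (2:ℕ)) (f := fun x => x) (s := q.parts)
    rw [h2, q.parts_sum]
  · -- hi : lands in univ
    intro p hp
    exact Finset.mem_univ _
  · -- hj : doubles land in filter
    intro q _
    refine Finset.mem_filter.mpr ⟨Finset.mem_univ _, fun j hj => ?_⟩
    obtain ⟨m, hm, rfl⟩ := Multiset.mem_map.mp hj
    refine Finset.mem_image.mpr ⟨m, mem_Icc.mpr ⟨q.parts_pos hm, le_trans (part_le_sum q hm) hN⟩, rfl⟩
  · -- left_inv
    intro p hp
    apply Nat.Partition.ext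
    dsimp only
    rw [Multiset.map_map]
    conv_rhs => rw [← Multiset.map_id p.parts]
    refine Multiset.map_congr rfl fun j hj => ?_
    obtain ⟨m, _, rfl⟩ := Finset.mem_image.mp ((Finset.mem_filter.mp hp).2 j hj)
    simp [Nat.mul_div_cancel_left m (by norm_num : 0 < 2)]
  · -- right_inv
    intro q _
    apply Nat.Partition.ext
    dsimp only
    rw [Multiset.map_map]
    conv_rhs => rw [← Multiset.map_id q.parts]
    refine Multiset.map_congr rfl fun j _ => ?_
    simp [Nat.mul_div_cancel_left j (by norm_num : 0 < 2)]
  · -- weights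
    intro p hp
    simp [Multiset.card_map]

lemma main_conv (n N : ℕ) (h : n ≤ N) :
    (∑ j ∈ Finset.range (n + 1), partitionPoly j * (partitionPoly (n - j)).comp (-X))
      = PowerSeries.coeff n (∏ m ∈ Icc 1 N, Eser ((X : Polynomial ℤ) ^ 2) (2 * m)) := by
  have hprod : ∏ m ∈ Icc 1 N, Eser ((X : Polynomial ℤ) ^ 2) (2 * m)
      = (∏ m ∈ Icc 1 N, Eser X m) * ∏ m ∈ Icc 1 N, Eser (-X) m := by
    rw [← Finset.prod_mul_distrib]
    exact Finset.prod_congr rfl fun m hm => (Eser_mul_Eser X m (mem_Icc.mp hm).1).symm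
  rw [hprod, PowerSeries.coeff_mul, Finset.Nat.sum_antidiagonal_eq_sum_range_succ_mk]
  refine Finset.sum_congr rfl fun j hj => ?_
  have hj' : j ≤ n := Nat.lt_succ_iff.mp (mem_range.mp hj)
  rw [coeff_prodE N j (le_trans hj' h) X, coeff_prodE N (n - j) (le_trans (Nat.sub_le n j) h) (-X),
    partitionPoly_eq, partitionPoly_comp]

/-- Identities for partition polynomials coming from
`∏ (1 - ω² z^{2m})⁻¹ = ∏ (1 - ω z^m)⁻¹ · ∏ (1 + ω z^m)⁻¹`. -/
theorem partitionPoly_convolution (k : ℕ) :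
    (∑ j ∈ Finset.range (2 * k + 2),
        partitionPoly j * (partitionPoly (2 * k + 1 - j)).comp (-X) = 0) ∧
      (∑ j ∈ Finset.range (2 * k + 1),
        partitionPoly j * (partitionPoly (2 * k - j)).comp (-X)
          = (partitionPoly k).comp (X ^ 2)) := by
  constructor
  · have := main_conv (2 * k + 1) (2 * k + 1) le_rfl
    rw [coeff_prodE_even, filter_even_empty k (2 * k + 1), Finset.sum_empty] at this
    exact this
  · have := main_conv (2 * k) (2 * k) le_rfl
    rw [coeff_prodE_even, sum_even_parts k (2 * k) (by omega), ← partitionPoly_comp] at this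
    exact this
end

section
/- Writing e^y as the infinite product ∏_{i=1}^∞ (1 + C_i y^i) with C_1 = 1, the coefficients C_i satisfy for every i ≥ 2 the recurrence Σ_{d | i} ((−1)^{d+1}/d) · (C_{i/d})^d = 0. -/
open Finset PowerSeries

noncomputable def expProdLog (c : ℚ) (j : ℕ) : ℚ⟦X⟧ :=
  PowerSeries.mk fun m => if j ∣ m ∧ m ≠ 0 then (-1 : ℚ)^(m/j+1) * c^(m/j) / (m/j) else 0

@[simp] lemma coeff_expProdLog (c : ℚ) (j k : ℕ) :
    PowerSeries.coeff (R := ℚ) k (expProdLog c j)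
      = if j ∣ k ∧ k ≠ 0 then (-1 : ℚ)^(k/j+1) * c^(k/j) / ((k : ℚ)/(j : ℚ)) else 0 :=
  PowerSeries.coeff_mk _ _

lemma expProdLog_key (c : ℚ) (j : ℕ) (hj : 1 ≤ j) :
    (PowerSeries.derivative ℚ (expProdLog c j)) * (1 + PowerSeries.C (R := ℚ) c * X ^ j)
      = PowerSeries.derivative ℚ (1 + PowerSeries.C (R := ℚ) c * X ^ j) := by
  have hj0' : (j : ℚ) ≠ 0 := Nat.cast_ne_zero.mpr (by omega)
  ext m
  have hrw : (PowerSeries.derivative ℚ (expProdLog c j)) * (1 + PowerSeries.C (R := ℚ) c * X ^ j)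
      = PowerSeries.derivative ℚ (expProdLog c j)
        + PowerSeries.C (R := ℚ) c * ((PowerSeries.derivative ℚ (expProdLog c j)) * X ^ j) := by ring
  rw [hrw]
  simp only [map_add, PowerSeries.coeff_derivative, PowerSeries.coeff_C_mul,
    PowerSeries.coeff_mul_X_pow', PowerSeries.coeff_one, PowerSeries.coeff_X_pow,
    PowerSeries.coeff_C, coeff_expProdLog, Nat.succ_ne_zero, if_false, ne_eq,
    not_false_eq_true, and_true]
  by_cases hdvd : j ∣ (m+1)
  · obtain ⟨q, hq⟩ := hdvd
    have hq0 : q ≠ 0 := by rintro rfl; omega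
    have hdiv : (m+1)/j = q := by rw [hq, Nat.mul_div_cancel_left _ (by omega)]
    rw [if_pos ⟨q, hq⟩, hdiv]
    rcases Nat.lt_or_ge q 2 with hq1 | hq2
    · obtain rfl : q = 1 := by omega
      have hmj : m + 1 = j := by omega
      rw [if_neg (by omega : ¬ j ≤ m), if_pos (by omega : j ≤ m + 1),
        if_pos (by omega : m + 1 - j = 0)]
      have hcj : (j : ℚ) = (m : ℚ) + 1 := by exact_mod_cast congrArg (Nat.cast : ℕ → ℚ) hmj.symm
      have hm1 : (m : ℚ) + 1 ≠ 0 := by positivity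
      rw [show ((m+1 : ℕ) : ℚ) = (m : ℚ) + 1 by push_cast; ring, hcj]
      field_simp
      ring
    · -- q ≥ 2
      obtain ⟨r, rfl⟩ : ∃ r, q = r + 2 := ⟨q - 2, by omega⟩
      have hjm : j ≤ m := by nlinarith
      have h1' : (r+1)*j + j = m + 1 := by rw [hq]; ring
      have h1 : m - j + 1 = (r+1) * j := by omega
      have hdvd2 : j ∣ m - j + 1 := ⟨r+1, by rw [h1]; ring⟩
      have hdiv2 : (m - j + 1)/j = r + 1 := by rw [h1, Nat.mul_div_cancel _ (by omega)]
      rw [if_pos hjm, if_pos hdvd2, hdiv2,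
        if_neg (show ¬ m + 1 - j = 0 by omega)]
      have cm : (m : ℚ) = (j:ℚ)*(r+2) - 1 := by
        have h := congrArg (Nat.cast : ℕ → ℚ) hq
        push_cast at h; linarith
      have cmj : ((m - j : ℕ) : ℚ) = (j:ℚ)*(r+1) - 1 := by
        have h := congrArg (Nat.cast : ℕ → ℚ) h1
        push_cast at h; linarith
      rw [show ((m+1 : ℕ) : ℚ) = (m : ℚ) + 1 by push_cast; ring,
        show ((m-j+1 : ℕ) : ℚ) = ((m - j : ℕ) : ℚ) + 1 by push_cast; ring, cm, cmj]
      have hd1 : ((j:ℚ)*(r+2) - 1 + 1)/(j:ℚ) = (r:ℚ)+2 := by field_simp; ring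
      have hd2 : ((j:ℚ)*(r+1) - 1 + 1)/(j:ℚ) = (r:ℚ)+1 := by field_simp; ring
      rw [hd1, hd2]
      have hr2 : (r:ℚ)+2 ≠ 0 := by positivity
      have hr1 : (r:ℚ)+1 ≠ 0 := by positivity
      field_simp
      ring_nf
      simp
  · rw [if_neg hdvd]
    by_cases hjm : j ≤ m
    · rw [if_pos hjm, if_neg (show ¬ j ∣ m - j + 1 by
        rintro ⟨t, ht⟩
        refine hdvd ⟨t+1, ?_⟩
        have h' : j*(t+1) = j*t+j := by ring
        omega),
        if_neg (show ¬ m + 1 - j = 0 by omega)]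
      simp
    · rw [if_neg hjm]
      rcases Nat.lt_or_ge (m+1) j with h | h
      · rw [if_neg (by omega : ¬ j ≤ m + 1)]
        simp
      · exact absurd ⟨1, by omega⟩ hdvd

lemma expProd_logDeriv (c : ℕ → ℚ) (n : ℕ) :
    PowerSeries.derivative ℚ (∏ j ∈ Finset.Icc 1 n, (1 + PowerSeries.C (R := ℚ) (c j) * (X : ℚ⟦X⟧) ^ j))
      = (∑ j ∈ Finset.Icc 1 n, PowerSeries.derivative ℚ (expProdLog (c j) j))
        * ∏ j ∈ Finset.Icc 1 n, (1 + PowerSeries.C (R := ℚ) (c j) * (X : ℚ⟦X⟧) ^ j) := by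
  induction n with
  | zero => simp
  | succ n IH =>
    rw [Finset.prod_Icc_succ_top (by omega : 1 ≤ n + 1),
      Finset.sum_Icc_succ_top (by omega : 1 ≤ n + 1)]
    rw [Derivation.leibniz]
    simp only [smul_eq_mul]
    rw [IH, ← expProdLog_key (c (n+1)) (n+1) (by omega)]
    ring

lemma expProd_coeff_stab (c : ℕ → ℚ) (n k : ℕ) (hk : k ≤ n) :
    PowerSeries.coeff (R := ℚ) k (∏ j ∈ Finset.Icc 1 n, (1 + PowerSeries.C (R := ℚ) (c j) * (X : ℚ⟦X⟧) ^ j))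
      = PowerSeries.coeff (R := ℚ) k (∏ j ∈ Finset.Icc 1 k, (1 + PowerSeries.C (R := ℚ) (c j) * (X : ℚ⟦X⟧) ^ j)) := by
  induction n with
  | zero => obtain rfl : k = 0 := by omega
            rfl
  | succ n IH =>
    rcases Nat.lt_or_ge k (n+1) with h | h
    · rw [Finset.prod_Icc_succ_top (by omega : 1 ≤ n + 1)]
      have : (∏ j ∈ Finset.Icc 1 n, (1 + PowerSeries.C (R := ℚ) (c j) * (X : ℚ⟦X⟧) ^ j))
            * (1 + PowerSeries.C (R := ℚ) (c (n+1)) * X ^ (n+1))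
          = (∏ j ∈ Finset.Icc 1 n, (1 + PowerSeries.C (R := ℚ) (c j) * (X : ℚ⟦X⟧) ^ j))
            + PowerSeries.C (R := ℚ) (c (n+1)) * ((∏ j ∈ Finset.Icc 1 n, (1 + PowerSeries.C (R := ℚ) (c j) * (X : ℚ⟦X⟧) ^ j)) * X ^ (n+1)) := by
        ring
      rw [this, map_add, PowerSeries.coeff_C_mul, PowerSeries.coeff_mul_X_pow',
        if_neg (by omega : ¬ n + 1 ≤ k), mul_zero, add_zero]
      exact IH (by omega)
    · obtain rfl : k = n + 1 := by omega
      rfl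

lemma expProd_coeff_logSum (c : ℕ → ℚ) (n k : ℕ) (h1 : 1 ≤ k) (hk : k ≤ n) :
    PowerSeries.coeff (R := ℚ) k (∑ j ∈ Finset.Icc 1 n, expProdLog (c j) j)
      = ∑ d ∈ k.divisors, ((-1:ℚ)^(d+1)/d) * (c (k/d))^d := by
  rw [map_sum]
  simp only [coeff_expProdLog]
  have hsub : k.divisors ⊆ Finset.Icc 1 n := by
    intro j hj
    rw [Nat.mem_divisors] at hj
    rw [Finset.mem_Icc]
    exact ⟨Nat.one_le_iff_ne_zero.mpr (fun h => by subst h; simp at hj),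
      le_trans (Nat.le_of_dvd (by omega) hj.1) hk⟩
  rw [← Finset.sum_subset hsub (by
    intro j hjn hj
    rw [if_neg]
    rintro ⟨hdvd, hk0⟩
    exact hj (Nat.mem_divisors.mpr ⟨hdvd, hk0⟩))]
  rw [← Nat.sum_div_divisors k (fun d => ((-1:ℚ)^(d+1)/d) * (c (k/d))^d)]
  refine Finset.sum_congr rfl (fun j hj => ?_)
  rw [Nat.mem_divisors] at hj
  rw [if_pos ⟨hj.1, hj.2⟩, Nat.div_div_self hj.1 hj.2]
  have hj0 : (j:ℚ) ≠ 0 := Nat.cast_ne_zero.mpr (fun h => by subst h; simp at hj)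
  rw [show ((k:ℚ)/(j:ℚ)) = ((k/j : ℕ) : ℚ) from (Nat.cast_div hj.1 hj0).symm]
  ring

/-- If `exp(y) = ∏_{i=1}^∞ (1 + C_i y^i)` as formal power series (expressed via the fact
that the coefficient of `y^n` in the product stabilizes once all factors with `i ≤ n` are
included) with `C 1 = 1`, then for every `i ≥ 2` the coefficients satisfy the recurrence
`∑_{d ∣ i} ((-1)^{d+1}/d) · (C_{i/d})^d = 0`. -/
theorem exp_product_coefficient_recurrence (C : ℕ → ℚ) (hC1 : C 1 = 1)
    (hprod : ∀ n : ℕ,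
      PowerSeries.coeff (R := ℚ) n
          (∏ i ∈ Finset.Icc 1 n, (1 + PowerSeries.C (R := ℚ) (C i) * (PowerSeries.X : ℚ⟦X⟧) ^ i))
        = PowerSeries.coeff (R := ℚ) n (PowerSeries.exp ℚ)) :
    ∀ i : ℕ, 2 ≤ i → ∑ d ∈ i.divisors, ((-1 : ℚ) ^ (d + 1) / d) * (C (i / d)) ^ d = 0 := by
  intro i
  induction i using Nat.strong_induction_on with
  | _ n IH =>
    intro hn
    obtain ⟨m, rfl⟩ : ∃ m, n = m + 1 := ⟨n - 1, by omega⟩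
    have hm1 : 1 ≤ m := by omega
    set P := ∏ j ∈ Finset.Icc 1 (m+1), (1 + PowerSeries.C (R := ℚ) (C j) * (X : ℚ⟦X⟧) ^ j) with hP
    set L := ∑ j ∈ Finset.Icc 1 (m+1), expProdLog (C j) j with hLdef
    have coeffP : ∀ k, k ≤ m + 1 → PowerSeries.coeff (R := ℚ) k P = PowerSeries.coeff (R := ℚ) k (PowerSeries.exp ℚ) := by
      intro k hk
      rw [hP, expProd_coeff_stab C (m+1) k hk, hprod k]
    have hEq := congrArg (PowerSeries.coeff (R := ℚ) m) (expProd_logDeriv C (m+1))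
    rw [← map_sum (PowerSeries.derivative ℚ) (fun j => expProdLog (C j) j) (Finset.Icc 1 (m+1))] at hEq
    rw [← hLdef, ← hP, PowerSeries.coeff_derivative, PowerSeries.coeff_mul,
      Finset.Nat.sum_antidiagonal_eq_sum_range_succ_mk, Finset.sum_range_succ] at hEq
    dsimp only at hEq
    rw [Nat.sub_self] at hEq
    have hmid : ∑ a ∈ Finset.range m,
        PowerSeries.coeff (R := ℚ) a (PowerSeries.derivative ℚ L) * PowerSeries.coeff (R := ℚ) (m - a) P
        = PowerSeries.coeff (R := ℚ) 0 (PowerSeries.derivative ℚ L) * PowerSeries.coeff (R := ℚ) m P := by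
      refine Finset.sum_eq_single 0 (fun a ha hne => ?_) (fun h => absurd (Finset.mem_range.mpr (by omega)) h)
      rw [Finset.mem_range] at ha
      rw [PowerSeries.coeff_derivative, hLdef,
        expProd_coeff_logSum C (m+1) (a+1) (by omega) (by omega),
        IH (a+1) (by omega) (by omega)]
      ring
    rw [hmid, PowerSeries.coeff_derivative, PowerSeries.coeff_derivative, hLdef,
      expProd_coeff_logSum C (m+1) 1 le_rfl (by omega),
      expProd_coeff_logSum C (m+1) (m+1) (by omega) le_rfl,
      coeffP 0 (by omega), coeffP m (by omega), coeffP (m+1) (by omega)] at hEq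
    have h1 : ∑ d ∈ Nat.divisors 1, ((-1:ℚ)^(d+1)/d) * (C (1/d))^d = 1 := by
      simp [hC1]
    rw [h1] at hEq
    rw [PowerSeries.coeff_exp, PowerSeries.coeff_exp, PowerSeries.coeff_exp,
      Algebra.algebraMap_self] at hEq
    simp only [RingHom.id_apply] at hEq
    have hfac : ((m+1).factorial : ℚ) = (m+1) * (m.factorial : ℚ) := by
      rw [Nat.factorial_succ]; push_cast; ring
    have hm0 : ((m:ℚ)+1) ≠ 0 := by positivity
    have hfm : ((m.factorial : ℚ)) ≠ 0 := Nat.cast_ne_zero.mpr (Nat.factorial_ne_zero m)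
    rw [hfac, Nat.factorial_zero] at hEq
    have key : (∑ d ∈ (m+1).divisors, ((-1 : ℚ) ^ (d + 1) / d) * (C ((m+1) / d)) ^ d) * ((m:ℚ)+1) = 0 := by
      field_simp at hEq
      have hsums : (∑ x ∈ (m + 1).divisors, (-1:ℚ) ^ (x + 1) * C ((m + 1) / x) ^ x / ↑x)
          = ∑ d ∈ (m+1).divisors, ((-1 : ℚ) ^ (d + 1) / d) * (C ((m+1) / d)) ^ d :=
        Finset.sum_congr rfl fun d _ => by ring
      rw [hsums] at hEq
      rcases mul_eq_zero.mp (show (∑ d ∈ (m+1).divisors, ((-1 : ℚ) ^ (d + 1) / d) * (C ((m+1) / d)) ^ d) * ((m:ℚ)+1) * (m.factorial : ℚ) = 0 by push_cast at hEq; linear_combination -hEq) with h' | h'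
      · exact h'
      · exact absurd h' hfm
    rcases mul_eq_zero.mp key with h | h
    · exact h
    · exact absurd h hm0
end
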